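/- arXiv:1208.3054 — 9 statements merged into one kernel-verified Lean document; each statement's English description precedes it below -/
import Mathlib

section
/- For every finite simple connected undirected graph G on a nonempty vertex set V, there exists a Hamiltonian path in the graph G^3; that is, there is an ordering u_1, u_2, …, u_n of all vertices of V (each vertex appearing exactly once) such that dist_G(u_i, u_{i+1}) ≤ 3 for every 1 ≤ i < n. -/
/-! Auxiliary development: rooted spanning trees as a binary "join" structure. -/

inductive RT (V : Type) : Type
  | single (a : V) : RT V
  | join (t₁ t₂ : RT V) : RT V

namespace RT

variable {V : Type}

def root : RT V → V
  | single a => a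
  | join t₁ _ => root t₁

def verts : RT V → List V
  | single a => [a]
  | join t₁ t₂ => verts t₁ ++ verts t₂

def adjOK (G : SimpleGraph V) : RT V → Prop
  | single _ => True
  | join t₁ t₂ => adjOK G t₁ ∧ adjOK G t₂ ∧ G.Adj (root t₁) (root t₂)

lemma root_mem_verts (t : RT V) : root t ∈ verts t := by
  induction t with
  | single a => simp [root, verts]
  | join t₁ t₂ ih₁ ih₂ =>
      simp only [root, verts, List.mem_append]
      exact Or.inl ih₁

open Classical in
noncomputable def attach : RT V → V → V → RT V
  | single a, _, y => join (single a) (single y)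
  | join t₁ t₂, x, y =>
      if x ∈ verts t₁ then join (attach t₁ x y) t₂ else join t₁ (attach t₂ x y)

lemma root_attach (t : RT V) (x y : V) : root (attach t x y) = root t := by
  induction t with
  | single a => simp [attach, root]
  | join t₁ t₂ ih₁ ih₂ =>
      by_cases h : x ∈ verts t₁ <;> simp [attach, h, root, ih₁]

lemma verts_attach_perm (t : RT V) (x y : V) :
    (verts (attach t x y)).Perm (y :: verts t) := by
  induction t with
  | single a => exact List.Perm.swap _ _ _
  | join t₁ t₂ ih₁ ih₂ =>
      by_cases h : x ∈ verts t₁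
      · simp only [attach, h, if_pos, verts]
        exact ih₁.append_right _
      · simp only [attach, h, if_neg, not_false_iff, verts]
        exact ((ih₂).append_left _).trans List.perm_middle

lemma adjOK_attach {G : SimpleGraph V} {t : RT V} (ht : adjOK G t) {x y : V}
    (hx : x ∈ verts t) (hxy : G.Adj x y) : adjOK G (attach t x y) := by
  induction t with
  | single a =>
      simp only [verts, List.mem_singleton] at hx
      subst hx
      exact ⟨trivial, trivial, hxy⟩
  | join t₁ t₂ ih₁ ih₂ =>
      obtain ⟨h₁, h₂, hadj⟩ := ht
      by_cases h : x ∈ verts t₁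
      · simp only [attach, h, if_pos]
        exact ⟨ih₁ h₁ h, h₂, by rw [root_attach]; exact hadj⟩
      · have hx₂ : x ∈ verts t₂ := by
          simp only [verts, List.mem_append] at hx
          tauto
        simp only [attach, h, if_neg, not_false_iff]
        exact ⟨h₁, ih₂ h₂ hx₂, by rw [root_attach]; exact hadj⟩

lemma karaganis {G : SimpleGraph V} (hG : G.Connected) (t : RT V) (ht : adjOK G t) :
    ∃ l : List V, l.Perm (verts t) ∧ l.head? = some (root t) ∧
      (∀ x ∈ l.getLast?, G.dist x (root t) ≤ 1) ∧
      l.Chain' (fun a b => G.dist a b ≤ 3) := by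
  induction t with
  | single a =>
      refine ⟨[a], List.Perm.refl _, rfl, ?_, List.isChain_singleton _⟩
      intro x hx
      rw [show ([a] : List V).getLast? = some a from rfl] at hx
      simp only [Option.mem_some_iff] at hx
      subst hx
      simp [root, SimpleGraph.dist_self]
  | join t₁ t₂ ih₁ ih₂ =>
      obtain ⟨h₁, h₂, hadj⟩ := ht
      obtain ⟨l₁, hp₁, hh₁, hl₁, hc₁⟩ := ih₁ h₁
      obtain ⟨l₂, hp₂, hh₂, hl₂, hc₂⟩ := ih₂ h₂
      have hne₁ : l₁ ≠ [] := by intro h; rw [h] at hh₁; simp at hh₁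
      have hne₂ : l₂ ≠ [] := by intro h; rw [h] at hh₂; simp at hh₂
      have hduv : G.dist (root t₁) (root t₂) ≤ 1 :=
        le_of_eq (SimpleGraph.dist_eq_one_iff_adj.2 hadj)
      refine ⟨l₁ ++ l₂.reverse, ?_, ?_, ?_, ?_⟩
      · exact hp₁.append ((l₂.reverse_perm).trans hp₂)
      · rw [List.head?_append_of_ne_nil _ hne₁]
        exact hh₁
      · intro x hx
        rw [List.getLast?_append_of_ne_nil _ (by simpa using hne₂)] at hx
        rw [List.getLast?_reverse] at hx
        rw [hh₂] at hx
        simp only [Option.mem_some_iff] at hx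
        subst hx
        calc G.dist (root t₂) (root (join t₁ t₂))
            = G.dist (root t₂) (root t₁) := rfl
          _ = G.dist (root t₁) (root t₂) := SimpleGraph.dist_comm
          _ ≤ 1 := hduv
      · rw [List.Chain', List.isChain_append]
        refine ⟨hc₁, ?_, ?_⟩
        · rw [List.isChain_reverse]
          exact hc₂.imp (fun a b h => SimpleGraph.dist_comm.trans_le h)
        · intro a ha b hb
          rw [List.head?_reverse] at hb
          have hb' : G.dist b (root t₂) ≤ 1 := hl₂ b hb
          have ha' : G.dist a (root t₁) ≤ 1 := hl₁ a ha
          have t1 : G.dist a b ≤ G.dist a (root t₁) + G.dist (root t₁) b :=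
            hG.dist_triangle
          have t2 : G.dist (root t₁) b ≤ G.dist (root t₁) (root t₂) + G.dist (root t₂) b :=
            hG.dist_triangle
          have hb'' : G.dist (root t₂) b ≤ 1 := by rwa [SimpleGraph.dist_comm]
          omega

lemma grow {G : SimpleGraph V} [Fintype V] (hG : G.Connected) :
    ∀ (n : ℕ) (t : RT V), (verts t).Nodup → adjOK G t →
      Fintype.card V ≤ n + (verts t).length →
      ∃ t' : RT V, (verts t').Nodup ∧ adjOK G t' ∧ ∀ v : V, v ∈ verts t' := by
  intro n
  induction n with
  | zero =>
      intro t hnd hadj hcard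
      classical
      refine ⟨t, hnd, hadj, fun v => ?_⟩
      have h1 : (verts t).toFinset.card = (verts t).length :=
        List.toFinset_card_of_nodup hnd
      have h3 : (verts t).toFinset.card ≤ (Finset.univ : Finset V).card :=
        Finset.card_le_univ _
      have h4 : (Finset.univ : Finset V).card = Fintype.card V := Finset.card_univ
      have h2 : (verts t).toFinset = Finset.univ := by
        apply Finset.eq_univ_of_card
        omega
      have : v ∈ (verts t).toFinset := by rw [h2]; exact Finset.mem_univ v
      simpa using this
  | succ n ih =>
      intro t hnd hadj hcard
      by_cases hall : ∀ v : V, v ∈ verts t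
      · exact ⟨t, hnd, hadj, hall⟩
      · push_neg at hall
        obtain ⟨y, hy⟩ := hall
        obtain ⟨w⟩ := hG.preconnected (root t) y
        obtain ⟨d, _, hdS⟩ := w.exists_boundary_dart {v | v ∈ verts t} (root_mem_verts t) hy
        have hfst : d.fst ∈ verts t := hdS.1
        have hsnd : d.snd ∉ verts t := hdS.2
        refine ih (attach t d.fst d.snd) ?_ ?_ ?_
        · exact ((verts_attach_perm t d.fst d.snd).nodup_iff).2 (hnd.cons hsnd)
        · exact adjOK_attach hadj hfst d.adj
        · have := (verts_attach_perm t d.fst d.snd).length_eq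
          simp only [List.length_cons] at this
          omega

end RT

/-- Every finite connected graph `G` on a nonempty vertex set admits a
Hamiltonian path in `G^3`: an ordering of all the vertices (each appearing exactly once)
in which consecutive vertices are at distance at most `3` in `G`. -/
theorem hamiltonian_path_in_cube {V : Type} [Fintype V] [Nonempty V]
    (G : SimpleGraph V) (hG : G.Connected) :
    ∃ l : List V, l.Nodup ∧ (∀ v : V, v ∈ l) ∧
      l.Chain' (fun a b => G.dist a b ≤ 3) := by
  obtain ⟨r⟩ := ‹Nonempty V›
  obtain ⟨t, hnd, hadj, hall⟩ :=
    RT.grow hG (Fintype.card V) (RT.single r) (by simp [RT.verts])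
      trivial (by simp [RT.verts])
  obtain ⟨l, hperm, _, _, hchain⟩ := RT.karaganis hG t hadj
  exact ⟨l, hperm.nodup_iff.2 hnd, fun v => hperm.mem_iff.2 (hall v), hchain⟩
end

section
/- For every finite simple connected undirected graph G on a nonempty vertex set V, there exists a set S ⊆ V that is an inclusionwise maximal independent set in G^2 (no two distinct vertices of S are at distance ≤ 2 in G, and every vertex of V is at distance ≤ 2 from some vertex of S) such that the induced subgraph G^3[S] is connected (the graph on S with edges between distinct s, s' ∈ S with dist_G(s, s') ≤ 3 is connected). -/
open SimpleGraph

private lemma singleton_cube_connected {V : Type} (G : SimpleGraph V) (r : V) :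
    (SimpleGraph.fromRel fun a b : ({r} : Set V) => G.dist (a : V) (b : V) ≤ 3).Connected := by
  rw [SimpleGraph.connected_iff]
  refine ⟨fun a b => ?_, ⟨⟨r, rfl⟩⟩⟩
  have : a = b := Subsingleton.elim a b
  subst this
  exact SimpleGraph.Reachable.refl a

private lemma insert_reach {V : Type} (G : SimpleGraph V) (S : Set V) (v : V)
    (hconn : (SimpleGraph.fromRel fun a b : S => G.dist (a : V) (b : V) ≤ 3).Preconnected)
    {x y : V} (hx : x ∈ S) (hy : y ∈ S) :
    (SimpleGraph.fromRel fun a b : (insert v S : Set V) => G.dist (a : V) (b : V) ≤ 3).Reachable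
      ⟨x, Set.mem_insert_of_mem v hx⟩ ⟨y, Set.mem_insert_of_mem v hy⟩ := by
  exact SimpleGraph.Reachable.map
    ((⟨fun a => ⟨a.1, Set.mem_insert_of_mem v a.2⟩, by
      rintro ⟨a, ha⟩ ⟨b, hb⟩ ⟨hne, h⟩
      exact ⟨fun h' => hne (by simpa [Subtype.ext_iff] using h'), h⟩⟩ :
      (SimpleGraph.fromRel fun a b : S => G.dist (a : V) (b : V) ≤ 3) →g
      (SimpleGraph.fromRel fun a b : (insert v S : Set V) => G.dist (a : V) (b : V) ≤ 3)))
    (hconn ⟨x, hx⟩ ⟨y, hy⟩)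

/-- Every finite connected graph `G` on a nonempty vertex set has an
inclusionwise maximal independent set `S` in `G^2` (distinct vertices of `S` are at
distance `> 2`, and every vertex is at distance `≤ 2` from some vertex of `S`) such that
the induced subgraph `G^3[S]` (edges between distinct `s, s' ∈ S` with
`dist_G(s, s') ≤ 3`) is connected. -/
theorem maximal_independent_set_cube_connected {V : Type} [Fintype V] [Nonempty V]
    (G : SimpleGraph V) (hG : G.Connected) :
    ∃ S : Set V,
      (∀ u ∈ S, ∀ v ∈ S, u ≠ v → 2 < G.dist u v) ∧
      (∀ v : V, ∃ s ∈ S, G.dist v s ≤ 2) ∧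
      (SimpleGraph.fromRel fun a b : S => G.dist (a : V) (b : V) ≤ 3).Connected := by
  classical
  obtain ⟨r⟩ := ‹Nonempty V›
  set Q : Finset V → Prop := fun S =>
    (∀ u ∈ S, ∀ w ∈ S, u ≠ w → 2 < G.dist u w) ∧
    (SimpleGraph.fromRel fun a b : (↑S : Set V) => G.dist (a : V) (b : V) ≤ 3).Connected
    with hQdef
  have hQr : Q {r} := by
    constructor
    · intro u hu w hw huw
      simp only [Finset.mem_singleton] at hu hw
      exact absurd (hu.trans hw.symm) huw
    · have h := singleton_cube_connected G r
      have he : ((↑({r} : Finset V)) : Set V) = ({r} : Set V) := Finset.coe_singleton r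
      rw [he]
      exact h
  obtain ⟨S, hSmem, hSmax⟩ :=
    Finset.exists_max_image (Finset.univ.filter Q) Finset.card
      ⟨{r}, Finset.mem_filter.mpr ⟨Finset.mem_univ _, hQr⟩⟩
  have hQS : Q S := (Finset.mem_filter.mp hSmem).2
  -- maximality: no larger set satisfies Q
  have hmax : ∀ T : Finset V, Q T → T.card ≤ S.card := fun T hT =>
    hSmax T (Finset.mem_filter.mpr ⟨Finset.mem_univ _, hT⟩)
  -- key contradiction lemma
  have hC : ∀ v : V, (∀ s ∈ S, 3 ≤ G.dist v s) → (∃ s ∈ S, G.dist v s ≤ 3) → False := by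
    rintro v hfar ⟨s, hs, hvs⟩
    have hvs3 : G.dist v s = 3 := le_antisymm hvs (hfar s hs)
    have hvnot : v ∉ S := by
      intro hv
      have := hfar v hv
      simp [G.dist_self] at this
    have hQins : Q (insert v S) := by
      constructor
      · intro u hu w hw huw
        rcases Finset.mem_insert.mp hu with rfl | hu' <;>
          rcases Finset.mem_insert.mp hw with rfl | hw'
        · exact absurd rfl huw
        · exact lt_of_lt_of_le (by norm_num) (hfar w hw')
        · rw [G.dist_comm]; exact lt_of_lt_of_le (by norm_num) (hfar u hu')
        · exact hQS.1 u hu' w hw' huw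
      · rw [Finset.coe_insert]
        have hvne : v ≠ s := by
          intro h; subst h; simp [G.dist_self] at hvs3
        have hsmem : (s : V) ∈ (insert v (↑S : Set V)) := Set.mem_insert_of_mem v hs
        have hreach : ∀ z : ↥(insert v (↑S : Set V)),
            (SimpleGraph.fromRel fun a b : ↥(insert v (↑S : Set V)) =>
              G.dist (a : V) (b : V) ≤ 3).Reachable z ⟨s, hsmem⟩ := by
          rintro ⟨z, hz⟩
          rcases hz with rfl | hz'
          · exact SimpleGraph.Adj.reachable ⟨fun h => hvne (congrArg Subtype.val h), Or.inl (le_of_eq hvs3)⟩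
          · exact insert_reach G (↑S) v hQS.2.preconnected hz' hs
        rw [SimpleGraph.connected_iff]
        exact ⟨fun a b => (hreach a).trans (hreach b).symm, ⟨⟨s, hsmem⟩⟩⟩
    have hcard := hmax (insert v S) hQins
    rw [Finset.card_insert_of_notMem hvnot] at hcard
    omega
  -- domination by induction on distance
  have key : ∀ n : ℕ, ∀ v : V, (∃ s ∈ S, G.dist v s ≤ n) → ∃ s ∈ S, G.dist v s ≤ 2 := by
    intro n
    induction n with
    | zero =>
      rintro v ⟨s, hs, h⟩
      exact ⟨s, hs, h.trans (by norm_num)⟩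
    | succ n ih =>
      rintro v ⟨s, hs, hvs⟩
      by_cases hdom : ∃ s' ∈ S, G.dist v s' ≤ 2
      · exact hdom
      push_neg at hdom
      have hfar : ∀ s' ∈ S, 3 ≤ G.dist v s' := fun s' hs' => hdom s' hs'
      by_cases h3 : G.dist v s ≤ 3
      · exact (hC v hfar ⟨s, hs, h3⟩).elim
      push_neg at h3
      have hne : G.dist v s ≠ 0 := by omega
      obtain ⟨p, hp⟩ := (SimpleGraph.Reachable.of_dist_ne_zero hne).exists_walk_length_eq_dist
      cases p with
      | nil => simp at hp; rw [SimpleGraph.dist_self] at h3; omega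
      | cons h q =>
        rename_i w
        have hq : q.length = G.dist v s - 1 := by
          simp [SimpleGraph.Walk.length_cons] at hp; omega
        have hws : G.dist w s ≤ n := by
          have := G.dist_le q
          omega
        obtain ⟨s', hs', hws'⟩ := ih w ⟨s, hs, hws⟩
        have hvw : G.dist v w ≤ 1 := by
          have := G.dist_le h.toWalk
          simpa using this
        have hvs' : G.dist v s' ≤ 3 := by
          have := hG.dist_triangle (u := v) (v := w) (w := s')
          omega
        exact (hC v hfar ⟨s', hs', hvs'⟩).elim
  -- S is nonempty
  have hSne : S.Nonempty := by
    obtain ⟨⟨s, hs⟩⟩ := hQS.2.nonempty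
    exact ⟨s, hs⟩
  obtain ⟨s0, hs0⟩ := hSne
  refine ⟨↑S, ?_, ?_, hQS.2⟩
  · intro u hu w hw huw
    exact hQS.1 u hu w hw huw
  · intro v
    obtain ⟨s, hs, h⟩ := key (G.dist v s0) v ⟨s0, hs0, le_refl _⟩
    exact ⟨s, hs, h⟩
end

section
/- There exist a finite simple undirected graph G = (V, E), a uniform capacity function L (L(v) = 4 for all v ∈ V) and a positive integer k (namely k = 3, with G the disjoint union of two copies of the graph consisting of two adjacent vertices a, b together with 4 further vertices adjacent to both a and b) such that LP1 has a feasible solution, yet for every positive integer δ there is no capacitated k-center solution of G at distance δ. In particular LP1 has unbounded integrality gap, even for uniform capacities. -/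
/-- The LP relaxation LP1 of the capacitated `k`-center problem, at distance threshold `δ`
(a `δ`-feasible assignment).  `x u v` is the (fractional) amount of client `v` assigned to
center `u`, and `y u` is the (fractional) opening of a center at `u`.  Distances larger
than `δ`, in particular between vertices in different connected components, forbid any
assignment. -/
def LPFeasible {V : Type} [Fintype V] (G : SimpleGraph V) (L : V → ℕ) (k δ : ℕ)
    (x : V → V → ℝ) (y : V → ℝ) : Prop :=
  (∀ u v, 0 ≤ x u v) ∧ (∀ u, 0 ≤ y u) ∧
  (∑ u, y u = (k : ℝ)) ∧
  (∀ u v, x u v ≤ y u) ∧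
  (∀ u, ∑ v, x u v ≤ (L u : ℝ) * y u) ∧
  (∀ v, ∑ u, x u v = 1) ∧
  (∀ u, y u ≤ 1) ∧
  (∀ u v, ¬ (G.Reachable u v ∧ G.dist u v ≤ δ) → x u v = 0)

/-- A (hard) capacitated `k`-center solution of `G` at distance `δ`: a set `S` of exactly
`k` centers and an assignment `φ` of every vertex to a center of `S` at distance at most
`δ`, such that at most `L u` vertices are assigned to each center `u`. -/
def HasCapSolution {V : Type} (G : SimpleGraph V) (L : V → ℕ) (k δ : ℕ) : Prop :=
  ∃ (S : Finset V) (φ : V → V), S.card = k ∧ (∀ v, φ v ∈ S) ∧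
    (∀ v, G.Reachable v (φ v) ∧ G.dist v (φ v) ≤ δ) ∧
    (∀ u ∈ S, {v | φ v = u}.ncard ≤ L u)

/-- The graph used in Theorem 1 (unbounded integrality gap): two disjoint copies of the
graph consisting of two adjacent vertices (indices `0`, `1`) together with `4` further
vertices (indices `2,…,5`) adjacent to both of them. -/
def twoCopiesGraph : SimpleGraph (Fin 2 × Fin 6) where
  Adj p q := p.1 = q.1 ∧ p.2 ≠ q.2 ∧ (p.2.val ≤ 1 ∨ q.2.val ≤ 1)
  symm := by
    constructor
    intro p q h
    exact ⟨h.1.symm, h.2.1.symm, h.2.2.symm⟩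
  loopless := by
    constructor
    intro p h
    exact h.2.1 rfl

lemma twoCopies_reach_fst {p q : Fin 2 × Fin 6} (h : twoCopiesGraph.Reachable p q) :
    p.1 = q.1 := by
  obtain ⟨w⟩ := h
  induction w with
  | nil => rfl
  | cons h _ ih => exact h.1.trans ih

/-- For the graph `twoCopiesGraph`, uniform capacities `L ≡ 4` and
`k = 3`, LP1 has a feasible solution, yet for every positive integer `δ` there is no
capacitated `k`-center solution at distance `δ`.  Hence LP1 has unbounded integrality
gap even for uniform capacities. -/
theorem lp_unbounded_integrality_gap :
    (∃ x y, LPFeasible twoCopiesGraph (fun _ => 4) 3 1 x y) ∧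
    (∀ δ : ℕ, 0 < δ → ¬ HasCapSolution twoCopiesGraph (fun _ => 4) 3 δ) := by
  constructor
  · refine ⟨fun u v => if u.1 = v.1 ∧ u.2.val ≤ 1 then 1/2 else 0,
      fun u => if u.2.val ≤ 1 then 3/4 else 0, ?_, ?_, ?_, ?_, ?_, ?_, ?_, ?_⟩
    · intro u v; dsimp only; split <;> norm_num
    · intro u; dsimp only; split <;> norm_num
    · simp only [Fintype.sum_prod_type]
      norm_num [Fin.sum_univ_six, show ¬((3:Fin 6):ℕ) ≤ 1 by decide,
        show ¬((4:Fin 6):ℕ) ≤ 1 by decide, show ¬((5:Fin 6):ℕ) ≤ 1 by decide]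
    · intro u v
      by_cases h : u.1 = v.1 ∧ u.2.val ≤ 1
      · dsimp only; rw [if_pos h, if_pos h.2]; norm_num
      · dsimp only; rw [if_neg h]; split <;> norm_num
    · intro u
      obtain ⟨a, b⟩ := u
      by_cases hb : b.val ≤ 1
      · simp only [Fintype.sum_prod_type]
        fin_cases a <;> norm_num [Fin.sum_univ_six, hb, Fin.sum_univ_succ]
      · simp [hb]
    · intro v
      obtain ⟨a, b⟩ := v
      simp only [Fintype.sum_prod_type]
      fin_cases a <;> norm_num [Fin.sum_univ_six, Fin.sum_univ_succ]
    · intro u; dsimp only; split <;> norm_num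
    · intro u v h
      dsimp only
      rw [if_neg]
      intro ⟨h1, h2⟩
      apply h
      by_cases huv : u = v
      · subst huv
        exact ⟨SimpleGraph.Reachable.refl u, by rw [SimpleGraph.dist_self]; omega⟩
      · have hne : u.2 ≠ v.2 := by
          intro he
          exact huv (Prod.ext h1 he)
        have hadj : twoCopiesGraph.Adj u v := ⟨h1, hne, Or.inl h2⟩
        exact ⟨hadj.reachable, by
          simpa using SimpleGraph.dist_le hadj.toWalk⟩
  · rintro δ hδ ⟨S, φ, hcard, hmem, hreach, hcap⟩
    have key : ∀ i : Fin 2, 2 ≤ (S.filter (fun u => u.1 = i)).card := by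
      intro i
      by_contra hlt
      push_neg at hlt
      have hsub : (Finset.univ.filter (fun v : Fin 2 × Fin 6 => v.1 = i)) ⊆
          (S.filter (fun u => u.1 = i)).biUnion
            (fun u => Finset.univ.filter (fun v => φ v = u)) := by
        intro v hv
        simp only [Finset.mem_filter, Finset.mem_univ, true_and] at hv
        simp only [Finset.mem_biUnion, Finset.mem_filter, Finset.mem_univ, true_and]
        refine ⟨φ v, ⟨hmem v, ?_⟩, rfl⟩
        rw [← twoCopies_reach_fst (hreach v).1, hv]
      have hfib : ∀ u ∈ S, (Finset.univ.filter (fun v => φ v = u)).card ≤ 4 := by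
        intro u hu
        have := hcap u hu
        rwa [Set.ncard_eq_toFinset_card', Set.toFinset_setOf] at this
      have h6 : (Finset.univ.filter (fun v : Fin 2 × Fin 6 => v.1 = i)).card = 6 := by
        fin_cases i <;> decide
      have hcc := Finset.card_le_card hsub
      have hle := Finset.card_biUnion_le (s := S.filter (fun u => u.1 = i))
        (t := fun u => Finset.univ.filter (fun v => φ v = u))
      have hsum : ∑ u ∈ S.filter (fun u => u.1 = i),
          (Finset.univ.filter (fun v => φ v = u)).card ≤
          4 * (S.filter (fun u => u.1 = i)).card := by
        calc ∑ u ∈ S.filter (fun u => u.1 = i),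
            (Finset.univ.filter (fun v => φ v = u)).card
            ≤ ∑ _u ∈ S.filter (fun u => u.1 = i), 4 := by
              apply Finset.sum_le_sum
              intro u hu
              exact hfib u (Finset.mem_filter.mp hu).1
          _ = 4 * (S.filter (fun u => u.1 = i)).card := by
              rw [Finset.sum_const, smul_eq_mul, Nat.mul_comm]
      omega
    have hsplit : (S.filter (fun u => u.1 = (0 : Fin 2))).card +
        (S.filter (fun u => u.1 = (1 : Fin 2))).card = S.card := by
      have heq : S.filter (fun u => ¬ u.1 = (0 : Fin 2)) = S.filter (fun u => u.1 = (1 : Fin 2)) := by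
        apply Finset.filter_congr
        intro u _
        simp only [Fin.ext_iff, Fin.val_zero, Fin.val_one]
        omega
      have hh := Finset.card_filter_add_card_filter_not
        (s := S) (p := fun u => u.1 = (0 : Fin 2))
      rw [heq] at hh
      exact hh
    have h0 := key 0
    have h1 := key 1
    omega
end

section
/- Let G = (V, E) be a finite simple connected undirected graph, L : V → ℕ a capacity function and k a positive integer. If the soft LP relaxation has a 1-feasible solution, then there exist a multiplicity function m : V → ℕ with ∑_{v ∈ V} m(v) = k and a function φ : V → V such that m(φ(v)) ≥ 1 and dist_G(v, φ(v)) ≤ 11 for every v ∈ V, and |φ⁻¹(u)| ≤ L(u)·m(u) for every u ∈ V. In particular the integrality gap of the soft LP relaxation for connected graphs is at most 11. -/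
/-- The soft LP relaxation of the capacitated `k`-center problem at distance threshold `δ`
(no upper bound `y u ≤ 1`). -/
def SoftLPFeasible {V : Type} [Fintype V] (G : SimpleGraph V) (L : V → ℕ) (k δ : ℕ)
    (x : V → V → ℝ) (y : V → ℝ) : Prop :=
  (∀ u v, 0 ≤ x u v) ∧ (∀ u, 0 ≤ y u) ∧
  (∑ u, y u = (k : ℝ)) ∧
  (∀ u v, x u v ≤ y u) ∧
  (∀ u, ∑ v, x u v ≤ (L u : ℝ) * y u) ∧
  (∀ v, ∑ u, x u v = 1) ∧
  (∀ u v, ¬ (G.Reachable u v ∧ G.dist u v ≤ δ) → x u v = 0)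

/-- A soft capacitated `k`-center solution of `G` at distance `δ`: a multiplicity function
`m` opening `m u` centers at `u` with `k` centers in total, and an assignment `φ` of every
vertex to a vertex holding at least one center, at distance at most `δ`, such that at most
`L u * m u` vertices are assigned to `u`. -/
def HasSoftCapSolution {V : Type} [Fintype V] (G : SimpleGraph V) (L : V → ℕ) (k δ : ℕ) : Prop :=
  ∃ (m : V → ℕ) (φ : V → V), (∑ v, m v = k) ∧ (∀ v, 1 ≤ m (φ v)) ∧
    (∀ v, G.Reachable v (φ v) ∧ G.dist v (φ v) ≤ δ) ∧
    (∀ u, {v | φ v = u}.ncard ≤ L u * m u)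

set_option linter.unusedSectionVars false
set_option maxHeartbeats 1000000

open Finset

namespace SoftRound

variable {V : Type} [Fintype V] (G : SimpleGraph V)

open Classical in
/-- vertices at distance ≥ 3 from everything in `l` -/
noncomputable def far (l : List V) : Finset V :=
  Finset.univ.filter (fun v => ∀ s ∈ l, 3 ≤ G.dist v s)

def pickProp (l : List V) (v : V) : Prop :=
  v ∈ far G l ∧ ∃ s ∈ l, G.dist v s = 3

open Classical in
noncomputable def step (l : List V) : List V :=
  if h : ∃ v, pickProp G l v then l ++ [h.choose] else l

noncomputable def iter (v0 : V) : ℕ → List V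
  | 0 => [v0]
  | n+1 => step G (iter v0 n)

lemma adj_dist_le_one {a b : V} (h : G.Adj a b) : G.dist a b ≤ 1 := by
  have := SimpleGraph.dist_le (SimpleGraph.Walk.cons h SimpleGraph.Walk.nil)
  simpa using this

/-- if some vertex is far, some vertex is far at distance exactly 3 -/
lemma pick_exists (hG : G.Connected) (l : List V) (hl : l ≠ [])
    (hfar : (far G l).Nonempty) : ∃ v, pickProp G l v := by
  classical
  have hlf : l.toFinset.Nonempty := by
    simpa [List.toFinset_eq_empty_iff] using hl
  set dm : V → ℕ := fun v => l.toFinset.inf' hlf (fun s => G.dist v s) with hdm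
  obtain ⟨v, hv, hvmin⟩ := Finset.exists_min_image (far G l) dm hfar
  obtain ⟨sv, hsv, hsveq⟩ := Finset.exists_mem_eq_inf' hlf (fun s => G.dist v s)
  have hvfar : ∀ s ∈ l, 3 ≤ G.dist v s := by
    have := hv; simp only [far, Finset.mem_filter] at this; exact this.2
  have h3 : 3 ≤ dm v := by
    rw [hdm, Finset.le_inf'_iff]
    intro s hs
    exact hvfar s (List.mem_toFinset.mp hs)
  have hd : G.dist v sv = dm v := by rw [hdm]; exact hsveq.symm
  rcases Nat.lt_or_ge (dm v) 4 with h4 | h4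
  · exact ⟨v, hv, sv, List.mem_toFinset.mp hsv, by omega⟩
  · exfalso
    -- walk from v to sv of length dm v ≥ 4; step to neighbor
    have hne : G.dist v sv ≠ 0 := by omega
    obtain ⟨p, hp⟩ := SimpleGraph.exists_walk_of_dist_ne_zero hne
    cases p with
    | nil => simp at hp; rw [SimpleGraph.dist_self] at hd; omega
    | @cons _ w _ hadj q =>
      have hq : G.dist w sv ≤ dm v - 1 := by
        have := SimpleGraph.dist_le q
        simp at hp
        omega
      have hwfar : ∀ s ∈ l, 3 ≤ G.dist w s := by
        intro s hs
        have htri : G.dist v s ≤ G.dist v w + G.dist w s := hG.dist_triangle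
        have h1 : G.dist v w ≤ 1 := adj_dist_le_one G hadj
        have hge : dm v ≤ G.dist v s := by
          rw [hdm]; exact Finset.inf'_le _ (List.mem_toFinset.mpr hs)
        omega
      have hwmem : w ∈ far G l := by
        simp only [far, Finset.mem_filter]
        exact ⟨Finset.mem_univ _, hwfar⟩
      have hmin := hvmin w hwmem
      have : dm w ≤ dm v - 1 := by
        rw [hdm]
        calc l.toFinset.inf' hlf (fun s => G.dist w s) ≤ G.dist w sv :=
              Finset.inf'_le _ hsv
        _ ≤ dm v - 1 := hq
      omega

variable (v0 : V)

/-- the indexed monarch -/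
noncomputable def mon (l : List V) (i : ℕ) : V := l.getD i v0

/-- invariant: pairwise distance ≥ 3 -/
def InvP (l : List V) : Prop :=
  ∀ i j, i < j → j < l.length → 3 ≤ G.dist (l.getD i v0) (l.getD j v0)

/-- invariant: each later monarch has an earlier one at distance ≤ 3 -/
def InvQ (l : List V) : Prop :=
  ∀ j, 0 < j → j < l.length → ∃ i < j, G.dist (l.getD j v0) (l.getD i v0) ≤ 3

lemma getD_append_left {l : List V} {i : ℕ} (h : i < l.length) (w : V) :
    (l ++ [w]).getD i v0 = l.getD i v0 := by
  exact List.getD_append l [w] v0 i h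

lemma getD_append_right (l : List V) (w : V) :
    (l ++ [w]).getD l.length v0 = w := by
  rw [List.getD_append_right l [w] v0 _ (le_refl _)]
  simp

lemma getD_mem {l : List V} {i : ℕ} (h : i < l.length) : l.getD i v0 ∈ l := by
  rw [List.getD_eq_getElem l v0 h]
  exact List.getElem_mem _

lemma invP_step {l : List V} (hP : InvP G v0 l) : InvP G v0 (step G l) := by
  classical
  rw [step]
  split
  · next h =>
    set w := h.choose with hw
    have hpick : pickProp G l w := h.choose_spec
    intro i j hij hj
    rw [List.length_append, List.length_singleton] at hj
    rcases Nat.lt_or_ge j l.length with hjl | hjl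
    · rw [getD_append_left v0 hjl, getD_append_left v0 (lt_trans hij hjl)]
      exact hP i j hij hjl
    · have hj' : j = l.length := by omega
      subst hj'
      rw [getD_append_right, getD_append_left v0 hij]
      have := hpick.1
      simp only [far, Finset.mem_filter] at this
      rw [SimpleGraph.dist_comm]
      exact this.2 _ (getD_mem v0 hij)
  · exact hP

lemma invQ_step {l : List V} (hQ : InvQ G v0 l) : InvQ G v0 (step G l) := by
  classical
  rw [step]
  split
  · next h =>
    set w := h.choose with hw
    have hpick : pickProp G l w := h.choose_spec
    intro j hj0 hj
    rw [List.length_append, List.length_singleton] at hj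
    rcases Nat.lt_or_ge j l.length with hjl | hjl
    · obtain ⟨i, hi, hd⟩ := hQ j hj0 hjl
      exact ⟨i, hi, by rw [getD_append_left v0 hjl, getD_append_left v0 (lt_trans hi hjl)]; exact hd⟩
    · have hj' : j = l.length := by omega
      subst hj'
      obtain ⟨s, hs, hds⟩ := hpick.2
      obtain ⟨i, hi, hseq⟩ := List.mem_iff_getElem.mp hs
      refine ⟨i, hi, ?_⟩
      rw [getD_append_right, getD_append_left v0 hi]
      rw [List.getD_eq_getElem l v0 hi, hseq, hds]
  · exact hQ

lemma step_ne_nil {l : List V} (h : l ≠ []) : step G l ≠ [] := by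
  rw [step]; split
  · simp
  · exact h

lemma iter_invP (n : ℕ) : InvP G v0 (iter G v0 n) := by
  induction n with
  | zero =>
    intro i j hij hj
    simp [iter] at hj
    omega
  | succ n ih => exact invP_step G v0 ih

lemma iter_invQ (n : ℕ) : InvQ G v0 (iter G v0 n) := by
  induction n with
  | zero =>
    intro j hj0 hj
    simp [iter] at hj
    omega
  | succ n ih => exact invQ_step G v0 ih

lemma iter_ne_nil (n : ℕ) : iter G v0 n ≠ [] := by
  induction n with
  | zero => simp [iter]
  | succ n ih => exact step_ne_nil G ih

lemma nodup_of_invP {l : List V} (hP : InvP G v0 l) : l.Nodup := by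
  rw [List.nodup_iff_getElem?_ne_getElem?]
  intro i j hij hj
  have h3 := hP i j hij hj
  intro heq
  have hi : i < l.length := lt_trans hij hj
  rw [List.getElem?_eq_getElem hi, List.getElem?_eq_getElem hj] at heq
  have heq' : l[i] = l[j] := by simpa using heq
  rw [List.getD_eq_getElem l v0 hi, List.getD_eq_getElem l v0 hj, heq'] at h3
  simp [SimpleGraph.dist_self] at h3

lemma far_anti {l : List V} {w : V} : far G (l ++ [w]) ⊆ far G l := by
  intro v hv
  simp only [far, Finset.mem_filter] at *
  exact ⟨hv.1, fun s hs => hv.2 s (by simp [hs])⟩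

lemma iter_length_of_far (hG : G.Connected) (n : ℕ)
    (h : (far G (iter G v0 n)).Nonempty) : (iter G v0 n).length = n + 1 := by
  induction n with
  | zero => simp [iter]
  | succ n ih =>
    have hprev : (far G (iter G v0 n)).Nonempty := by
      rcases h with ⟨v, hv⟩
      refine ⟨v, ?_⟩
      have : iter G v0 (n+1) = step G (iter G v0 n) := rfl
      rw [this, step] at hv
      split at hv
      · exact far_anti G hv
      · exact hv
    have hlen := ih hprev
    have hex : ∃ v, pickProp G (iter G v0 n) v :=
      pick_exists G hG _ (iter_ne_nil G v0 n) hprev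
    show (step G (iter G v0 n)).length = n + 2
    rw [step, dif_pos hex, List.length_append, hlen]
    rfl

/-- the final monarch list -/
noncomputable def monList : List V := iter G v0 (Fintype.card V)

lemma monList_far_empty (hG : G.Connected) : far G (monList G v0) = ∅ := by
  by_contra h
  have hne : (far G (monList G v0)).Nonempty := Finset.nonempty_of_ne_empty h
  have hlen := iter_length_of_far G v0 hG (Fintype.card V) hne
  have hnd := nodup_of_invP G v0 (iter_invP G v0 (Fintype.card V))
  have hcard := List.Nodup.length_le_card hnd
  unfold monList at hlen
  omega



section Main

variable {V : Type} [Fintype V] (G : SimpleGraph V) (L : V → ℕ) (y : V → ℝ)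
  (l : List V) (v0 : V)

/-- number of monarchs -/
def M : ℕ := l.length

/-- the i-th monarch -/
noncomputable def ms (i : ℕ) : V := l.getD i v0

open Classical in
/-- index of (least) nearest monarch -/
noncomputable def nearest (v : V) : ℕ :=
  if h : ∃ i, i < M l ∧ ∀ j < M l, G.dist v (ms l v0 i) ≤ G.dist v (ms l v0 j)
  then Nat.find h else 0

open Classical in
/-- the empire of monarch i -/
noncomputable def emp (i : ℕ) : Finset V :=
  Finset.univ.filter (fun v => nearest G l v0 v = i)

/-- the y-mass of empire i -/
noncomputable def Yv (i : ℕ) : ℝ := ∑ v ∈ emp G l v0 i, y v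

open Classical in
/-- parent monarch index -/
noncomputable def parentF (j : ℕ) : ℕ :=
  if h : ∃ i, i < j ∧ G.dist (ms l v0 j) (ms l v0 i) ≤ 3 then h.choose else 0

open Classical in
/-- children of monarch i -/
noncomputable def childrenF (i : ℕ) : Finset ℕ :=
  (Finset.range (M l)).filter (fun j => 0 < j ∧ i < j ∧ parentF G l v0 j = i)

open Classical in
/-- max-capacity vertex of empire i -/
noncomputable def cen (i : ℕ) : V :=
  if h : (emp G l v0 i).Nonempty then (Finset.exists_max_image (emp G l v0 i) L h).choose
  else v0

open Classical in
/-- the family of i : its empire plus children's empires -/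
noncomputable def fam (i : ℕ) : Finset V :=
  emp G l v0 i ∪ (childrenF G l v0 i).biUnion (emp G l v0)

open Classical in
/-- max-capacity vertex of the family of i -/
noncomputable def host (i : ℕ) : V :=
  if h : (fam G l v0 i).Nonempty then (Finset.exists_max_image (fam G l v0 i) L h).choose
  else v0

omit [Fintype V] in
lemma children_mem {i j : ℕ} (h : j ∈ childrenF G l v0 i) :
    j < M l ∧ 0 < j ∧ i < j ∧ parentF G l v0 j = i := by
  simp only [childrenF, Finset.mem_filter, Finset.mem_range] at h
  tauto

open Classical in
/-- the fractional residue of monarch i (recursive, bottom-up the tree) -/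
noncomputable def phiF (i : ℕ) : ℝ :=
  (Yv G y l v0 i -
      ((⌈∑ j ∈ (childrenF G l v0 i).attach, phiF j.1⌉₊ : ℝ) -
        ∑ j ∈ (childrenF G l v0 i).attach, phiF j.1)) -
    (⌊Yv G y l v0 i -
      ((⌈∑ j ∈ (childrenF G l v0 i).attach, phiF j.1⌉₊ : ℝ) -
        ∑ j ∈ (childrenF G l v0 i).attach, phiF j.1)⌋₊ : ℝ)
termination_by M l - i
decreasing_by
  all_goals
    have := children_mem G l v0 j.2
    omega

/-- the pot of family i -/
noncomputable def PhiS (i : ℕ) : ℝ := ∑ j ∈ childrenF G l v0 i, phiF G y l v0 j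

/-- number of centers opened at the host of family i -/
noncomputable def ef (i : ℕ) : ℕ := ⌈PhiS G y l v0 i⌉₊

/-- the top-up taken from i's own mass into the family pot -/
noncomputable def tf (i : ℕ) : ℝ := (ef G y l v0 i : ℝ) - PhiS G y l v0 i

/-- the adjusted mass of monarch i -/
noncomputable def Af (i : ℕ) : ℝ := Yv G y l v0 i - tf G y l v0 i

/-- number of centers opened at the center of empire i -/
noncomputable def nf (i : ℕ) : ℕ := ⌊Af G y l v0 i⌋₊

lemma phiF_eq (i : ℕ) : phiF G y l v0 i = Af G y l v0 i - (nf G y l v0 i : ℝ) := by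
  rw [phiF]
  rw [Finset.sum_attach (childrenF G l v0 i) (fun j => phiF G y l v0 j)]
  rfl

open Classical in
/-- the multiplicity function -/
noncomputable def mf (w : V) : ℕ :=
  ∑ i ∈ Finset.range (M l),
    ((if cen G L l v0 i = w then nf G y l v0 i else 0) +
     (if host G L l v0 i = w then ef G y l v0 i else 0))

open Classical in
lemma mf_ge_parts (w : V) {i : ℕ} (hi : i < M l) :
    (if cen G L l v0 i = w then nf G y l v0 i else 0) +
    (if host G L l v0 i = w then ef G y l v0 i else 0) ≤ mf G L y l v0 w := by
  simp only [mf]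
  have h2 := Finset.single_le_sum (f := fun i' =>
      (if cen G L l v0 i' = w then nf G y l v0 i' else 0) +
      (if host G L l v0 i' = w then ef G y l v0 i' else 0))
    (fun i' _ => by positivity) (Finset.mem_range.mpr hi)
  simpa using h2

variable {G l v0} in
omit [Fintype V] in
lemma Mpos (hl : l ≠ []) : 0 < M l := List.length_pos_iff.mpr hl

section Lemmas

variable (hG : G.Connected) (hl : l ≠ []) (hP : InvP G v0 l) (hQ : InvQ G v0 l)
  (hfar : far G l = ∅)

include hl in
lemma nearest_spec (v : V) :
    nearest G l v0 v < M l ∧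
      ∀ j < M l, G.dist v (ms l v0 (nearest G l v0 v)) ≤ G.dist v (ms l v0 j) := by
  classical
  have hex : ∃ i, i < M l ∧ ∀ j < M l, G.dist v (ms l v0 i) ≤ G.dist v (ms l v0 j) := by
    obtain ⟨i, hi, hmin⟩ := Finset.exists_min_image (Finset.range (M l))
      (fun i => G.dist v (ms l v0 i)) ⟨0, Finset.mem_range.mpr (Mpos hl)⟩
    exact ⟨i, Finset.mem_range.mp hi, fun j hj => hmin j (Finset.mem_range.mpr hj)⟩
  rw [nearest, dif_pos hex]
  have := Nat.find_spec hex
  exact ⟨this.1, this.2⟩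

include hl hfar in
lemma nearest_dist (v : V) : G.dist v (ms l v0 (nearest G l v0 v)) ≤ 2 := by
  obtain ⟨_, hmin⟩ := nearest_spec G l v0 hl v
  -- some monarch is within distance 2
  have : ∃ j < M l, G.dist v (ms l v0 j) ≤ 2 := by
    by_contra hcon
    push_neg at hcon
    have : v ∈ far G l := by
      simp only [far, Finset.mem_filter]
      refine ⟨Finset.mem_univ _, fun s hs => ?_⟩
      obtain ⟨j, hj, hjs⟩ := List.mem_iff_getElem.mp hs
      have := hcon j hj
      rw [ms, List.getD_eq_getElem l v0 hj, hjs] at this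
      omega
    rw [hfar] at this
    exact absurd this (Finset.notMem_empty v)
  obtain ⟨j, hj, hjd⟩ := this
  exact le_trans (hmin j hj) hjd

include hG hl hP in
lemma nearest_eq_of_close {v : V} {i : ℕ} (hi : i < M l)
    (hd : G.dist v (ms l v0 i) ≤ 1) : nearest G l v0 v = i := by
  obtain ⟨hlt, hmin⟩ := nearest_spec G l v0 hl v
  set j := nearest G l v0 v
  by_contra hne
  have hj2 : G.dist v (ms l v0 j) ≤ 1 := le_trans (hmin i hi) hd
  have htri : G.dist (ms l v0 i) (ms l v0 j) ≤ 2 := by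
    have h1 : G.dist (ms l v0 i) v + G.dist v (ms l v0 j) ≤ 2 := by
      rw [SimpleGraph.dist_comm (u := ms l v0 i)]
      omega
    exact le_trans hG.dist_triangle h1
  rcases Nat.lt_or_ge i j with hij | hij
  · have := hP i j hij hlt
    rw [ms, ms] at htri
    omega
  · have hij' : j < i := by omega
    have := hP j i hij' hi
    rw [ms, ms, SimpleGraph.dist_comm] at htri
    omega

include hG hl hP in
lemma self_mem_emp {i : ℕ} (hi : i < M l) : ms l v0 i ∈ emp G l v0 i := by
  classical
  simp only [emp, Finset.mem_filter]
  exact ⟨Finset.mem_univ _,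
    nearest_eq_of_close G l v0 hG hl hP hi (by rw [SimpleGraph.dist_self]; omega)⟩

include hl hfar in
lemma emp_dist2 {i : ℕ} {v : V} (hv : v ∈ emp G l v0 i) :
    G.dist v (ms l v0 i) ≤ 2 ∧ i < M l := by
  classical
  simp only [emp, Finset.mem_filter] at hv
  have h := hv.2
  subst h
  exact ⟨nearest_dist G l v0 hl hfar v, (nearest_spec G l v0 hl v).1⟩

end Lemmas

section Lemmas2

variable (hG : G.Connected) (hl : l ≠ []) (hP : InvP G v0 l) (hQ : InvQ G v0 l)
  (hfar : far G l = ∅)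

include hQ in
lemma parent_spec {j : ℕ} (h0 : 0 < j) (hj : j < M l) :
    parentF G l v0 j < j ∧ G.dist (ms l v0 j) (ms l v0 (parentF G l v0 j)) ≤ 3 := by
  classical
  have hex : ∃ i, i < j ∧ G.dist (ms l v0 j) (ms l v0 i) ≤ 3 := by
    obtain ⟨i, hi, hd⟩ := hQ j h0 hj
    exact ⟨i, hi, hd⟩
  rw [parentF, dif_pos hex]
  exact hex.choose_spec

include hQ in
lemma mem_children_iff {i j : ℕ} :
    j ∈ childrenF G l v0 i ↔ j < M l ∧ 0 < j ∧ parentF G l v0 j = i := by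
  classical
  simp only [childrenF, Finset.mem_filter, Finset.mem_range]
  constructor
  · tauto
  · rintro ⟨hj, h0, hpar⟩
    have := (parent_spec G l v0 hQ h0 hj).1
    omega

include hQ in
lemma sum_children_eq {β : Type*} [AddCommMonoid β] (g : ℕ → β) :
    ∑ i ∈ Finset.range (M l), ∑ j ∈ childrenF G l v0 i, g j
      = ∑ j ∈ (Finset.range (M l)).filter (fun j => 0 < j), g j := by
  classical
  rw [← Finset.sum_fiberwise_of_maps_to (g := parentF G l v0)
      (t := Finset.range (M l)) ?mapsto g]
  case mapsto =>
    intro j hj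
    simp only [Finset.mem_filter, Finset.mem_range] at hj
    have := (parent_spec G l v0 hQ hj.2 hj.1).1
    exact Finset.mem_range.mpr (by omega)
  apply Finset.sum_congr rfl
  intro i _
  apply Finset.sum_congr _ (fun _ _ => rfl)
  ext j
  simp only [Finset.mem_filter, Finset.mem_range, mem_children_iff G l v0 hQ]
  tauto

include hl in
lemma sum_emp_eq {β : Type*} [AddCommMonoid β] (f : V → β) :
    ∑ i ∈ Finset.range (M l), ∑ v ∈ emp G l v0 i, f v = ∑ v, f v := by
  classical
  rw [← Finset.sum_fiberwise_of_maps_to (g := nearest G l v0)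
      (t := Finset.range (M l)) ?mapsto f]
  case mapsto =>
    intro v _
    exact Finset.mem_range.mpr (nearest_spec G l v0 hl v).1
  rfl

include hG hl hP in
lemma cen_spec {i : ℕ} (hi : i < M l) :
    cen G L l v0 i ∈ emp G l v0 i ∧ ∀ u ∈ emp G l v0 i, L u ≤ L (cen G L l v0 i) := by
  classical
  have hne : (emp G l v0 i).Nonempty := ⟨_, self_mem_emp G l v0 hG hl hP hi⟩
  rw [cen, dif_pos hne]
  have := (Finset.exists_max_image (emp G l v0 i) L hne).choose_spec
  exact ⟨this.1, this.2⟩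

include hG hl hP in
lemma host_spec {i : ℕ} (hi : i < M l) :
    host G L l v0 i ∈ fam G l v0 i ∧ ∀ u ∈ fam G l v0 i, L u ≤ L (host G L l v0 i) := by
  classical
  have hne : (fam G l v0 i).Nonempty :=
    ⟨_, Finset.mem_union_left _ (self_mem_emp G l v0 hG hl hP hi)⟩
  rw [host, dif_pos hne]
  have := (Finset.exists_max_image (fam G l v0 i) L hne).choose_spec
  exact ⟨this.1, this.2⟩

end Lemmas2

section LP

variable (k : ℕ) (x : V → V → ℝ)
variable (hG : G.Connected) (hl : l ≠ []) (hP : InvP G v0 l) (hQ : InvQ G v0 l)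
  (hfar : far G l = ∅)
variable (hx0 : ∀ u v, 0 ≤ x u v) (hy0 : ∀ u, 0 ≤ y u) (hysum : ∑ u, y u = (k : ℝ))
  (hxy : ∀ u v, x u v ≤ y u) (hcap : ∀ u, ∑ v, x u v ≤ (L u : ℝ) * y u)
  (hdem : ∀ v, ∑ u, x u v = 1)
  (hsupp : ∀ u v, ¬ (G.Reachable u v ∧ G.dist u v ≤ 1) → x u v = 0)

include hG hsupp in
lemma dist_le_one_of_x_ne {u v : V} (h : x u v ≠ 0) : G.dist u v ≤ 1 := by
  by_contra hd
  exact h (hsupp u v (fun hc => hd hc.2))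

include hG hl hP hx0 hxy hdem hsupp in
lemma Y_ge_one {i : ℕ} (hi : i < M l) : 1 ≤ Yv G y l v0 i := by
  classical
  have hsub : ∀ u, u ∉ emp G l v0 i → x u (ms l v0 i) = 0 := by
    intro u hu
    by_contra hx
    have hd : G.dist u (ms l v0 i) ≤ 1 := dist_le_one_of_x_ne G x hG hsupp hx
    have : nearest G l v0 u = i := nearest_eq_of_close G l v0 hG hl hP hi hd
    exact hu (by simp only [emp, Finset.mem_filter]; exact ⟨Finset.mem_univ _, this⟩)
  have h1 : (1 : ℝ) = ∑ u, x u (ms l v0 i) := (hdem _).symm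
  have h2 : ∑ u, x u (ms l v0 i) = ∑ u ∈ emp G l v0 i, x u (ms l v0 i) := by
    rw [← Finset.sum_subset (Finset.subset_univ (emp G l v0 i))]
    intro u _ hu
    exact hsub u hu
  have h3 : ∑ u ∈ emp G l v0 i, x u (ms l v0 i) ≤ Yv G y l v0 i := by
    apply Finset.sum_le_sum
    intro u _
    exact hxy u _
  rw [h1, h2]
  exact h3

include hG hl hP hx0 hxy hdem hsupp in
lemma phiF_bounds : ∀ d i, i < M l → M l - i ≤ d →
    0 ≤ phiF G y l v0 i ∧ phiF G y l v0 i < 1 ∧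
    0 ≤ PhiS G y l v0 i ∧ 0 ≤ tf G y l v0 i ∧ tf G y l v0 i < 1 ∧
    0 < Af G y l v0 i := by
  classical
  intro d
  induction d with
  | zero => intro i hi hd; omega
  | succ d ih =>
    intro i hi hd
    have hPhi : 0 ≤ PhiS G y l v0 i := by
      apply Finset.sum_nonneg
      intro j hj
      have hj' := children_mem G l v0 hj
      exact (ih j hj'.1 (by omega)).1
    have htf0 : 0 ≤ tf G y l v0 i := by
      rw [tf]
      have := Nat.le_ceil (PhiS G y l v0 i)
      simpa [ef] using by linarith [Nat.le_ceil (PhiS G y l v0 i)]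
    have htf1 : tf G y l v0 i < 1 := by
      rw [tf, ef]
      have := Nat.ceil_lt_add_one hPhi
      linarith
    have hY := Y_ge_one G y l v0 x hG hl hP hx0 hxy hdem hsupp hi
    have hAf : 0 < Af G y l v0 i := by rw [Af]; linarith
    refine ⟨?_, ?_, hPhi, htf0, htf1, hAf⟩
    · rw [phiF_eq, nf]
      have := Nat.floor_le hAf.le
      linarith
    · rw [phiF_eq, nf]
      have := Nat.lt_floor_add_one (Af G y l v0 i)
      linarith

include hG hl hP hx0 hxy hdem hsupp in
lemma phiF_bounds' {i : ℕ} (hi : i < M l) :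
    0 ≤ phiF G y l v0 i ∧ phiF G y l v0 i < 1 ∧
    0 ≤ PhiS G y l v0 i ∧ 0 ≤ tf G y l v0 i ∧ tf G y l v0 i < 1 ∧
    0 < Af G y l v0 i :=
  phiF_bounds G y l v0 x hG hl hP hx0 hxy hdem hsupp (M l) i hi (by omega)

lemma decomp_Y (i : ℕ) :
    Yv G y l v0 i = (nf G y l v0 i : ℝ) + phiF G y l v0 i + tf G y l v0 i := by
  rw [phiF_eq, Af]
  ring

lemma ef_eq (i : ℕ) : (ef G y l v0 i : ℝ) = PhiS G y l v0 i + tf G y l v0 i := by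
  rw [tf]; ring

include hG hl hP hQ hx0 hy0 hysum hxy hdem hsupp in
lemma conservation :
    phiF G y l v0 0 = 0 ∧
    ∑ i ∈ Finset.range (M l), (nf G y l v0 i + ef G y l v0 i) = k := by
  classical
  have hYsum : ∑ i ∈ Finset.range (M l), Yv G y l v0 i = (k : ℝ) := by
    simp only [Yv]
    rw [sum_emp_eq G l v0 hl]
    exact hysum
  have hsplit : (k : ℝ) =
      (∑ i ∈ Finset.range (M l), ((nf G y l v0 i : ℝ) + ef G y l v0 i)) + phiF G y l v0 0 := by
    rw [← hYsum]
    have h1 : ∑ i ∈ Finset.range (M l), Yv G y l v0 i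
        = ∑ i ∈ Finset.range (M l),
            ((nf G y l v0 i : ℝ) + phiF G y l v0 i + tf G y l v0 i) := by
      apply Finset.sum_congr rfl
      intro i _
      exact decomp_Y G y l v0 i
    have h2 : ∑ i ∈ Finset.range (M l), phiF G y l v0 i
        = phiF G y l v0 0 + ∑ j ∈ (Finset.range (M l)).filter (fun j => 0 < j),
            phiF G y l v0 j := by
      rw [← Finset.sum_filter_add_sum_filter_not (Finset.range (M l)) (fun j => 0 < j)]
      rw [add_comm]
      congr 1
      have : (Finset.range (M l)).filter (fun j => ¬ 0 < j) = {0} := by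
        ext j
        simp only [Finset.mem_filter, Finset.mem_range, Finset.mem_singleton]
        constructor
        · intro h; omega
        · intro h; subst h; exact ⟨Mpos hl, by omega⟩
      rw [this, Finset.sum_singleton]
    have h3 : ∑ j ∈ (Finset.range (M l)).filter (fun j => 0 < j), phiF G y l v0 j
        = ∑ i ∈ Finset.range (M l), PhiS G y l v0 i := by
      rw [← sum_children_eq G l v0 hQ (phiF G y l v0)]
      rfl
    have h4 : ∀ i, PhiS G y l v0 i = (ef G y l v0 i : ℝ) - tf G y l v0 i := by
      intro i
      rw [ef_eq]
      ring
    rw [h1]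
    rw [Finset.sum_add_distrib, Finset.sum_add_distrib, h2, h3]
    rw [Finset.sum_congr rfl (fun i _ => h4 i), Finset.sum_sub_distrib,
      Finset.sum_add_distrib]
    ring
  -- now the integer argument
  set N : ℕ := ∑ i ∈ Finset.range (M l), (nf G y l v0 i + ef G y l v0 i) with hN
  have hNr : (N : ℝ) = ∑ i ∈ Finset.range (M l), ((nf G y l v0 i : ℝ) + ef G y l v0 i) := by
    rw [hN]
    push_cast
    rfl
  have hb := phiF_bounds' G y l v0 x hG hl hP hx0 hxy hdem hsupp (Mpos hl)
  have hk1 : (N : ℝ) ≤ (k : ℝ) := by rw [hsplit, ← hNr]; linarith [hb.1]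
  have hk2 : (k : ℝ) < (N : ℝ) + 1 := by rw [hsplit, ← hNr]; linarith [hb.2.1]
  have hNk : N = k := by
    have h1 : N ≤ k := by exact_mod_cast hk1
    have h2 : k < N + 1 := by exact_mod_cast hk2
    omega
  constructor
  · have : (k : ℝ) = (N : ℝ) + phiF G y l v0 0 := by rw [hsplit, hNr]
    rw [hNk] at this
    linarith
  · exact hNk

include hG hl hP hQ hx0 hy0 hysum hxy hdem hsupp in
lemma mf_sum : ∑ w, mf G L y l v0 w = k := by
  classical
  simp only [mf]
  rw [Finset.sum_comm]
  have : ∀ i, ∑ w, ((if cen G L l v0 i = w then nf G y l v0 i else 0) +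
     (if host G L l v0 i = w then ef G y l v0 i else 0)) = nf G y l v0 i + ef G y l v0 i := by
    intro i
    rw [Finset.sum_add_distrib, Finset.sum_ite_eq, Finset.sum_ite_eq]
    simp
  rw [Finset.sum_congr rfl (fun i _ => this i)]
  exact (conservation G y l v0 k x hG hl hP hQ hx0 hy0 hysum hxy hdem hsupp).2

end LP

section Dist

variable (hG : G.Connected) (hl : l ≠ []) (hP : InvP G v0 l) (hQ : InvQ G v0 l)
  (hfar : far G l = ∅)

include hG hl hP hfar in
lemma dist_ms_cen {i : ℕ} (hi : i < M l) : G.dist (ms l v0 i) (cen G L l v0 i) ≤ 2 := by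
  have hc := (cen_spec G L l v0 hG hl hP hi).1
  have := (emp_dist2 G l v0 hl hfar hc).1
  rw [SimpleGraph.dist_comm]
  exact this

include hG hl hP hQ hfar in
lemma dist_ms_host {i : ℕ} (hi : i < M l) : G.dist (ms l v0 i) (host G L l v0 i) ≤ 5 := by
  classical
  have hh := (host_spec G L l v0 hG hl hP hi).1
  rw [fam, Finset.mem_union] at hh
  rcases hh with hh | hh
  · have := (emp_dist2 G l v0 hl hfar hh).1
    rw [SimpleGraph.dist_comm]
    omega
  · rw [Finset.mem_biUnion] at hh
    obtain ⟨j, hj, hmem⟩ := hh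
    obtain ⟨hjM, hj0, hij, hpar⟩ := children_mem G l v0 hj
    have h1 : G.dist (host G L l v0 i) (ms l v0 j) ≤ 2 := (emp_dist2 G l v0 hl hfar hmem).1
    have h2 : G.dist (ms l v0 j) (ms l v0 i) ≤ 3 := by
      have := (parent_spec G l v0 hQ hj0 hjM).2
      rw [hpar] at this
      exact this
    calc G.dist (ms l v0 i) (host G L l v0 i)
        ≤ G.dist (ms l v0 i) (ms l v0 j) + G.dist (ms l v0 j) (host G L l v0 i) :=
          hG.dist_triangle
      _ ≤ 5 := by
          rw [SimpleGraph.dist_comm (u := ms l v0 i)]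
          rw [SimpleGraph.dist_comm (u := ms l v0 j) (v := host G L l v0 i)]
          omega

section DistX

variable (x : V → V → ℝ)
variable (hsupp : ∀ u v, ¬ (G.Reachable u v ∧ G.dist u v ≤ 1) → x u v = 0)

include hG hl hfar hsupp in
lemma served_dist {i : ℕ} {u v : V} (hu : u ∈ emp G l v0 i) (hx : x u v ≠ 0) :
    G.dist v (ms l v0 i) ≤ 3 := by
  have h1 : G.dist u v ≤ 1 := dist_le_one_of_x_ne G x hG hsupp hx
  have h2 : G.dist u (ms l v0 i) ≤ 2 := (emp_dist2 G l v0 hl hfar hu).1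
  calc G.dist v (ms l v0 i) ≤ G.dist v u + G.dist u (ms l v0 i) := hG.dist_triangle
    _ ≤ 3 := by rw [SimpleGraph.dist_comm (u := v)]; omega

include hG hl hP hfar hsupp in
lemma served_dist_cen {i : ℕ} {u v : V} (hi : i < M l) (hu : u ∈ emp G l v0 i)
    (hx : x u v ≠ 0) : G.dist v (cen G L l v0 i) ≤ 11 := by
  have h1 := served_dist G l v0 hG hl hfar x hsupp hu hx
  have h2 := dist_ms_cen G L l v0 hG hl hP hfar hi
  calc G.dist v (cen G L l v0 i)
      ≤ G.dist v (ms l v0 i) + G.dist (ms l v0 i) (cen G L l v0 i) := hG.dist_triangle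
    _ ≤ 11 := by omega

include hG hl hP hQ hfar hsupp in
lemma served_dist_host {i : ℕ} {u v : V} (hi : i < M l) (hu : u ∈ emp G l v0 i)
    (hx : x u v ≠ 0) : G.dist v (host G L l v0 i) ≤ 11 := by
  have h1 := served_dist G l v0 hG hl hfar x hsupp hu hx
  have h2 := dist_ms_host G L l v0 hG hl hP hQ hfar hi
  calc G.dist v (host G L l v0 i)
      ≤ G.dist v (ms l v0 i) + G.dist (ms l v0 i) (host G L l v0 i) := hG.dist_triangle
    _ ≤ 11 := by omega

include hG hl hP hQ hfar hsupp in
lemma served_dist_host_child {i j : ℕ} {u v : V} (hi : i < M l)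
    (hj : j ∈ childrenF G l v0 i) (hu : u ∈ emp G l v0 j)
    (hx : x u v ≠ 0) : G.dist v (host G L l v0 i) ≤ 11 := by
  obtain ⟨hjM, hj0, hij, hpar⟩ := children_mem G l v0 hj
  have h1 := served_dist G l v0 hG hl hfar x hsupp hu hx
  have h2 : G.dist (ms l v0 j) (ms l v0 i) ≤ 3 := by
    have := (parent_spec G l v0 hQ hj0 hjM).2
    rw [hpar] at this
    exact this
  have h3 := dist_ms_host G L l v0 hG hl hP hQ hfar hi
  calc G.dist v (host G L l v0 i)
      ≤ G.dist v (ms l v0 j) + G.dist (ms l v0 j) (host G L l v0 i) := hG.dist_triangle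
    _ ≤ G.dist v (ms l v0 j) + (G.dist (ms l v0 j) (ms l v0 i) +
          G.dist (ms l v0 i) (host G L l v0 i)) := by
          have : G.dist (ms l v0 j) (host G L l v0 i) ≤ G.dist (ms l v0 j) (ms l v0 i) +
              G.dist (ms l v0 i) (host G L l v0 i) := hG.dist_triangle
          omega
    _ ≤ 11 := by omega

end DistX

end Dist

section Xsec

variable (x : V → V → ℝ)

/-- total LP service provided by empire i to the set A -/
noncomputable def Xs (i : ℕ) (A : Finset V) : ℝ := ∑ u ∈ emp G l v0 i, ∑ v ∈ A, x u v

variable (hx0 : ∀ u v, 0 ≤ x u v) (hy0 : ∀ u, 0 ≤ y u)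
  (hcap : ∀ u, ∑ v, x u v ≤ (L u : ℝ) * y u)

include hx0 in
lemma Xs_nonneg (i : ℕ) (A : Finset V) : 0 ≤ Xs G l v0 x i A :=
  Finset.sum_nonneg fun u _ => Finset.sum_nonneg fun v _ => hx0 u v

include hx0 in
lemma Xs_pos_witness {i : ℕ} {A : Finset V} (h : 0 < Xs G l v0 x i A) :
    ∃ u ∈ emp G l v0 i, ∃ v ∈ A, x u v ≠ 0 := by
  by_contra hcon
  push_neg at hcon
  have : Xs G l v0 x i A = 0 := by
    apply Finset.sum_eq_zero
    intro u hu
    apply Finset.sum_eq_zero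
    intro v hv
    exact hcon u hu v hv
  linarith

include hx0 hy0 hcap in
lemma Xs_le {i : ℕ} {A : Finset V} {c : V} (hc : ∀ u ∈ emp G l v0 i, L u ≤ L c) :
    Xs G l v0 x i A ≤ (L c : ℝ) * Yv G y l v0 i := by
  have h1 : Xs G l v0 x i A ≤ ∑ u ∈ emp G l v0 i, (L u : ℝ) * y u := by
    apply Finset.sum_le_sum
    intro u _
    calc ∑ v ∈ A, x u v ≤ ∑ v, x u v :=
        Finset.sum_le_sum_of_subset_of_nonneg (Finset.subset_univ A)
          (fun v _ _ => hx0 u v)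
      _ ≤ (L u : ℝ) * y u := hcap u
  have h2 : ∑ u ∈ emp G l v0 i, (L u : ℝ) * y u ≤ ∑ u ∈ emp G l v0 i, (L c : ℝ) * y u := by
    apply Finset.sum_le_sum
    intro u hu
    have : (L u : ℝ) ≤ (L c : ℝ) := by exact_mod_cast hc u hu
    exact mul_le_mul_of_nonneg_right this (hy0 u)
  rw [Yv, ← Finset.mul_sum] at *
  linarith

end Xsec

section Final

variable (k : ℕ) (x : V → V → ℝ)

open Classical in
/-- centers that v may be assigned to -/
noncomputable def allowed (v : V) : Finset V :=
  Finset.univ.filter (fun w => 1 ≤ mf G L y l v0 w ∧ G.dist v w ≤ 11)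

variable (hG : G.Connected) (hl : l ≠ []) (hP : InvP G v0 l) (hQ : InvQ G v0 l)
  (hfar : far G l = ∅)
variable (hx0 : ∀ u v, 0 ≤ x u v) (hy0 : ∀ u, 0 ≤ y u) (hysum : ∑ u, y u = (k : ℝ))
  (hxy : ∀ u v, x u v ≤ y u) (hcap : ∀ u, ∑ v, x u v ≤ (L u : ℝ) * y u)
  (hdem : ∀ v, ∑ u, x u v = 1)
  (hsupp : ∀ u v, ¬ (G.Reachable u v ∧ G.dist u v ≤ 1) → x u v = 0)

include hG hl hP hQ hfar hx0 hy0 hysum hxy hcap hdem hsupp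

open Classical in
lemma hall_real (A : Finset V) :
    (A.card : ℝ) ≤ ∑ w ∈ A.biUnion (allowed G L y l v0),
      (L w : ℝ) * (mf G L y l v0 w : ℝ) := by
  classical
  set U := A.biUnion (allowed G L y l v0) with hU
  have hYone : ∀ i, i < M l → 1 ≤ Yv G y l v0 i := fun i hi =>
    Y_ge_one G y l v0 x hG hl hP hx0 hxy hdem hsupp hi
  have hYpos : ∀ i, i < M l → 0 < Yv G y l v0 i := fun i hi => by
    have := hYone i hi; linarith
  set P1 : ℕ → ℝ := fun i => Xs G l v0 x i A * (nf G y l v0 i : ℝ) / Yv G y l v0 i with hP1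
  set P2 : ℕ → ℝ := fun i => Xs G l v0 x i A * tf G y l v0 i / Yv G y l v0 i with hP2
  set P3 : ℕ → ℝ := fun i => Xs G l v0 x i A * phiF G y l v0 i / Yv G y l v0 i with hP3
  -- nonnegativity facts
  have hphi : ∀ i, i < M l → 0 ≤ phiF G y l v0 i ∧ phiF G y l v0 i < 1 ∧
      0 ≤ PhiS G y l v0 i ∧ 0 ≤ tf G y l v0 i ∧ tf G y l v0 i < 1 ∧ 0 < Af G y l v0 i :=
    fun i hi => phiF_bounds' G y l v0 x hG hl hP hx0 hxy hdem hsupp hi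
  have hXs0 : ∀ i A', 0 ≤ Xs G l v0 x i A' := fun i A' => Xs_nonneg G l v0 x hx0 i A'
  have hP1nn : ∀ i, i < M l → 0 ≤ P1 i := by
    intro i hi
    apply div_nonneg (mul_nonneg (hXs0 i A) (by positivity)) (hYpos i hi).le
  have hP2nn : ∀ i, i < M l → 0 ≤ P2 i := by
    intro i hi
    exact div_nonneg (mul_nonneg (hXs0 i A) (hphi i hi).2.2.2.1) (hYpos i hi).le
  have hP3nn : ∀ i, i < M l → 0 ≤ P3 i := by
    intro i hi
    exact div_nonneg (mul_nonneg (hXs0 i A) (hphi i hi).1) (hYpos i hi).le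
  -- Step A : |A| = ∑ Xs
  have hA : (A.card : ℝ) = ∑ i ∈ Finset.range (M l), Xs G l v0 x i A := by
    have h0 : (A.card : ℝ) = ∑ v ∈ A, (1 : ℝ) := by simp
    rw [h0, Finset.sum_congr rfl (fun v _ => (hdem v).symm), Finset.sum_comm]
    rw [← sum_emp_eq G l v0 hl (fun u => ∑ v ∈ A, x u v)]
    rfl
  -- Step B : split Xs i A = P1 + P2 + P3
  have hBsplit : ∀ i ∈ Finset.range (M l), Xs G l v0 x i A = P1 i + P2 i + P3 i := by
    intro i hi
    rw [Finset.mem_range] at hi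
    have hY := (hYpos i hi).ne'
    have hd := decomp_Y G y l v0 i
    simp only [hP1, hP2, hP3]
    rw [← add_div, ← add_div, ← mul_add, ← mul_add]
    rw [show (nf G y l v0 i : ℝ) + tf G y l v0 i + phiF G y l v0 i = Yv G y l v0 i by
      rw [hd]; ring]
    rw [mul_div_assoc, div_self hY, mul_one]
  -- Step C : regroup the P3 sum along the tree
  have hphi0 : phiF G y l v0 0 = 0 :=
    (conservation G y l v0 k x hG hl hP hQ hx0 hy0 hysum hxy hdem hsupp).1
  have hC : ∑ i ∈ Finset.range (M l), P3 i
      = ∑ i ∈ Finset.range (M l), ∑ j ∈ childrenF G l v0 i, P3 j := by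
    rw [sum_children_eq G l v0 hQ P3]
    rw [← Finset.sum_filter_add_sum_filter_not (Finset.range (M l)) (fun j => 0 < j) P3]
    have hz : (Finset.range (M l)).filter (fun j => ¬ 0 < j) = {0} := by
      ext j
      simp only [Finset.mem_filter, Finset.mem_range, Finset.mem_singleton]
      constructor
      · intro h; omega
      · intro h; subst h; exact ⟨Mpos hl, by omega⟩
    rw [hz, Finset.sum_singleton]
    have : P3 0 = 0 := by simp only [hP3, hphi0]; ring
    rw [this, add_zero]
  -- Step D : the per-index capacity bound
  have hD : ∀ i ∈ Finset.range (M l),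
      P1 i + (P2 i + ∑ j ∈ childrenF G l v0 i, P3 j) ≤
        (if cen G L l v0 i ∈ U then (L (cen G L l v0 i) : ℝ) * (nf G y l v0 i : ℝ) else 0) +
        (if host G L l v0 i ∈ U then (L (host G L l v0 i) : ℝ) * (ef G y l v0 i : ℝ) else 0) := by
    intro i hi
    rw [Finset.mem_range] at hi
    have hYpi := hYpos i hi
    -- first part
    have hpart1 : P1 i ≤
        (if cen G L l v0 i ∈ U then (L (cen G L l v0 i) : ℝ) * (nf G y l v0 i : ℝ) else 0) := by
      rcases eq_or_lt_of_le (hP1nn i hi) with h0 | hpos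
      · rw [← h0]
        split_ifs <;> positivity
      · have hpos' : 0 < P1 i := hpos
        have hXpos : 0 < Xs G l v0 x i A := by
          by_contra h
          push_neg at h
          have h0 : Xs G l v0 x i A = 0 := le_antisymm h (hXs0 i A)
          have hz : P1 i = 0 := by simp only [hP1]; rw [h0]; ring
          linarith
        have hnfpos : 0 < nf G y l v0 i := by
          by_contra h
          have h0 : nf G y l v0 i = 0 := by omega
          have hz : P1 i = 0 := by simp only [hP1]; rw [h0]; push_cast; ring
          linarith
        obtain ⟨u, hu, v, hv, hxuv⟩ := Xs_pos_witness G l v0 x hx0 hXpos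
        have hmemallowed : cen G L l v0 i ∈ allowed G L y l v0 v := by
          simp only [allowed, Finset.mem_filter]
          refine ⟨Finset.mem_univ _, ?_, ?_⟩
          · -- mf (cen i) ≥ nf i ≥ 1
            calc 1 ≤ nf G y l v0 i := hnfpos
            _ ≤ mf G L y l v0 (cen G L l v0 i) := by
                have h2 := mf_ge_parts G L y l v0 (cen G L l v0 i) hi
                rw [if_pos rfl] at h2
                omega
          · exact served_dist_cen G L l v0 hG hl hP hfar x hsupp hi hu hxuv
        have hUmem : cen G L l v0 i ∈ U := by
          rw [hU]
          exact Finset.mem_biUnion.mpr ⟨v, hv, hmemallowed⟩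
        rw [if_pos hUmem]
        simp only [hP1]
        have hXle : Xs G l v0 x i A ≤ (L (cen G L l v0 i) : ℝ) * Yv G y l v0 i :=
          Xs_le G L y l v0 x hx0 hy0 hcap (cen_spec G L l v0 hG hl hP hi).2
        rw [div_le_iff₀ hYpi]
        have hnn : (0:ℝ) ≤ (nf G y l v0 i : ℝ) := Nat.cast_nonneg _
        nlinarith [hXle, hnn, hYpi]
    -- second part
    have hpart2 : P2 i + ∑ j ∈ childrenF G l v0 i, P3 j ≤
        (if host G L l v0 i ∈ U then (L (host G L l v0 i) : ℝ) * (ef G y l v0 i : ℝ) else 0) := by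
      have hsum3nn : 0 ≤ ∑ j ∈ childrenF G l v0 i, P3 j :=
        Finset.sum_nonneg (fun j hj => hP3nn j (children_mem G l v0 hj).1)
      rcases eq_or_lt_of_le (add_nonneg (hP2nn i hi) hsum3nn) with h0 | hpos
      · rw [← h0]
        split_ifs <;> positivity
      · -- find a witness showing host i ∈ U and ef i ≥ 1
        have hwit : host G L l v0 i ∈ U ∧ 1 ≤ ef G y l v0 i := by
          rcases lt_or_ge 0 (P2 i) with hp2 | hp2
          · -- from own empire
            have hXpos : 0 < Xs G l v0 x i A := by
              by_contra h
              push_neg at h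
              have h0 : Xs G l v0 x i A = 0 := le_antisymm h (hXs0 i A)
              have hz : P2 i = 0 := by simp only [hP2]; rw [h0]; ring
              linarith
            have htfpos : 0 < tf G y l v0 i := by
              rcases eq_or_lt_of_le (hphi i hi).2.2.2.1 with h | h
              · exfalso
                have hz : P2 i = 0 := by simp only [hP2]; rw [← h]; ring
                linarith
              · exact h
            obtain ⟨u, hu, v, hv, hxuv⟩ := Xs_pos_witness G l v0 x hx0 hXpos
            have hef1 : 1 ≤ ef G y l v0 i := by
              by_contra h
              have : ef G y l v0 i = 0 := by omega
              have heq := ef_eq G y l v0 i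
              rw [this] at heq
              have := (hphi i hi).2.2.1
              simp at heq
              linarith [htfpos]
            refine ⟨?_, hef1⟩
            rw [hU]
            refine Finset.mem_biUnion.mpr ⟨v, hv, ?_⟩
            simp only [allowed, Finset.mem_filter]
            refine ⟨Finset.mem_univ _, ?_, ?_⟩
            · calc 1 ≤ ef G y l v0 i := hef1
              _ ≤ mf G L y l v0 (host G L l v0 i) := by
                  have h2 := mf_ge_parts G L y l v0 (host G L l v0 i) hi
                  rw [if_pos rfl] at h2
                  omega
            · exact served_dist_host G L l v0 hG hl hP hQ hfar x hsupp hi hu hxuv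
          · -- from some child
            have hsum3pos : 0 < ∑ j ∈ childrenF G l v0 i, P3 j := by linarith
            have : ∃ j ∈ childrenF G l v0 i, 0 < P3 j := by
              by_contra hcon
              push_neg at hcon
              have : ∑ j ∈ childrenF G l v0 i, P3 j = 0 :=
                le_antisymm (Finset.sum_nonpos (fun j hj => hcon j hj)) hsum3nn
              linarith
            obtain ⟨j, hj, hp3⟩ := this
            have hjM := (children_mem G l v0 hj).1
            have hXpos : 0 < Xs G l v0 x j A := by
              by_contra h
              push_neg at h
              have h0 : Xs G l v0 x j A = 0 := le_antisymm h (hXs0 j A)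
              have hz : P3 j = 0 := by simp only [hP3]; rw [h0]; ring
              linarith
            have hphipos : 0 < phiF G y l v0 j := by
              rcases eq_or_lt_of_le (hphi j hjM).1 with h | h
              · exfalso
                have hz : P3 j = 0 := by simp only [hP3]; rw [← h]; ring
                linarith
              · exact h
            obtain ⟨u, hu, v, hv, hxuv⟩ := Xs_pos_witness G l v0 x hx0 hXpos
            have hPhiSpos : 0 < PhiS G y l v0 i := by
              rw [PhiS]
              calc (0:ℝ) < phiF G y l v0 j := hphipos
                _ ≤ _ := Finset.single_le_sum (f := fun j' => phiF G y l v0 j')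
                    (fun j' hj' => (hphi j' (children_mem G l v0 hj').1).1) hj
            have hef1 : 1 ≤ ef G y l v0 i := by
              rw [ef]
              have := Nat.ceil_pos.mpr hPhiSpos
              omega
            refine ⟨?_, hef1⟩
            rw [hU]
            refine Finset.mem_biUnion.mpr ⟨v, hv, ?_⟩
            simp only [allowed, Finset.mem_filter]
            refine ⟨Finset.mem_univ _, ?_, ?_⟩
            · calc 1 ≤ ef G y l v0 i := hef1
              _ ≤ mf G L y l v0 (host G L l v0 i) := by
                  have h2 := mf_ge_parts G L y l v0 (host G L l v0 i) hi
                  rw [if_pos rfl] at h2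
                  omega
            · exact served_dist_host_child G L l v0 hG hl hP hQ hfar x hsupp hi hj hu hxuv
        rw [if_pos hwit.1]
        -- now the quantitative bound
        have hmax : ∀ u ∈ emp G l v0 i, L u ≤ L (host G L l v0 i) := by
          intro u hu
          exact (host_spec G L l v0 hG hl hP hi).2 u
            (Finset.mem_union_left _ hu)
        have hXlei : Xs G l v0 x i A ≤ (L (host G L l v0 i) : ℝ) * Yv G y l v0 i :=
          Xs_le G L y l v0 x hx0 hy0 hcap hmax
        have hb1 : P2 i ≤ (L (host G L l v0 i) : ℝ) * tf G y l v0 i := by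
          simp only [hP2]
          rw [div_le_iff₀ hYpi]
          nlinarith [hXlei, (hphi i hi).2.2.2.1, hYpi]
        have hb2 : ∑ j ∈ childrenF G l v0 i, P3 j ≤
            (L (host G L l v0 i) : ℝ) * PhiS G y l v0 i := by
          rw [PhiS, Finset.mul_sum]
          apply Finset.sum_le_sum
          intro j hj
          have hjM := (children_mem G l v0 hj).1
          have hmaxj : ∀ u ∈ emp G l v0 j, L u ≤ L (host G L l v0 i) := by
            intro u hu
            exact (host_spec G L l v0 hG hl hP hi).2 u
              (Finset.mem_union_right _ (Finset.mem_biUnion.mpr ⟨j, hj, hu⟩))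
          have hXlej : Xs G l v0 x j A ≤ (L (host G L l v0 i) : ℝ) * Yv G y l v0 j :=
            Xs_le G L y l v0 x hx0 hy0 hcap hmaxj
          simp only [hP3]
          rw [div_le_iff₀ (hYpos j hjM)]
          nlinarith [hXlej, (hphi j hjM).1, hYpos j hjM]
        calc P2 i + ∑ j ∈ childrenF G l v0 i, P3 j ≤
            (L (host G L l v0 i) : ℝ) * tf G y l v0 i +
            (L (host G L l v0 i) : ℝ) * PhiS G y l v0 i := by linarith
          _ = (L (host G L l v0 i) : ℝ) * (ef G y l v0 i : ℝ) := by
              rw [ef_eq G y l v0 i]; ring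
    linarith [hpart1, hpart2]
  -- Step E : the capacity sum
  have hE : ∑ i ∈ Finset.range (M l),
      ((if cen G L l v0 i ∈ U then (L (cen G L l v0 i) : ℝ) * (nf G y l v0 i : ℝ) else 0) +
       (if host G L l v0 i ∈ U then (L (host G L l v0 i) : ℝ) * (ef G y l v0 i : ℝ) else 0))
      = ∑ w ∈ U, (L w : ℝ) * (mf G L y l v0 w : ℝ) := by
    have h1 : ∀ w, (L w : ℝ) * (mf G L y l v0 w : ℝ) =
        ∑ i ∈ Finset.range (M l),
          ((if cen G L l v0 i = w then (L w : ℝ) * (nf G y l v0 i : ℝ) else 0) +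
           (if host G L l v0 i = w then (L w : ℝ) * (ef G y l v0 i : ℝ) else 0)) := by
      intro w
      rw [mf]
      push_cast
      rw [Finset.mul_sum]
      apply Finset.sum_congr rfl
      intro i _
      split_ifs <;> ring
    rw [Finset.sum_congr rfl (fun w _ => h1 w), Finset.sum_comm]
    apply Finset.sum_congr rfl
    intro i _
    rw [Finset.sum_add_distrib]
    congr 1
    · rw [Finset.sum_ite_eq U (cen G L l v0 i)
        (fun w => (L w : ℝ) * (nf G y l v0 i : ℝ))]
    · rw [Finset.sum_ite_eq U (host G L l v0 i)
        (fun w => (L w : ℝ) * (ef G y l v0 i : ℝ))]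
  -- put it all together
  calc (A.card : ℝ) = ∑ i ∈ Finset.range (M l), Xs G l v0 x i A := hA
    _ = ∑ i ∈ Finset.range (M l), (P1 i + P2 i + P3 i) :=
        Finset.sum_congr rfl hBsplit
    _ = ∑ i ∈ Finset.range (M l), (P1 i + P2 i) + ∑ i ∈ Finset.range (M l), P3 i := by
        rw [← Finset.sum_add_distrib]
    _ = ∑ i ∈ Finset.range (M l), (P1 i + P2 i) +
        ∑ i ∈ Finset.range (M l), ∑ j ∈ childrenF G l v0 i, P3 j := by rw [hC]
    _ = ∑ i ∈ Finset.range (M l),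
        (P1 i + (P2 i + ∑ j ∈ childrenF G l v0 i, P3 j)) := by
        rw [← Finset.sum_add_distrib]
        apply Finset.sum_congr rfl
        intro i _
        ring
    _ ≤ ∑ i ∈ Finset.range (M l),
        ((if cen G L l v0 i ∈ U then (L (cen G L l v0 i) : ℝ) * (nf G y l v0 i : ℝ) else 0) +
         (if host G L l v0 i ∈ U then (L (host G L l v0 i) : ℝ) * (ef G y l v0 i : ℝ) else 0)) :=
        Finset.sum_le_sum hD
    _ = ∑ w ∈ U, (L w : ℝ) * (mf G L y l v0 w : ℝ) := hE

open Classical in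
lemma master : HasSoftCapSolution G L k 11 := by
  classical
  set capn : V → ℕ := fun w => L w * mf G L y l v0 w with hcapn
  set slot : V → Finset (V × ℕ) :=
    fun v => (allowed G L y l v0 v).biUnion
      (fun w => {w} ×ˢ Finset.range (capn w)) with hslot
  have hhall : ∀ A : Finset V, A.card ≤ (A.biUnion slot).card := by
    intro A
    have h1 : A.biUnion slot =
        (A.biUnion (allowed G L y l v0)).biUnion (fun w => {w} ×ˢ Finset.range (capn w)) := by
      ext a
      simp only [hslot, Finset.mem_biUnion]
      constructor
      · rintro ⟨v, hv, w, hw, ha⟩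
        exact ⟨w, ⟨v, hv, hw⟩, ha⟩
      · rintro ⟨w, ⟨v, hv, hw⟩, ha⟩
        exact ⟨v, hv, w, hw, ha⟩
    have h2 : ((A.biUnion (allowed G L y l v0)).biUnion
        (fun w => {w} ×ˢ Finset.range (capn w))).card
        = ∑ w ∈ A.biUnion (allowed G L y l v0), capn w := by
      rw [Finset.card_biUnion]
      · apply Finset.sum_congr rfl
        intro w _
        rw [Finset.card_product, Finset.card_singleton, Finset.card_range, one_mul]
      · intro w1 _ w2 _ hne
        simp only [Function.onFun]; rw [Finset.disjoint_left]
        intro a ha1 ha2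
        rw [Finset.mem_product, Finset.mem_singleton] at ha1 ha2
        exact hne (ha1.1.symm.trans ha2.1)
    have h3 := hall_real G L y l v0 k x hG hl hP hQ hfar hx0 hy0 hysum hxy hcap hdem hsupp A
    have h4 : (A.card : ℝ) ≤ ((∑ w ∈ A.biUnion (allowed G L y l v0), capn w : ℕ) : ℝ) := by
      rw [hcapn]
      push_cast
      exact h3
    rw [h1, h2]
    exact_mod_cast h4
  obtain ⟨f, hfinj, hfmem⟩ :=
    (Finset.all_card_le_biUnion_card_iff_exists_injective slot).mp hhall
  have hfprop : ∀ v, (f v).1 ∈ allowed G L y l v0 v ∧ (f v).2 < capn (f v).1 := by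
    intro v
    have := hfmem v
    rw [hslot, Finset.mem_biUnion] at this
    obtain ⟨w, hw, hmem⟩ := this
    rw [Finset.mem_product, Finset.mem_singleton] at hmem
    rw [← hmem.1] at hw
    exact ⟨hw, by rw [hmem.1]; exact Finset.mem_range.mp hmem.2⟩
  refine ⟨mf G L y l v0, fun v => (f v).1, ?_, ?_, ?_, ?_⟩
  · exact mf_sum G L y l v0 k x hG hl hP hQ hx0 hy0 hysum hxy hdem hsupp
  · intro v
    have := (hfprop v).1
    simp only [allowed, Finset.mem_filter] at this
    exact this.2.1
  · intro v
    refine ⟨hG.preconnected v _, ?_⟩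
    have := (hfprop v).1
    simp only [allowed, Finset.mem_filter] at this
    exact this.2.2
  · intro u
    have hset : {v | (f v).1 = u} = ↑(Finset.univ.filter (fun v => (f v).1 = u)) := by
      ext v; simp
    rw [hset, Set.ncard_coe_finset]
    have hmaps : ∀ v ∈ Finset.univ.filter (fun v => (f v).1 = u),
        (f v).2 ∈ Finset.range (capn u) := by
      intro v hv
      rw [Finset.mem_filter] at hv
      have := (hfprop v).2
      rw [hv.2] at this
      exact Finset.mem_range.mpr this
    have hinj : ∀ v1 ∈ Finset.univ.filter (fun v => (f v).1 = u),
        ∀ v2 ∈ Finset.univ.filter (fun v => (f v).1 = u),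
        (f v1).2 = (f v2).2 → v1 = v2 := by
      intro v1 hv1 v2 hv2 heq
      rw [Finset.mem_filter] at hv1 hv2
      apply hfinj
      exact Prod.ext (hv1.2.trans hv2.2.symm) heq
    have := Finset.card_le_card_of_injOn (fun v => (f v).2) hmaps hinj
    rw [Finset.card_range] at this
    exact this

end Final

end Main


end SoftRound

/-- For every finite connected graph `G`, capacity function `L` and
positive integer `k`, if the soft LP relaxation has a `1`-feasible solution then there
exist a multiplicity function `m` with `∑ v, m v = k` and an assignment `φ` such that
`m (φ v) ≥ 1` and `dist_G(v, φ v) ≤ 11` for every `v`, and `|φ⁻¹(u)| ≤ L u * m u` for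
every `u`.  In particular the integrality gap of the soft LP relaxation for connected
graphs is at most `11`. -/
theorem soft_lp_rounding_eleven {V : Type} [Fintype V] (G : SimpleGraph V)
    (hG : G.Connected) (L : V → ℕ) (k : ℕ) (hk : 0 < k)
    (x : V → V → ℝ) (y : V → ℝ) (hfeas : SoftLPFeasible G L k 1 x y) :
    HasSoftCapSolution G L k 11 := by
  classical
  obtain ⟨hx0, hy0, hysum, hxy, hcap, hdem, hsupp⟩ := hfeas
  have hne : Nonempty V := hG.nonempty
  set v0 := Classical.arbitrary V with hv0
  exact SoftRound.master G L y (SoftRound.monList G v0) v0 k x hG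
    (SoftRound.iter_ne_nil G v0 _) (SoftRound.iter_invP G v0 _)
    (SoftRound.iter_invQ G v0 _) (SoftRound.monList_far_empty G v0 hG)
    hx0 hy0 hysum hxy hcap hdem hsupp
end

section
/- For every integer k ≥ 24 there exists a finite simple connected undirected graph G = (V, E) with uniform capacity function L(v) = k − 1 for every v ∈ V such that the soft LP relaxation has a 1-feasible solution, yet G admits no soft capacitated k-center solution at distance 3. Consequently, the integrality gap of the soft LP relaxation for connected graphs with uniform capacities is at least 4. -/
/-! Auxiliary construction for the soft capacitated k-center gap instance. -/

/-- Vertex type: a root `none`, plus `t` legs each with `m` vertices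
(index 0 = a, 1 = b, 2 = s, indices ≥ 3 = leaves attached to s). -/
abbrev GapV (t m : ℕ) := Option (Fin t × Fin m)

/-- depth in the tree -/
def gdepth {t m : ℕ} : GapV t m → ℕ
  | none => 0
  | some (_, j) => min (j.1 + 1) 4

/-- which leg a vertex belongs to -/
def legOf {t m : ℕ} : GapV t m → Option (Fin t)
  | none => none
  | some (i, _) => some i

/-- The gap graph: a spider whose legs are paths of length 3 ending in a star. -/
def GapG (t m : ℕ) : SimpleGraph (GapV t m) where
  Adj u v := u ≠ v ∧ (legOf u = legOf v ∨ u = none ∨ v = none) ∧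
    (gdepth u + 1 = gdepth v ∨ gdepth v + 1 = gdepth u)
  symm := by
    refine ⟨?_⟩
    rintro u v ⟨h1, h2, h3⟩
    exact ⟨Ne.symm h1, by tauto, by tauto⟩
  loopless := ⟨by rintro u ⟨h, -⟩; exact h rfl⟩

lemma gapG_adj {t m : ℕ} (u v : GapV t m) :
    (GapG t m).Adj u v ↔ (u ≠ v ∧ (legOf u = legOf v ∨ u = none ∨ v = none) ∧
      (gdepth u + 1 = gdepth v ∨ gdepth v + 1 = gdepth u)) := Iff.rfl

/-- pull back a graph along an injective map -/
def pullGraph {α β : Type} (G : SimpleGraph α) (f : β → α) (hf : Function.Injective f) :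
    SimpleGraph β where
  Adj a b := G.Adj (f a) (f b)
  symm := ⟨fun a b h => h.symm⟩
  loopless := ⟨fun a h => h.ne rfl⟩

lemma pullGraph_adj {α β : Type} (G : SimpleGraph α) (f : β → α) (hf : Function.Injective f)
    (a b : β) : (pullGraph G f hf).Adj a b ↔ G.Adj (f a) (f b) := Iff.rfl

/-- potential bound along a walk -/
lemma pot_le_of_walk {V : Type} {G : SimpleGraph V} (f : V → ℕ)
    (hf : ∀ a b, G.Adj a b → f a ≤ f b + 1) :
    ∀ {u v : V} (p : G.Walk u v), f u ≤ f v + p.length := by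
  intro u v p
  induction p with
  | nil => simp
  | cons h p ih =>
    have := hf _ _ h
    simp only [SimpleGraph.Walk.length_cons]
    omega

lemma pot_le_dist {V : Type} {G : SimpleGraph V} (f : V → ℕ)
    (hf : ∀ a b, G.Adj a b → f a ≤ f b + 1) {u v : V} (h : G.Reachable u v) :
    f u ≤ f v + G.dist u v := by
  obtain ⟨p, hp⟩ := h.exists_walk_length_eq_dist
  simpa [hp] using pot_le_of_walk f hf p

/-- LP fractional assignment -/
noncomputable def xLP {t m : ℕ} : GapV t m → GapV t m → ℝ
  | none, none => 1
  | none, some (_, j) => if j.1 = 0 then 1 else 0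
  | some _, none => 0
  | some (i, _j), some (i', j') =>
      if i = i' then (if _j.1 = 2 then (if j'.1 = 0 then 0 else 1) else 0) else 0

/-- LP fractional openings -/
noncomputable def yLP (k : ℕ) {t m : ℕ} : GapV t m → ℝ
  | none => 1
  | some (_, j) => if j.1 = 2 then ((k : ℝ) - 1) / t else 0

/-- summing an indicator over `Fin m` -/
lemma fin_sum_ite_val {m a : ℕ} (ha : a < m) (c : ℝ) :
    ∑ j : Fin m, (if j.1 = a then c else 0) = c := by
  rw [Finset.sum_eq_single (⟨a, ha⟩ : Fin m)]
  · simp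
  · intro j _ hj
    have : j.1 ≠ a := fun h => hj (Fin.ext h)
    simp [this]
  · simp

lemma fin_sum_ite_ne_val {m : ℕ} (hm : 0 < m) :
    ∑ j : Fin m, (if j.1 = 0 then (0:ℝ) else 1) = (m : ℝ) - 1 := by
  have h1 : ∀ j : Fin m, (if j.1 = 0 then (0:ℝ) else 1) = 1 - (if j.1 = 0 then 1 else 0) := by
    intro j; split_ifs <;> ring
  simp only [h1]
  rw [Finset.sum_sub_distrib, fin_sum_ite_val hm 1]
  simp

section Sums
variable {k t m : ℕ}

lemma yLP_sum (ht : 0 < t) (hm : 2 < m) (hk : 1 ≤ k) :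
    ∑ v : GapV t m, yLP k v = (k : ℝ) := by
  rw [Fintype.sum_option]
  simp only [yLP, Fintype.sum_prod_type]
  rw [Finset.sum_congr rfl (fun i _ => fin_sum_ite_val hm (((k : ℝ) - 1) / t))]
  rw [Finset.sum_const, Finset.card_univ, Fintype.card_fin, nsmul_eq_mul]
  have htR : (t : ℝ) ≠ 0 := Nat.cast_ne_zero.mpr ht.ne'
  field_simp
  ring

lemma xLP_nonneg {t m : ℕ} (u v : GapV t m) : 0 ≤ xLP u v := by
  rcases u with _ | ⟨i, j⟩ <;> rcases v with _ | ⟨i', j'⟩ <;>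
    simp only [xLP] <;> norm_num <;> split_ifs <;> norm_num

lemma yLP_nonneg {t m : ℕ} (k : ℕ) (hk : 1 ≤ k) (v : GapV t m) : 0 ≤ yLP k v := by
  rcases v with _ | ⟨i, j⟩ <;> simp only [yLP]
  · norm_num
  · have h1 : (0:ℝ) ≤ ((k:ℝ) - 1) / t := by
      apply div_nonneg _ (Nat.cast_nonneg t)
      have : (1:ℝ) ≤ (k:ℝ) := by exact_mod_cast hk
      linarith
    split_ifs <;> simp [h1]

lemma xLP_le_yLP {t m : ℕ} (k : ℕ) (h1t : (1:ℝ) ≤ ((k:ℝ) - 1) / t) (u v : GapV t m) :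
    xLP u v ≤ yLP k u := by
  have hc : (0:ℝ) ≤ ((k:ℝ) - 1) / t := le_trans zero_le_one h1t
  rcases u with _ | ⟨i, j⟩ <;> rcases v with _ | ⟨i', j'⟩ <;> simp only [xLP, yLP] <;>
    try split_ifs <;> linarith
  · norm_num

lemma xLP_row_none {t m : ℕ} (hm : 0 < m) :
    ∑ v : GapV t m, xLP none v = 1 + (t : ℝ) := by
  rw [Fintype.sum_option]
  simp only [xLP, Fintype.sum_prod_type]
  rw [Finset.sum_congr rfl (fun i _ => fin_sum_ite_val hm (1:ℝ))]
  simp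

lemma xLP_row_s {t m : ℕ} (hm : 0 < m) (i : Fin t) (j : Fin m) (hj : j.1 = 2) :
    ∑ v : GapV t m, xLP (some (i, j)) v = (m : ℝ) - 1 := by
  rw [Fintype.sum_option]
  have h0 : xLP (some (i,j)) (none : GapV t m) = 0 := rfl
  rw [h0, zero_add, Fintype.sum_prod_type]
  rw [Finset.sum_eq_single i]
  · have h1 : ∀ j' : Fin m, xLP (some (i,j)) (some (i,j')) = if j'.1 = 0 then 0 else 1 := by
      intro j'; simp [xLP, hj]
    rw [Finset.sum_congr rfl fun j' _ => h1 j']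
    rw [fin_sum_ite_ne_val hm]
  · intro i' _ hi'
    have h2 : ∀ j' : Fin m, xLP (some (i,j)) (some (i',j')) = 0 := by
      intro j'; simp [xLP, Ne.symm hi']
    rw [Finset.sum_congr rfl fun j' _ => h2 j', Finset.sum_const, smul_zero]
  · intro h; exact absurd (Finset.mem_univ i) h

lemma xLP_row_other {t m : ℕ} (i : Fin t) (j : Fin m) (hj : j.1 ≠ 2) :
    ∑ v : GapV t m, xLP (some (i, j)) v = 0 := by
  rw [Fintype.sum_option]
  have h0 : xLP (some (i,j)) (none : GapV t m) = 0 := rfl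
  have h1 : ∀ p : Fin t × Fin m, xLP (some (i,j)) (some p) = 0 := by
    rintro ⟨i', j'⟩; simp [xLP, hj]
  rw [h0, zero_add, Finset.sum_congr rfl fun p _ => h1 p, Finset.sum_const, smul_zero]

lemma xLP_col {t m : ℕ} (hm : 2 < m) (v : GapV t m) :
    ∑ u : GapV t m, xLP u v = 1 := by
  rw [Fintype.sum_option]
  rcases v with _ | ⟨i', j'⟩
  · have h1 : ∀ p : Fin t × Fin m, xLP (some p) (none : GapV t m) = 0 := by
      rintro ⟨i, j⟩; rfl
    rw [Finset.sum_congr rfl fun p _ => h1 p, Finset.sum_const, smul_zero]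
    simp [xLP]
  · rw [Fintype.sum_prod_type]
    by_cases hj' : j'.1 = 0
    · have h1 : ∀ i : Fin t, ∀ j : Fin m, xLP (some (i,j)) (some (i',j')) = 0 := by
        intro i j; simp [xLP, hj']
      have h2 : xLP (none : GapV t m) (some (i',j')) = 1 := by simp [xLP, hj']
      rw [h2, Finset.sum_congr rfl fun i _ => Finset.sum_congr rfl fun j _ => h1 i j]
      simp
    · have h2 : xLP (none : GapV t m) (some (i',j')) = 0 := by simp [xLP, hj']
      have hrow : ∀ i : Fin t,
          (∑ j : Fin m, xLP (some (i,j)) (some (i',j'))) = if i = i' then 1 else 0 := by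
        intro i
        by_cases h : i = i'
        · subst h
          have h3 : ∀ j : Fin m, xLP (some (i,j)) (some (i,j')) = if j.1 = 2 then 1 else 0 := by
            intro j; simp [xLP, hj']
          rw [Finset.sum_congr rfl fun j _ => h3 j, fin_sum_ite_val hm, if_pos rfl]
        · have h3 : ∀ j : Fin m, xLP (some (i,j)) (some (i',j')) = 0 := by
            intro j; simp [xLP, h]
          rw [Finset.sum_congr rfl fun j _ => h3 j, Finset.sum_const, smul_zero, if_neg h]
      rw [h2, Finset.sum_congr rfl fun i _ => hrow i, Finset.sum_ite_eq']
      simp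

lemma xLP_support {t m : ℕ} (u v : GapV t m) (h : xLP u v ≠ 0) :
    u = v ∨ (GapG t m).Adj u v := by
  rcases u with _ | ⟨i, j⟩ <;> rcases v with _ | ⟨i', j'⟩
  · exact Or.inl rfl
  · right
    have hj' : j'.1 = 0 := by
      by_contra hc; exact h (by simp [xLP, hc])
    refine ⟨by simp, Or.inr (Or.inl rfl), Or.inl ?_⟩
    simp [gdepth, hj']
  · exact absurd rfl h
  · have hi : i = i' := by by_contra hc; exact h (by simp [xLP, hc])
    subst hi
    have hj : j.1 = 2 := by by_contra hc; exact h (by simp [xLP, hc])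
    have hj' : j'.1 ≠ 0 := by by_contra hc; exact h (by simp [xLP, hc])
    by_cases h2 : j'.1 = 2
    · exact Or.inl (by simp [Fin.ext_iff, hj, h2])
    · right
      refine ⟨by simp [Fin.ext_iff]; omega, Or.inl rfl, ?_⟩
      simp only [gdepth]
      omega

/-- the per-leg potential -/
def gpot {t m : ℕ} (i : Fin t) (v : GapV t m) : ℕ :=
  if legOf v = some i then gdepth v else 0

lemma gpot_lip {t m : ℕ} (i : Fin t) (u v : GapV t m) (h : (GapG t m).Adj u v) :
    gpot i u ≤ gpot i v + 1 := by
  obtain ⟨hne, hleg, hdep⟩ := h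
  unfold gpot
  split_ifs with h1 h2
  · omega
  · rcases hleg with h3 | h3 | h3
    · exact absurd (h3 ▸ h1) h2
    · subst h3; simp [legOf] at h1
    · subst h3; simp only [gdepth] at hdep ⊢; omega
  · omega
  · omega

lemma gap_reach_root {t k : ℕ} (u : GapV t (k+3)) : (GapG t (k+3)).Reachable u none := by
  rcases u with _ | ⟨i, j⟩
  · exact SimpleGraph.Reachable.refl _
  · set A : GapV t (k+3) := some (i, ⟨0, by omega⟩) with hA'
    set B : GapV t (k+3) := some (i, ⟨1, by omega⟩) with hB'
    set S : GapV t (k+3) := some (i, ⟨2, by omega⟩) with hS'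
    have hA : (GapG t (k+3)).Adj A none := by
      refine ⟨by simp [hA'], Or.inr (Or.inr rfl), Or.inr ?_⟩
      simp [hA', gdepth]
    have hBA : (GapG t (k+3)).Adj B A := by
      refine ⟨by simp [hA', hB', Fin.ext_iff], Or.inl rfl, Or.inr ?_⟩
      simp [hA', hB', gdepth]
    have hSB : (GapG t (k+3)).Adj S B := by
      refine ⟨by simp [hS', hB', Fin.ext_iff], Or.inl rfl, Or.inr ?_⟩
      simp [hS', hB', gdepth]
    have hrA : (GapG t (k+3)).Reachable A none := hA.reachable
    have hrB : (GapG t (k+3)).Reachable B none := hBA.reachable.trans hrA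
    have hrS : (GapG t (k+3)).Reachable S none := hSB.reachable.trans hrB
    rcases (by omega : j.1 = 0 ∨ j.1 = 1 ∨ j.1 = 2 ∨ 3 ≤ j.1) with h | h | h | h
    · have : some (i, j) = A := by simp [hA', Fin.ext_iff, h]
      rw [this]; exact hrA
    · have : some (i, j) = B := by simp [hB', Fin.ext_iff, h]
      rw [this]; exact hrB
    · have : some (i, j) = S := by simp [hS', Fin.ext_iff, h]
      rw [this]; exact hrS
    · have hadj : (GapG t (k+3)).Adj (some (i, j)) S := by
        refine ⟨by simp [hS', Fin.ext_iff]; omega, Or.inl rfl, Or.inr ?_⟩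
        simp only [hS', gdepth]
        omega
      exact hadj.reachable.trans hrS

/-- For every integer `k ≥ 24` there is a finite connected graph `G`
with uniform capacities `L ≡ k - 1` such that the soft LP relaxation has a `1`-feasible
solution, yet `G` admits no soft capacitated `k`-center solution at distance `3`.
Consequently the integrality gap of the soft LP relaxation for connected graphs with
uniform capacities is at least `4`. -/
theorem soft_uniform_gap_at_least_four (k : ℕ) (hk : 24 ≤ k) :
    ∃ (n : ℕ) (G : SimpleGraph (Fin n)), G.Connected ∧
      (∃ x y, SoftLPFeasible G (fun _ => k - 1) k 1 x y) ∧
      ¬ HasSoftCapSolution G (fun _ => k - 1) k 3 := by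
  classical
  set t := k / 2 + 1 with ht
  have ht0 : 0 < t := Nat.succ_pos _
  have ht0R : (0:ℝ) < (t:ℝ) := by exact_mod_cast ht0
  have htk : t ≤ k - 1 := by omega
  have hkcast : ((k - 1 : ℕ) : ℝ) = (k : ℝ) - 1 := by
    rw [Nat.cast_sub (by omega)]; norm_num
  have h1t : (1:ℝ) ≤ ((k:ℝ) - 1) / t := by
    rw [le_div_iff₀ ht0R, one_mul]
    have : (t:ℝ) ≤ ((k - 1 : ℕ) : ℝ) := by exact_mod_cast htk
    rw [hkcast] at this; linarith
  have hquadR : (t:ℝ) * ((k:ℝ) + 2) ≤ ((k:ℝ) - 1) * ((k:ℝ) - 1) := by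
    have h2t : 2 * (t:ℝ) ≤ (k:ℝ) + 2 := by
      have h' : 2 * t ≤ k + 2 := by omega
      exact_mod_cast h'
    have hkR : (24:ℝ) ≤ (k:ℝ) := by exact_mod_cast hk
    nlinarith [h2t, hkR, sq_nonneg ((k:ℝ) - 9)]
  set V : Type := GapV t (k + 3) with hV
  set G' : SimpleGraph V := GapG t (k + 3) with hG'
  set n : ℕ := Fintype.card V with hn
  set e : V ≃ Fin n := Fintype.equivFin V with he
  set G : SimpleGraph (Fin n) := pullGraph G' e.symm e.symm.injective with hG
  have hGadj : ∀ a b : Fin n, G.Adj a b ↔ G'.Adj (e.symm a) (e.symm b) := fun a b => Iff.rfl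
  refine ⟨n, G, ?_, ?_, ?_⟩
  · -- connectivity
    rw [SimpleGraph.connected_iff]
    constructor
    · intro a b
      have hmr : ∀ c : Fin n, G.Reachable c (e none) := by
        intro c
        let f : G' →g G := ⟨e, by
          intro u v h
          rw [hGadj, Equiv.symm_apply_apply, Equiv.symm_apply_apply]
          exact h⟩
        have h1 : G.Reachable (e (e.symm c)) (e none) := (gap_reach_root (e.symm c)).map f
        rwa [Equiv.apply_symm_apply] at h1
      exact (hmr a).trans (hmr b).symm
    · exact ⟨e none⟩
  · -- LP feasibility
    refine ⟨fun a b => xLP (e.symm a) (e.symm b), fun a => yLP k (e.symm a),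
      fun a b => xLP_nonneg _ _, fun a => yLP_nonneg k (by omega) _, ?_, ?_, ?_, ?_, ?_⟩
    · -- total y
      have h1 : ∑ a : Fin n, yLP k (e.symm a) = ∑ v : V, yLP k v := by
        rw [← Equiv.sum_comp e (fun a => yLP k (e.symm a))]
        simp
      rw [h1, yLP_sum ht0 (by omega) (by omega)]
    · exact fun u v => xLP_le_yLP k h1t _ _
    · -- capacity rows
      intro u
      obtain ⟨u', rfl⟩ := e.surjective u
      show ∑ b : Fin n, xLP (e.symm (e u')) (e.symm b) ≤ ((k - 1 : ℕ) : ℝ) * yLP k (e.symm (e u'))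
      rw [Equiv.symm_apply_apply]
      have h1 : ∑ b : Fin n, xLP u' (e.symm b) = ∑ v : V, xLP u' v := by
        rw [← Equiv.sum_comp e (fun b => xLP u' (e.symm b))]
        simp
      rw [h1, hkcast]
      rcases u' with _ | ⟨i, j⟩
      · rw [xLP_row_none (by omega)]
        have h2 : yLP k (none : GapV t (k+3)) = 1 := rfl
        rw [h2, mul_one]
        have h3 : (t:ℝ) ≤ ((k:ℝ) - 1) - 1 := by
          have : (t:ℝ) + 1 ≤ ((k-1:ℕ):ℝ) := by exact_mod_cast (by omega : t + 1 ≤ k - 1)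
          rw [hkcast] at this; linarith
        linarith
      · by_cases hj : j.1 = 2
        · rw [xLP_row_s (by omega) i j hj]
          have h2 : yLP k (some (i, j) : GapV t (k+3)) = ((k:ℝ) - 1) / t := by
            simp [yLP, hj]
          rw [h2, mul_div_assoc', le_div_iff₀ ht0R]
          have hEq : ((((k+3) : ℕ):ℝ) - 1) * (t:ℝ) = (t:ℝ) * ((k:ℝ) + 2) := by push_cast; ring
          rw [hEq]
          exact hquadR
        · rw [xLP_row_other i j hj]
          have h2 : yLP k (some (i, j) : GapV t (k+3)) = 0 := by simp [yLP, hj]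
          rw [h2, mul_zero]
    · -- column sums
      intro v
      show ∑ a : Fin n, xLP (e.symm a) (e.symm v) = 1
      have h1 : ∑ a : Fin n, xLP (e.symm a) (e.symm v) = ∑ u : V, xLP u (e.symm v) := by
        rw [← Equiv.sum_comp e (fun a => xLP (e.symm a) (e.symm v))]
        simp
      rw [h1, xLP_col (by omega)]
    · -- support
      intro u v hcon
      by_contra hx
      apply hcon
      rcases xLP_support _ _ hx with h | h
      · have huv : u = v := e.symm.injective h
        subst huv
        exact ⟨SimpleGraph.Reachable.refl _, by simp [SimpleGraph.dist_self]⟩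
      · have hadj : G.Adj u v := (hGadj u v).2 h
        refine ⟨hadj.reachable, ?_⟩
        have := SimpleGraph.dist_le (SimpleGraph.Walk.cons hadj SimpleGraph.Walk.nil)
        simpa using this
  · -- no integral solution
    rintro ⟨mf, φ, hsum, hone, hdist, hcap⟩
    have leafclaim : ∀ (i : Fin t) (l : Fin k),
        legOf (e.symm (φ (e (some (i, ⟨l.1 + 3, by omega⟩))))) = some i := by
      intro i l
      by_contra hco
      set v : Fin n := e (some (i, ⟨l.1 + 3, by omega⟩)) with hv'
      have hreach := (hdist v).1
      have hd := (hdist v).2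
      have hlip : ∀ a b : Fin n, G.Adj a b →
          gpot i (e.symm a) ≤ gpot i (e.symm b) + 1 :=
        fun a b h => gpot_lip i _ _ ((hGadj a b).1 h)
      have hb := pot_le_dist (fun a => gpot i (e.symm a)) hlip hreach
      have h4 : gpot i (e.symm v) = 4 := by
        rw [hv', Equiv.symm_apply_apply]
        simp [gpot, legOf, gdepth]
      have h0 : gpot i (e.symm (φ v)) = 0 := by
        simp only [gpot, if_neg hco]
      rw [h4, h0] at hb
      omega
    set legF : Fin t → Finset (Fin n) :=
      fun i => Finset.univ.filter (fun u => legOf (e.symm u) = some i) with hlegF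
    have hM : ∀ i : Fin t, 2 ≤ ∑ u ∈ legF i, mf u := by
      intro i
      have hinj : Function.Injective (fun l : Fin k => e (some (i, (⟨l.1 + 3, by omega⟩ : Fin (k+3))))) := by
        intro l1 l2 h
        have h1 : (some (i, (⟨l1.1 + 3, by omega⟩ : Fin (k+3))) : GapV t (k+3))
            = some (i, (⟨l2.1 + 3, by omega⟩ : Fin (k+3))) := e.injective h
        have h2 : l1.1 + 3 = l2.1 + 3 :=
          congrArg (fun o : GapV t (k+3) => ((o.getD (i, ⟨0, by omega⟩)).2 : Fin (k+3)).1) h1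
        exact Fin.ext (by omega)
      set S : Finset (Fin n) :=
        Finset.univ.image (fun l : Fin k => e (some (i, ⟨l.1 + 3, by omega⟩))) with hS'
      have hcardS : S.card = k := by
        rw [hS', Finset.card_image_of_injective _ hinj, Finset.card_univ, Fintype.card_fin]
      have hmaps : ∀ v ∈ S, φ v ∈ legF i := by
        intro v hv
        rw [hS', Finset.mem_image] at hv
        obtain ⟨l, -, rfl⟩ := hv
        rw [hlegF, Finset.mem_filter]
        exact ⟨Finset.mem_univ _, leafclaim i l⟩
      have hfib := Finset.card_eq_sum_card_fiberwise hmaps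
      have hle : ∀ u ∈ legF i, (S.filter (fun v => φ v = u)).card ≤ (k - 1) * mf u := by
        intro u _
        calc (S.filter (fun v => φ v = u)).card
            ≤ (Finset.univ.filter (fun v => φ v = u)).card :=
              Finset.card_le_card (Finset.filter_subset_filter _ (Finset.subset_univ S))
          _ = {v | φ v = u}.ncard := by
              rw [Set.ncard_eq_toFinset_card', Set.toFinset_setOf]
          _ ≤ (k - 1) * mf u := hcap u
      have hk2 : k ≤ (k - 1) * ∑ u ∈ legF i, mf u := by
        calc k = S.card := hcardS.symm
          _ = ∑ u ∈ legF i, (S.filter (fun v => φ v = u)).card := hfib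
          _ ≤ ∑ u ∈ legF i, (k - 1) * mf u := Finset.sum_le_sum hle
          _ = (k - 1) * ∑ u ∈ legF i, mf u := (Finset.mul_sum _ _ _).symm
      by_contra hlt
      push_neg at hlt
      have hlt1 : ∑ u ∈ legF i, mf u ≤ 1 := by omega
      have := Nat.mul_le_mul_left (k - 1) hlt1
      omega
    have hdisj : (↑(Finset.univ : Finset (Fin t)) : Set (Fin t)).PairwiseDisjoint legF := by
      intro i _ j _ hij
      simp only [Function.onFun]
      rw [Finset.disjoint_left]
      intro a ha hb
      rw [hlegF, Finset.mem_filter] at ha hb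
      exact hij (Option.some.inj (ha.2.symm.trans hb.2))
    have htot : ∑ i : Fin t, ∑ u ∈ legF i, mf u ≤ ∑ u : Fin n, mf u := by
      rw [← Finset.sum_biUnion hdisj]
      exact Finset.sum_le_sum_of_subset (Finset.subset_univ _)
    have hfin : 2 * t ≤ k := by
      calc 2 * t = ∑ _i : Fin t, 2 := by
            rw [Finset.sum_const, Finset.card_univ, Fintype.card_fin, smul_eq_mul, mul_comm]
        _ ≤ ∑ i : Fin t, ∑ u ∈ legF i, mf u := Finset.sum_le_sum (fun i _ => hM i)
        _ ≤ ∑ u : Fin n, mf u := htot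
        _ = k := hsum
    omega
end Sums
end

section
/- Let G = (V, E) be a finite simple undirected graph with uniform capacity function L(v) = L ≥ 1 for all v ∈ V, and let k be a positive integer. Suppose V_0 ⊆ V satisfies dist_G(u, v) ≥ 3 for every pair of distinct u, v ∈ V_0, and let V' = { v ∈ V : dist_G(u, v) ≥ 3 for all u ∈ V_0 }. If |V_0| + |V'| / L > k, then LP1 has no feasible solution: indeed, any feasible assignment (x, y) would satisfy ∑_{v ∈ N_G[V_0]} y_v ≥ |V_0| and ∑_{v ∈ N_G[V']} y_v ≥ |V'| / L, where N_G[X] is the set of vertices at distance at most 1 from X, the sets N_G[V_0] and N_G[V'] cover V and are disjoint, so ∑_{v ∈ V} y_v > k, contradicting constraint (1). -/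
private lemma reachable_dist_triangle {V : Type} {G : SimpleGraph V} {u v w : V}
    (h1 : G.Reachable u v) (h2 : G.Reachable v w) :
    G.dist u w ≤ G.dist u v + G.dist v w := by
  obtain ⟨p, hp⟩ := h1.exists_walk_length_eq_dist
  obtain ⟨q, hq⟩ := h2.exists_walk_length_eq_dist
  calc G.dist u w ≤ (p.append q).length := SimpleGraph.dist_le _
    _ = G.dist u v + G.dist v w := by rw [SimpleGraph.Walk.length_append, hp, hq]

/-- Let `G` be a finite graph with uniform capacities `L ≡ L₀`
(`L₀ ≥ 1`) and `k` a positive integer.  Suppose `V₀ ⊆ V` has pairwise distances at least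
`3` and let `V' = {v | dist_G(u, v) ≥ 3 for all u ∈ V₀}` (distances between vertices in
different components count as infinite).  If `|V₀| + |V'| / L₀ > k` then LP1 has no
feasible solution. -/
theorem lp_infeasibility_witness {V : Type} [Fintype V] (G : SimpleGraph V)
    (L₀ : ℕ) (hL : 1 ≤ L₀) (k : ℕ) (hk : 0 < k) (V₀ : Finset V)
    (hsep : ∀ u ∈ V₀, ∀ v ∈ V₀, u ≠ v → (¬ G.Reachable u v ∨ 3 ≤ G.dist u v))
    (hbig : (k : ℝ) <
      (V₀.card : ℝ) +
        ({v : V | ∀ u ∈ V₀, ¬ G.Reachable u v ∨ 3 ≤ G.dist u v}.ncard : ℝ) / (L₀ : ℝ)) :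
    ¬ ∃ x y, LPFeasible G (fun _ => L₀) k 1 x y := by
  classical
  rintro ⟨x, y, hx0, hy0, hsum, hxy, hcap, hclient, hy1, hfar⟩
  set P : V → Prop := fun v => ∀ u ∈ V₀, ¬ G.Reachable u v ∨ 3 ≤ G.dist u v with hP
  set V' : Finset V := Finset.univ.filter P with hV'
  have hncard : ({v : V | P v}.ncard : ℝ) = (V'.card : ℝ) := by
    congr 1
    rw [show {v : V | P v} = ↑V' by ext v; simp [hV']]
    exact Set.ncard_coe_finset _
  set ball : V → Finset V := fun u =>
    Finset.univ.filter (fun w => G.Reachable u w ∧ G.dist u w ≤ 1) with hball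
  set A : Finset V := V₀.biUnion ball with hA
  set B : Finset V :=
    Finset.univ.filter (fun w => ∃ v ∈ V', G.Reachable w v ∧ G.dist w v ≤ 1) with hB
  have hL0 : (0:ℝ) < (L₀ : ℝ) := by exact_mod_cast hL
  -- Claim 1: for each u ∈ V₀, 1 ≤ ∑ w in ball u, y w
  have h1 : ∀ u ∈ V₀, (1:ℝ) ≤ ∑ w ∈ ball u, y w := by
    intro u hu
    have heq : ∑ w ∈ ball u, x w u = ∑ w, x w u := by
      apply Finset.sum_subset (Finset.subset_univ _)
      intro w _ hw
      refine hfar w u fun ⟨hr, hd⟩ => hw ?_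
      simp only [hball, Finset.mem_filter]
      exact ⟨Finset.mem_univ _, hr.symm, by rwa [SimpleGraph.dist_comm]⟩
    calc (1:ℝ) = ∑ w, x w u := (hclient u).symm
      _ = ∑ w ∈ ball u, x w u := heq.symm
      _ ≤ ∑ w ∈ ball u, y w := Finset.sum_le_sum fun w _ => hxy w u
  -- balls are pairwise disjoint
  have hdisj : ∀ u ∈ V₀, ∀ u' ∈ V₀, u ≠ u' → Disjoint (ball u) (ball u') := by
    intro u hu u' hu' hne
    rw [Finset.disjoint_left]
    intro w hw hw'
    simp only [hball, Finset.mem_filter] at hw hw'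
    obtain ⟨-, hr, hd⟩ := hw
    obtain ⟨-, hr', hd'⟩ := hw'
    rcases hsep u hu u' hu' hne with h | h
    · exact h (hr.trans hr'.symm)
    · have : G.dist u u' ≤ 2 := by
        have := reachable_dist_triangle hr hr'.symm
        have h2 : G.dist w u' ≤ 1 := by rwa [SimpleGraph.dist_comm]
        omega
      omega
  have claim1 : (V₀.card : ℝ) ≤ ∑ w ∈ A, y w := by
    calc (V₀.card : ℝ) = ∑ _u ∈ V₀, (1:ℝ) := by simp
      _ ≤ ∑ u ∈ V₀, ∑ w ∈ ball u, y w := Finset.sum_le_sum h1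
      _ = ∑ w ∈ A, y w := (Finset.sum_biUnion hdisj).symm
  -- Claim 2
  have claim2 : (V'.card : ℝ) ≤ ∑ w ∈ B, (L₀:ℝ) * y w := by
    have hswap : ∑ v ∈ V', ∑ w, x w v = ∑ w, ∑ v ∈ V', x w v := Finset.sum_comm
    have hres : ∑ w ∈ B, ∑ v ∈ V', x w v = ∑ w, ∑ v ∈ V', x w v := by
      apply Finset.sum_subset (Finset.subset_univ _)
      intro w _ hw
      apply Finset.sum_eq_zero
      intro v hv
      apply hfar
      intro ⟨hr, hd⟩
      exact hw (by simp only [hB, Finset.mem_filter]; exact ⟨Finset.mem_univ _, v, hv, hr, hd⟩)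
    calc (V'.card : ℝ) = ∑ v ∈ V', (1:ℝ) := by simp
      _ = ∑ v ∈ V', ∑ w, x w v := by
          apply Finset.sum_congr rfl; intro v _; exact (hclient v).symm
      _ = ∑ w ∈ B, ∑ v ∈ V', x w v := by rw [hswap, hres]
      _ ≤ ∑ w ∈ B, ∑ v, x w v := by
          apply Finset.sum_le_sum
          intro w _
          exact Finset.sum_le_sum_of_subset_of_nonneg (Finset.subset_univ _)
            (fun v _ _ => hx0 w v)
      _ ≤ ∑ w ∈ B, (L₀:ℝ) * y w := Finset.sum_le_sum fun w _ => hcap w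
  -- A and B are disjoint
  have hAB : Disjoint A B := by
    rw [Finset.disjoint_left]
    intro w hwA hwB
    simp only [hA, Finset.mem_biUnion] at hwA
    obtain ⟨u, hu, hw⟩ := hwA
    simp only [hball, Finset.mem_filter] at hw
    obtain ⟨-, hr, hd⟩ := hw
    simp only [hB, Finset.mem_filter] at hwB
    obtain ⟨-, v, hv, hr', hd'⟩ := hwB
    have hvP : P v := by simpa [hV'] using hv
    rcases hvP u hu with h | h
    · exact h (hr.trans hr')
    · have := reachable_dist_triangle hr hr'
      omega
  -- combine
  have hunion : ∑ w ∈ A, y w + ∑ w ∈ B, y w ≤ (k : ℝ) := by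
    rw [← Finset.sum_union hAB, ← hsum]
    exact Finset.sum_le_sum_of_subset_of_nonneg (Finset.subset_univ _) (fun v _ _ => hy0 v)
  have hBy : (V'.card : ℝ) / (L₀:ℝ) ≤ ∑ w ∈ B, y w := by
    rw [div_le_iff₀ hL0]
    calc (V'.card : ℝ) ≤ ∑ w ∈ B, (L₀:ℝ) * y w := claim2
      _ = (∑ w ∈ B, y w) * (L₀:ℝ) := by
          rw [Finset.sum_mul]; exact Finset.sum_congr rfl fun w _ => mul_comm _ _
  have : (k:ℝ) < (k:ℝ) := by
    calc (k:ℝ) < (V₀.card : ℝ) + ({v : V | P v}.ncard : ℝ) / (L₀:ℝ) := hbig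
      _ = (V₀.card : ℝ) + (V'.card : ℝ) / (L₀:ℝ) := by rw [hncard]
      _ ≤ ∑ w ∈ A, y w + ∑ w ∈ B, y w := add_le_add claim1 hBy
      _ ≤ (k:ℝ) := hunion
  exact absurd this (lt_irrefl _)
end

section
/- Let (x, y) be a δ-feasible assignment, let a, b ∈ V be distinct vertices with L(a) ≤ L(b), and let α be a real number with 0 < α ≤ min(y_a, 1 − y_b). Let (x', y') be the result of shifting α from a to b. Then (x', y') is a (δ + dist_G(a, b))-feasible assignment; for every vertex v ≠ b we have radius_{(x',y')}(v) ≤ radius_{(x,y)}(v); and radius_{(x',y')}(b) ≤ max(radius_{(x,y)}(a) + dist_G(a, b), radius_{(x,y)}(b)). -/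
/-- `radius_{(x,y)}(u)`: the greatest integer `i` such that some vertex `v` with
`dist_G(u, v) = i` has `x u v > 0` (and `0` if there is no such `i`). -/
noncomputable def lpRadius {V : Type} (G : SimpleGraph V) (x : V → V → ℝ) (u : V) : ℕ :=
  sSup {i : ℕ | ∃ v, G.dist u v = i ∧ 0 < x u v}

/-- The `x`-part of the result of shifting `α` from `a` to `b`: with `ε = α / y a`,
`x a v` decreases by `ε * x a v` and `x b v` increases by `ε * x a v` for every `v`. -/
noncomputable def shiftX {V : Type} [DecidableEq V] (x : V → V → ℝ) (y : V → ℝ)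
    (a b : V) (α : ℝ) : V → V → ℝ :=
  fun u v =>
    if u = a then x a v - (α / y a) * x a v
    else if u = b then x b v + (α / y a) * x a v
    else x u v

/-- The `y`-part of the result of shifting `α` from `a` to `b`:
`y a` decreases by `α` and `y b` increases by `α`. -/
noncomputable def shiftY {V : Type} [DecidableEq V] (y : V → ℝ) (a b : V) (α : ℝ) :
    V → ℝ :=
  fun u => if u = a then y a - α else if u = b then y b + α else y u

lemma lpRadius_bdd {V : Type} [Fintype V] (G : SimpleGraph V) (x : V → V → ℝ) (u : V) :
    BddAbove {i : ℕ | ∃ v, G.dist u v = i ∧ 0 < x u v} := by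
  refine ⟨Finset.univ.sup (G.dist u), ?_⟩
  rintro i ⟨v, rfl, -⟩
  exact Finset.le_sup (Finset.mem_univ v)

lemma dist_le_lpRadius {V : Type} [Fintype V] (G : SimpleGraph V) (x : V → V → ℝ)
    {u v : V} (h : 0 < x u v) : G.dist u v ≤ lpRadius G x u :=
  le_csSup (lpRadius_bdd G x u) ⟨v, rfl, h⟩

lemma sum_two_eq {V : Type} [Fintype V] [DecidableEq V] {a b : V} (hab : a ≠ b)
    (f g : V → ℝ) (h : ∀ u, u ≠ a → u ≠ b → f u = g u) (hfg : f a + f b = g a + g b) :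
    ∑ u, f u = ∑ u, g u := by
  have h0 : ∑ u ∈ ({a, b} : Finset V), (f u - g u) = ∑ u, (f u - g u) := by
    refine Finset.sum_subset (Finset.subset_univ _) ?_
    intro u _ hu
    simp only [Finset.mem_insert, Finset.mem_singleton, not_or] at hu
    rw [h u hu.1 hu.2, sub_self]
  rw [Finset.sum_pair hab] at h0
  have h1 : ∑ u, (f u - g u) = ∑ u, f u - ∑ u, g u := Finset.sum_sub_distrib f g
  linarith

/-- **Lemma 1, shifting.** Let `(x, y)` be a `δ`-feasible assignment, let
`a ≠ b` with `L a ≤ L b`, and let `0 < α ≤ min (y a) (1 - y b)`.  Then the result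
`(x', y')` of shifting `α` from `a` to `b` is `(δ + dist_G(a, b))`-feasible, the radius of
every vertex `v ≠ b` does not increase, and the radius of `b` is at most
`max (radius_{(x,y)}(a) + dist_G(a, b)) (radius_{(x,y)}(b))`. -/
theorem shifting_lemma {V : Type} [Fintype V] [DecidableEq V] (G : SimpleGraph V)
    (hG : G.Connected) (L : V → ℕ) (k δ : ℕ) (hδ : 0 < δ)
    (x : V → V → ℝ) (y : V → ℝ) (hfeas : LPFeasible G L k δ x y)
    (a b : V) (hab : a ≠ b) (hL : L a ≤ L b)
    (α : ℝ) (hα0 : 0 < α) (hα : α ≤ min (y a) (1 - y b)) :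
    LPFeasible G L k (δ + G.dist a b) (shiftX x y a b α) (shiftY y a b α) ∧
    (∀ v, v ≠ b → lpRadius G (shiftX x y a b α) v ≤ lpRadius G x v) ∧
    lpRadius G (shiftX x y a b α) b ≤
      max (lpRadius G x a + G.dist a b) (lpRadius G x b) := by
  obtain ⟨hx0, hy0, hsum, hxy, hcap, hone, hy1, hfar⟩ := hfeas
  have hαa : α ≤ y a := le_trans hα (min_le_left _ _)
  have hαb : α ≤ 1 - y b := le_trans hα (min_le_right _ _)
  have hya : 0 < y a := lt_of_lt_of_le hα0 hαa
  set ε := α / y a with hεdef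
  have hε0 : 0 < ε := div_pos hα0 hya
  have hε1 : ε ≤ 1 := (div_le_one hya).mpr hαa
  have hεy : ε * y a = α := div_mul_cancel₀ α hya.ne'
  have hXa : ∀ v, shiftX x y a b α a v = x a v - ε * x a v := fun v => by
    simp [shiftX, hεdef]
  have hXb : ∀ v, shiftX x y a b α b v = x b v + ε * x a v := fun v => by
    simp [shiftX, Ne.symm hab, hεdef]
  have hXo : ∀ u v, u ≠ a → u ≠ b → shiftX x y a b α u v = x u v := fun u v h1 h2 => by
    simp [shiftX, h1, h2]
  have hYa : shiftY y a b α a = y a - α := by simp [shiftY]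
  have hYb : shiftY y a b α b = y b + α := by simp [shiftY, Ne.symm hab]
  have hYo : ∀ u, u ≠ a → u ≠ b → shiftY y a b α u = y u := fun u h1 h2 => by
    simp [shiftY, h1, h2]
  have hfar' : ∀ u v, δ < G.dist u v → x u v = 0 := by
    intro u v h
    exact hfar u v (fun ⟨_, hd⟩ => absurd hd (not_le.mpr h))
  have hxpos : ∀ u v, 0 < shiftX x y a b α u v →
      (u = a ∧ 0 < x a v) ∨ (u = b ∧ (0 < x b v ∨ 0 < x a v)) ∨ (u ≠ a ∧ u ≠ b ∧ 0 < x u v) := by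
    intro u v h
    by_cases hua : u = a
    · subst hua
      rw [hXa] at h
      left
      refine ⟨rfl, ?_⟩
      by_contra hle
      have h0 : x u v = 0 := le_antisymm (not_lt.mp hle) (hx0 u v)
      rw [h0] at h; simp at h
    · by_cases hub : u = b
      · subst hub
        rw [hXb] at h
        right; left
        refine ⟨rfl, ?_⟩
        by_contra hle
        push_neg at hle
        have h1 : x u v = 0 := le_antisymm hle.1 (hx0 u v)
        have h2 : x a v = 0 := le_antisymm hle.2 (hx0 a v)
        rw [h1, h2] at h; simp at h
      · right; right
        rw [hXo u v hua hub] at h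
        exact ⟨hua, hub, h⟩
  refine ⟨⟨?_, ?_, ?_, ?_, ?_, ?_, ?_, ?_⟩, ?_, ?_⟩
  · -- x' nonneg
    intro u v
    by_cases h1 : u = a
    · subst h1; rw [hXa]; nlinarith [hx0 u v]
    · by_cases h2 : u = b
      · subst h2; rw [hXb]; have := hx0 u v; have := hx0 a v; nlinarith
      · rw [hXo u v h1 h2]; exact hx0 u v
  · -- y' nonneg
    intro u
    by_cases h1 : u = a
    · subst h1; rw [hYa]; linarith
    · by_cases h2 : u = b
      · subst h2; rw [hYb]; have := hy0 u; linarith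
      · rw [hYo u h1 h2]; exact hy0 u
  · -- sum y' = k
    rw [← hsum]
    refine sum_two_eq hab _ _ (fun u h1 h2 => hYo u h1 h2) ?_
    rw [hYa, hYb]; ring
  · -- x' ≤ y'
    intro u v
    by_cases h1 : u = a
    · subst h1; rw [hXa, hYa]; nlinarith [hxy u v]
    · by_cases h2 : u = b
      · subst h2; rw [hXb, hYb]; nlinarith [hxy u v, hxy a v, hx0 a v]
      · rw [hXo u v h1 h2, hYo u h1 h2]; exact hxy u v
  · -- capacity
    intro u
    by_cases hua : u = a
    · subst hua
      rw [hYa, Finset.sum_congr rfl fun v _ => hXa v,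
        Finset.sum_congr rfl (fun v _ => by ring : ∀ v ∈ Finset.univ,
          x u v - ε * x u v = (1 - ε) * x u v), ← Finset.mul_sum]
      have h1 := hcap u
      have h2 : (0:ℝ) ≤ 1 - ε := by linarith
      nlinarith
    · by_cases hub : u = b
      · subst hub
        rw [hYb, Finset.sum_congr rfl fun v _ => hXb v, Finset.sum_add_distrib,
          ← Finset.mul_sum]
        have h1 := hcap u
        have h2 := hcap a
        have hLa : (L a : ℝ) ≤ (L u : ℝ) := Nat.cast_le.mpr hL
        have hLb0 : (0:ℝ) ≤ (L u : ℝ) := Nat.cast_nonneg _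
        have hsa : (0:ℝ) ≤ ∑ v, x a v := Finset.sum_nonneg fun v _ => hx0 a v
        calc ∑ v, x u v + ε * ∑ v, x a v
            ≤ (L u : ℝ) * y u + ε * ((L a : ℝ) * y a) := by nlinarith
          _ ≤ (L u : ℝ) * y u + (L u : ℝ) * α := by nlinarith
          _ = (L u : ℝ) * (y u + α) := by ring
      · rw [hYo u hua hub, Finset.sum_congr rfl fun v _ => hXo u v hua hub]
        exact hcap u
  · -- assignment sum
    intro v
    rw [← hone v]
    refine sum_two_eq hab _ _ (fun u h1 h2 => hXo u v h1 h2) ?_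
    rw [hXa, hXb]; ring
  · -- y' ≤ 1
    intro u
    by_cases h1 : u = a
    · subst h1; rw [hYa]; have := hy1 u; linarith
    · by_cases h2 : u = b
      · subst h2; rw [hYb]; linarith
      · rw [hYo u h1 h2]; exact hy1 u
  · -- far
    intro u v h
    have hreach : G.Reachable u v := hG.preconnected u v
    have hd : δ + G.dist a b < G.dist u v := by
      by_contra hle
      exact h ⟨hreach, not_lt.mp hle⟩
    by_cases h1 : u = a
    · subst h1
      rw [hXa, hfar' u v (by omega)]; ring
    · by_cases h2 : u = b
      · subst h2
        have hbv : x u v = 0 := hfar' u v (by omega)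
        have hav : x a v = 0 := by
          refine hfar' a v ?_
          have htri := hG.dist_triangle (u := u) (v := a) (w := v)
          have hc : G.dist a u = G.dist u a := SimpleGraph.dist_comm
          omega
        rw [hXb, hbv, hav]; ring
      · rw [hXo u v h1 h2]
        exact hfar' u v (by omega)
  · -- radius v ≠ b
    intro v hvb
    refine csSup_le' ?_
    rintro i ⟨w, rfl, hpos⟩
    rcases hxpos v w hpos with ⟨rfl, hp⟩ | ⟨rfl, _⟩ | ⟨_, _, hp⟩
    · exact dist_le_lpRadius G x hp
    · exact absurd rfl hvb
    · exact dist_le_lpRadius G x hp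
  · -- radius b
    refine csSup_le' ?_
    rintro i ⟨w, rfl, hpos⟩
    rcases hxpos b w hpos with ⟨rfl, _⟩ | ⟨-, hp | hp⟩ | ⟨_, hb, _⟩
    · exact absurd rfl hab
    · exact le_max_of_le_right (dist_le_lpRadius G x hp)
    · refine le_max_of_le_left ?_
      have h1 : G.dist a w ≤ lpRadius G x a := dist_le_lpRadius G x hp
      have htri := hG.dist_triangle (u := b) (v := a) (w := w)
      have hc : G.dist a b = G.dist b a := SimpleGraph.dist_comm
      omega
    · exact absurd rfl hb
end

section
/- Let (x, y) be a δ-feasible assignment, let V_0 ⊆ V and let d = max_{a,b ∈ V_0} dist_G(a, b). After performing group shifting on V_0, the resulting assignment (x', y') is (δ + d)-feasible, at most one vertex of V_0 has a fractional y'-value (a value strictly between 0 and 1), and for every v ∈ V \ V_0 we have radius_{(x',y')}(v) ≤ radius_{(x,y)}(v). -/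
/-- `y v` is fractional: strictly between `0` and `1`. -/
def Frac {V : Type} (y : V → ℝ) (v : V) : Prop := 0 < y v ∧ y v < 1

/-- One step of the group-shifting procedure on `V₀`, whose elements are enumerated as
`vs 0, …, vs (ℓ-1)` in order of non-decreasing capacities: if at least two enumerated
vertices have fractional `y`-values, let `a` be the smallest and `b` the greatest index of
a vertex with fractional `y`-value, and shift `min (y (vs a)) (1 - y (vs b))` from `vs a`
to `vs b`. -/
def GroupStep {V : Type} [DecidableEq V] {ℓ : ℕ} (vs : Fin ℓ → V)
    (p q : (V → V → ℝ) × (V → ℝ)) : Prop :=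
  ∃ a b : Fin ℓ, a < b ∧ Frac p.2 (vs a) ∧ Frac p.2 (vs b) ∧
    (∀ c : Fin ℓ, Frac p.2 (vs c) → a ≤ c ∧ c ≤ b) ∧
    q.1 = shiftX p.1 p.2 (vs a) (vs b) (min (p.2 (vs a)) (1 - p.2 (vs b))) ∧
    q.2 = shiftY p.2 (vs a) (vs b) (min (p.2 (vs a)) (1 - p.2 (vs b)))

set_option linter.unusedSectionVars false

section Aux
variable {V : Type} [Fintype V] [DecidableEq V]

lemma shiftY_apply (y : V → ℝ) {a b : V} (hab : a ≠ b) (α : ℝ) (u : V) :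
    shiftY y a b α u = y u + ((if u = a then -α else 0) + (if u = b then α else 0)) := by
  unfold shiftY
  split_ifs with h1 h2 <;> subst_vars <;> first | exact absurd rfl hab | ring

lemma sum_shiftY (y : V → ℝ) {a b : V} (hab : a ≠ b) (α : ℝ) :
    ∑ u, shiftY y a b α u = ∑ u, y u := by
  simp [shiftY_apply y hab, Finset.sum_add_distrib]

lemma shiftX_apply (x : V → V → ℝ) (y : V → ℝ) {a b : V} (hab : a ≠ b) (α : ℝ) (u v : V) :
    shiftX x y a b α u v
      = x u v + ((if u = a then -((α / y a) * x a v) else 0)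
        + (if u = b then (α / y a) * x a v else 0)) := by
  unfold shiftX
  split_ifs with h1 h2 <;> subst_vars <;> first | exact absurd rfl hab | ring

lemma sum_shiftX_col (x : V → V → ℝ) (y : V → ℝ) {a b : V} (hab : a ≠ b) (α : ℝ) (v : V) :
    ∑ u, shiftX x y a b α u v = ∑ u, x u v := by
  simp [shiftX_apply x y hab, Finset.sum_add_distrib]

/-- The invariant maintained during group shifting. -/
def ShiftInv (G : SimpleGraph V) (L : V → ℕ) (k δ : ℕ) (V₀ : Finset V)
    (x : V → V → ℝ) (p : (V → V → ℝ) × (V → ℝ)) : Prop :=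
  (∀ u v, 0 ≤ p.1 u v) ∧ (∀ u, 0 ≤ p.2 u) ∧ (∑ u, p.2 u = (k : ℝ)) ∧
  (∀ u v, p.1 u v ≤ p.2 u) ∧ (∀ u, ∑ v, p.1 u v ≤ (L u : ℝ) * p.2 u) ∧
  (∀ v, ∑ u, p.1 u v = 1) ∧ (∀ u, p.2 u ≤ 1) ∧
  (∀ u v, p.1 u v ≠ 0 → G.dist u v ≤ δ ∨ (u ∈ V₀ ∧ ∃ w ∈ V₀, G.dist w v ≤ δ)) ∧
  (∀ u, u ∉ V₀ → p.1 u = x u)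

lemma shift_step (G : SimpleGraph V) (L : V → ℕ) (k δ : ℕ) (V₀ : Finset V)
    (x : V → V → ℝ) {ℓ : ℕ} (vs : Fin ℓ → V) (hinj : Function.Injective vs)
    (hrange : ∀ v, v ∈ V₀ ↔ ∃ i, vs i = v) (hmono : Monotone fun i => L (vs i))
    (p : (V → V → ℝ) × (V → ℝ)) (hp : ShiftInv G L k δ V₀ x p)
    (h2 : 1 < {c : Fin ℓ | Frac p.2 (vs c)}.ncard) :
    ∃ q, GroupStep vs p q ∧ ShiftInv G L k δ V₀ x q ∧
      {c : Fin ℓ | Frac q.2 (vs c)}.ncard < {c : Fin ℓ | Frac p.2 (vs c)}.ncard := by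
  classical
  obtain ⟨hx0, hy0, hyk, hxy, hcap, hcol, hy1, hdist, hrow⟩ := hp
  set S : Finset (Fin ℓ) := Finset.univ.filter (fun c => Frac p.2 (vs c)) with hS
  have hcoe : {c : Fin ℓ | Frac p.2 (vs c)} = ↑S := by ext c; simp [hS]
  have hcard : 1 < S.card := by rwa [hcoe, Set.ncard_coe_finset] at h2
  have hne : S.Nonempty := Finset.card_pos.mp (by omega)
  set i := S.min' hne with hi
  set j := S.max' hne with hj
  have hij : i < j := S.min'_lt_max'_of_card hcard
  have hfi : Frac p.2 (vs i) := (Finset.mem_filter.mp (S.min'_mem hne)).2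
  have hfj : Frac p.2 (vs j) := (Finset.mem_filter.mp (S.max'_mem hne)).2
  have hbetween : ∀ c, Frac p.2 (vs c) → i ≤ c ∧ c ≤ j := fun c hc =>
    ⟨S.min'_le c (Finset.mem_filter.mpr ⟨Finset.mem_univ c, hc⟩),
     S.le_max' c (Finset.mem_filter.mpr ⟨Finset.mem_univ c, hc⟩)⟩
  set a := vs i with ha
  set b := vs j with hb
  have hab : a ≠ b := fun h => absurd (hinj h) hij.ne
  have haV : a ∈ V₀ := (hrange a).mpr ⟨i, rfl⟩
  have hbV : b ∈ V₀ := (hrange b).mpr ⟨j, rfl⟩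
  set α := min (p.2 a) (1 - p.2 b) with hα
  obtain ⟨hya, hya1⟩ := hfi
  obtain ⟨hyb, hyb1⟩ := hfj
  have hα0 : 0 < α := lt_min hya (by linarith)
  have hαa : α ≤ p.2 a := min_le_left _ _
  have hαb : α ≤ 1 - p.2 b := min_le_right _ _
  have hε0 : 0 ≤ α / p.2 a := div_nonneg hα0.le hya.le
  have hε1 : α / p.2 a ≤ 1 := (div_le_one hya).mpr hαa
  have hεa : (α / p.2 a) * p.2 a = α := div_mul_cancel₀ α hya.ne'
  refine ⟨(shiftX p.1 p.2 a b α, shiftY p.2 a b α),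
    ⟨i, j, hij, ⟨hya, hya1⟩, ⟨hyb, hyb1⟩, hbetween, rfl, rfl⟩, ?_, ?_⟩
  · refine ⟨?_, ?_, ?_, ?_, ?_, ?_, ?_, ?_, ?_⟩
    · -- nonneg x'
      intro u v
      dsimp only
      unfold shiftX
      split_ifs with h1 h2
      · nlinarith [mul_nonneg (sub_nonneg.mpr hε1) (hx0 a v)]
      · exact add_nonneg (hx0 b v) (mul_nonneg hε0 (hx0 a v))
      · exact hx0 u v
    · -- nonneg y'
      intro u
      dsimp only
      unfold shiftY
      split_ifs with h1 h2
      · linarith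
      · linarith [hy0 b]
      · exact hy0 u
    · dsimp only; rw [sum_shiftY p.2 hab α]; exact hyk
    · -- x' ≤ y'
      intro u v
      dsimp only
      unfold shiftX shiftY
      split_ifs with h1 h2
      · nlinarith [mul_le_mul_of_nonneg_left (hxy a v) (sub_nonneg.mpr hε1)]
      · nlinarith [mul_le_mul_of_nonneg_left (hxy a v) hε0, hxy b v]
      · exact hxy u v
    · -- capacity
      intro u
      dsimp only
      by_cases h1 : u = a
      · subst h1
        have hx' : ∀ v, shiftX p.1 p.2 a b α a v = p.1 a v - (α / p.2 a) * p.1 a v := by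
          intro v; simp [shiftX]
        have hy' : shiftY p.2 a b α a = p.2 a - α := by simp [shiftY]
        rw [hy']
        calc ∑ v, shiftX p.1 p.2 a b α a v
            = ∑ v, p.1 a v - (α / p.2 a) * ∑ v, p.1 a v := by
              rw [Finset.sum_congr rfl fun v _ => hx' v, Finset.sum_sub_distrib,
                ← Finset.mul_sum]
          _ ≤ (L a : ℝ) * (p.2 a - α) := by
              have hprod := mul_le_mul_of_nonneg_left (hcap a) (sub_nonneg.mpr hε1)
              have h3 : (L a : ℝ) * ((α / p.2 a) * p.2 a) = (L a : ℝ) * α := by rw [hεa]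
              nlinarith [h3, hprod]
      · by_cases h2 : u = b
        · subst h2
          have hx' : ∀ v, shiftX p.1 p.2 a b α b v = p.1 b v + (α / p.2 a) * p.1 a v := by
            intro v; simp [shiftX, Ne.symm hab]
          have hy' : shiftY p.2 a b α b = p.2 b + α := by simp [shiftY, Ne.symm hab]
          rw [hy']
          have hLab : (L a : ℝ) ≤ (L b : ℝ) := Nat.cast_le.mpr (hmono hij.le)
          calc ∑ v, shiftX p.1 p.2 a b α b v
              = ∑ v, p.1 b v + (α / p.2 a) * ∑ v, p.1 a v := by
                rw [Finset.sum_congr rfl fun v _ => hx' v, Finset.sum_add_distrib,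
                  ← Finset.mul_sum]
            _ ≤ (L b : ℝ) * (p.2 b + α) := by
                have h4 := mul_le_mul_of_nonneg_left (hcap a) hε0
                have h5 : (L a : ℝ) * ((α / p.2 a) * p.2 a) = (L a : ℝ) * α := by rw [hεa]
                have h6 : (L a : ℝ) * α ≤ (L b : ℝ) * α :=
                  mul_le_mul_of_nonneg_right hLab hα0.le
                nlinarith [hcap b, h4, h5, h6]
        · have hx' : ∀ v, shiftX p.1 p.2 a b α u v = p.1 u v := by
            intro v; simp [shiftX, h1, h2]
          have hy' : shiftY p.2 a b α u = p.2 u := by simp [shiftY, h1, h2]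
          rw [hy', Finset.sum_congr rfl fun v _ => hx' v]
          exact hcap u
    · intro v; dsimp only; rw [sum_shiftX_col p.1 p.2 hab α v]; exact hcol v
    · -- y' ≤ 1
      intro u
      dsimp only
      unfold shiftY
      split_ifs with h1 h2
      · linarith [hy1 a]
      · linarith
      · exact hy1 u
    · -- distance invariant
      intro u v huv
      dsimp only at huv
      unfold shiftX at huv
      split_ifs at huv with h1 h2
      · subst h1
        have hxa : p.1 a v ≠ 0 := by intro h; apply huv; rw [h]; ring
        exact hdist a v hxa
      · subst h2
        by_cases hbv : p.1 b v ≠ 0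
        · exact hdist b v hbv
        · push_neg at hbv
          have hxa : p.1 a v ≠ 0 := by intro h; apply huv; rw [hbv, h]; ring
          rcases hdist a v hxa with h | h
          · exact Or.inr ⟨hbV, a, haV, h⟩
          · exact Or.inr ⟨hbV, h.2⟩
      · exact hdist u v huv
    · -- rows outside V₀ unchanged
      intro u hu
      dsimp only
      have h1 : u ≠ a := fun h => hu (h ▸ haV)
      have h2 : u ≠ b := fun h => hu (h ▸ hbV)
      funext v
      simp only [shiftX, h1, h2, if_false]
      exact congrFun (hrow u hu) v
  · -- measure decrease
    dsimp only
    have hsub : {c : Fin ℓ | Frac (shiftY p.2 a b α) (vs c)} ⊆ {c | Frac p.2 (vs c)} := by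
      intro c hc
      rcases eq_or_ne c i with rfl | hci
      · exact (Finset.mem_filter.mp (S.min'_mem hne)).2
      rcases eq_or_ne c j with rfl | hcj
      · exact (Finset.mem_filter.mp (S.max'_mem hne)).2
      · have h1 : vs c ≠ a := fun h => hci (hinj h)
        have h2 : vs c ≠ b := fun h => hcj (hinj h)
        have heq : shiftY p.2 a b α (vs c) = p.2 (vs c) := by simp [shiftY, h1, h2]
        simpa [Set.mem_setOf_eq, Frac, heq] using hc
    have hwit : ∃ c₀, Frac p.2 (vs c₀) ∧ ¬ Frac (shiftY p.2 a b α) (vs c₀) := by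
      rcases min_cases (p.2 a) (1 - p.2 b) with ⟨hmin, _⟩ | ⟨hmin, _⟩
      · refine ⟨i, (Finset.mem_filter.mp (S.min'_mem hne)).2, ?_⟩
        have hz : shiftY p.2 a b α (vs i) = 0 := by
          have h' : shiftY p.2 a b α a = p.2 a - α := by simp [shiftY]
          rw [← ha, h', hα, hmin]; ring
        simp [Frac, hz]
      · refine ⟨j, (Finset.mem_filter.mp (S.max'_mem hne)).2, ?_⟩
        have hz : shiftY p.2 a b α (vs j) = 1 := by
          have h' : shiftY p.2 a b α b = p.2 b + α := by simp [shiftY, Ne.symm hab]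
          rw [← hb, h', hα, hmin]; ring
        simp [Frac, hz]
    obtain ⟨c₀, hc₀, hc₀'⟩ := hwit
    exact Set.ncard_lt_ncard ((Set.ssubset_iff_of_subset hsub).mpr ⟨c₀, hc₀, hc₀'⟩)
      (Set.toFinite _)

end Aux

/-- **Lemma 2, group shifting.** Let `(x, y)` be a `δ`-feasible assignment,
let `V₀ ⊆ V` be enumerated as `vs 0, …, vs (ℓ-1)` with non-decreasing capacities and let
`d` bound the pairwise distances in `V₀`.  Group shifting on `V₀` terminates, i.e. some
assignment `(x', y')` with at most one fractional `y'`-value on `V₀` is reachable from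
`(x, y)` by group-shifting steps, and any such `(x', y')` obtained by the procedure is
`(δ + d)`-feasible, has at most one vertex of `V₀` with fractional `y'`-value, and
satisfies `radius_{(x',y')}(v) ≤ radius_{(x,y)}(v)` for every `v ∈ V ∖ V₀`. -/
theorem group_shifting_lemma {V : Type} [Fintype V] [DecidableEq V] (G : SimpleGraph V)
    (hG : G.Connected) (L : V → ℕ) (k δ : ℕ) (hδ : 0 < δ)
    (x : V → V → ℝ) (y : V → ℝ) (hfeas : LPFeasible G L k δ x y)
    (V₀ : Finset V) {ℓ : ℕ} (vs : Fin ℓ → V) (hinj : Function.Injective vs)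
    (hrange : ∀ v, v ∈ V₀ ↔ ∃ i, vs i = v)
    (hmono : Monotone fun i => L (vs i))
    (d : ℕ) (hd : ∀ a ∈ V₀, ∀ b ∈ V₀, G.dist a b ≤ d) :
    ∃ p' : (V → V → ℝ) × (V → ℝ),
      Relation.ReflTransGen (GroupStep vs) (x, y) p' ∧
      LPFeasible G L k (δ + d) p'.1 p'.2 ∧
      (∀ u ∈ V₀, ∀ v ∈ V₀, Frac p'.2 u → Frac p'.2 v → u = v) ∧
      (∀ v ∉ V₀, lpRadius G p'.1 v ≤ lpRadius G x v) := by
  classical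
  obtain ⟨h1, h2, h3, h4, h5, h6, h7, h8⟩ := hfeas
  have hInv0 : ShiftInv G L k δ V₀ x (x, y) := by
    refine ⟨h1, h2, h3, h4, h5, h6, h7, ?_, fun u _ => rfl⟩
    intro u v h
    left
    by_contra hgt
    exact h (h8 u v fun hc => hgt hc.2)
  have main : ∀ n : ℕ, ∀ p : (V → V → ℝ) × (V → ℝ), ShiftInv G L k δ V₀ x p →
      {c : Fin ℓ | Frac p.2 (vs c)}.ncard ≤ n →
      ∃ p', Relation.ReflTransGen (GroupStep vs) p p' ∧ ShiftInv G L k δ V₀ x p' ∧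
        {c : Fin ℓ | Frac p'.2 (vs c)}.ncard ≤ 1 := by
    intro n
    induction n with
    | zero => exact fun p hp hc => ⟨p, .refl, hp, le_trans hc (by omega)⟩
    | succ n ih =>
      intro p hp hc
      by_cases hone : {c : Fin ℓ | Frac p.2 (vs c)}.ncard ≤ 1
      · exact ⟨p, .refl, hp, hone⟩
      · obtain ⟨q, hstep, hq, hlt⟩ :=
          shift_step G L k δ V₀ x vs hinj hrange hmono p hp (by omega)
        obtain ⟨p', hrt, hp', hone'⟩ := ih q hq (by omega)
        exact ⟨p', .head hstep hrt, hp', hone'⟩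
  obtain ⟨p', hrt, hp', hone⟩ := main _ (x, y) hInv0 le_rfl
  obtain ⟨hx0, hy0, hyk, hxy, hcap, hcol, hy1, hdist, hrow⟩ := hp'
  refine ⟨p', hrt, ⟨hx0, hy0, hyk, hxy, hcap, hcol, hy1, ?_⟩, ?_, ?_⟩
  · -- (δ + d)-feasibility: distance condition
    intro u v hcon
    by_contra hne
    apply hcon
    refine ⟨hG.preconnected u v, ?_⟩
    rcases hdist u v hne with h | ⟨huV, w, hwV, hw⟩
    · exact le_trans h (Nat.le_add_right _ _)
    · calc G.dist u v ≤ G.dist u w + G.dist w v := hG.dist_triangle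
        _ ≤ d + δ := add_le_add (hd u huV w hwV) hw
        _ = δ + d := Nat.add_comm _ _
  · -- at most one fractional vertex of V₀
    intro u huV v hvV hu hv
    obtain ⟨i, rfl⟩ := (hrange u).mp huV
    obtain ⟨j, rfl⟩ := (hrange v).mp hvV
    have hij : i = j := (Set.ncard_le_one (Set.toFinite _)).mp hone i hu j hv
    rw [hij]
  · -- radii outside V₀ are unchanged
    intro v hv
    have hr : p'.1 v = x v := hrow v hv
    have : lpRadius G p'.1 v = lpRadius G x v := by unfold lpRadius; rw [hr]
    exact this.le
end

section
/- Let (x, y) be a δ-feasible assignment and let F be an acyclic y-flow from S to T. Let (x', y') be the result of the chain shifting operation on (x, y) according to F, and let d be the greatest distance in G between two vertices joined by an arc of G_F. Then (x', y') is a (δ + d)-feasible assignment; for each vertex v of indegree zero in G_F, radius_{(x',y')}(v) ≤ radius_{(x,y)}(v); for every other vertex v, radius_{(x',y')}(v) ≤ max(radius_{(x,y)}(v), max over in-neighbors a of v in G_F of (radius_{(x,y)}(a) + dist_G(a, v))); and for every v ∈ V \ (S ∪ T), y'_v = y_v. -/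
/-- `u` and `v` occur as consecutive vertices (in this order) on the flow path `q`. -/
def ConsecOn {V : Type} (q : ℝ × List V) (u v : V) : Prop :=
  (u, v) ∈ q.2.zip q.2.tail

instance {V : Type} [DecidableEq V] (q : ℝ × List V) (u v : V) :
    Decidable (ConsecOn q u v) :=
  inferInstanceAs (Decidable ((u, v) ∈ q.2.zip q.2.tail))

/-- The arc relation of the auxiliary directed graph `G_F` of a flow `F`: there is an arc
`(u, v)` iff some path of `F` contains `u` and `v` as consecutive vertices in this
order. -/
def ArcOf {V : Type} (F : Finset (ℝ × List V)) (u v : V) : Prop :=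
  ∃ q ∈ F, ConsecOn q u v

/-- `F` is a `y`-flow from `S` to `T` (for disjoint `S, T ⊆ V`): a finite set of flow
paths `(α, v₁, …, v_t)` with `α > 0`, `v₁ ∈ S`, `v_t ∈ T`, `L v₁ ≤ L v_t`, every internal
vertex `v` satisfying `v ∉ S ∪ T`, `y v = 1` and `L v₁ ≤ L v`, such that at most `y v`
units leave each `v ∈ S`, at most `1 - y v` units enter each `v ∈ T`, and at most `1` unit
passes through each `v ∉ S ∪ T`. -/
def IsYFlow {V : Type} [DecidableEq V] (L : V → ℕ) (y : V → ℝ) (S T : Set V)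
    (F : Finset (ℝ × List V)) : Prop :=
  (∀ q ∈ F, 0 < q.1 ∧ ∃ (v₁ vt : V) (mid : List V),
      q.2 = v₁ :: (mid ++ [vt]) ∧ v₁ ∈ S ∧ vt ∈ T ∧ L v₁ ≤ L vt ∧
      ∀ v ∈ mid, v ∉ S ∧ v ∉ T ∧ y v = 1 ∧ L v₁ ≤ L v) ∧
  (∀ v ∈ S, ∑ q ∈ F.filter (fun q => q.2.head? = some v), q.1 ≤ y v) ∧
  (∀ v ∈ T, ∑ q ∈ F.filter (fun q => q.2.getLast? = some v), q.1 ≤ 1 - y v) ∧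
  (∀ v : V, v ∉ S → v ∉ T → ∑ q ∈ F.filter (fun q => v ∈ q.2), q.1 ≤ 1)

/-- The flow `F` is acyclic: its auxiliary directed graph `G_F` has no directed cycle. -/
def AcyclicFlow {V : Type} (F : Finset (ℝ × List V)) : Prop :=
  ∀ v : V, ¬ Relation.TransGen (ArcOf F) v v

/-- `f_F(u, v)`: the total of `α` over the paths of `F` containing `u, v` consecutively
(the fractional number of centers transferred from `u` to `v`). -/
noncomputable def fF {V : Type} [DecidableEq V] (F : Finset (ℝ × List V)) (u v : V) : ℝ :=
  ∑ q ∈ F.filter (fun q => ConsecOn q u v), q.1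

/-- `fl_F(u, v)`: the total of `L s * α` over the paths of `F` containing `u, v`
consecutively, `s` being the starting vertex of the path (the fractional number of clients
transferred from `u` to `v`). -/
noncomputable def flF {V : Type} [DecidableEq V] (L : V → ℕ) (F : Finset (ℝ × List V))
    (u v : V) : ℝ :=
  ∑ q ∈ F.filter (fun q => ConsecOn q u v), (((q.2.head?.map L).getD 0 : ℕ) : ℝ) * q.1

/-- The `x`-part of the result of the chain-shifting operation along the flow `F`:
`x u v` gains `fl_F(a, u) * x a v / (L a * y a)` for every in-neighbour `a` of `u` in
`G_F` and loses `fl_F(u, a) * x u v / (L u * y u)` for every out-neighbour `a`. -/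
noncomputable def chainX {V : Type} [Fintype V] [DecidableEq V] (L : V → ℕ)
    (F : Finset (ℝ × List V)) (x : V → V → ℝ) (y : V → ℝ) : V → V → ℝ :=
  fun u v => x u v
    + ∑ a : V, flF L F a u * x a v / ((L a : ℝ) * y a)
    - (∑ a : V, flF L F u a) * x u v / ((L u : ℝ) * y u)

/-- The `y`-part of the result of the chain-shifting operation along the flow `F`:
each source `s ∈ S` loses the total `f_F`-outflow of `s` and each sink `t ∈ T` gains the
total `f_F`-inflow of `t`. -/
noncomputable def chainY {V : Type} [Fintype V] [DecidableEq V]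
    (F : Finset (ℝ × List V)) (y : V → ℝ) (S T : Finset V) : V → ℝ :=
  fun u =>
    if u ∈ S then y u - ∑ a : V, fF F u a
    else if u ∈ T then y u + ∑ a : V, fF F a u
    else y u

set_option linter.unusedSectionVars false
namespace ChainShift
variable {V : Type} [DecidableEq V]

lemma mem_zip_tail {l : List V} {u a : V} :
    (u, a) ∈ l.zip l.tail ↔ ∃ (i : ℕ) (h : i + 1 < l.length), l[i] = u ∧ l[i+1] = a := by
  rw [List.mem_iff_getElem]
  constructor
  · rintro ⟨i, hi, hget⟩
    have hi' : i + 1 < l.length := by simp [Nat.min_def] at hi; omega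
    refine ⟨i, hi', ?_, ?_⟩
    · have := List.getElem_zip (l := l) (l' := l.tail) (i := i) (h := hi)
      rw [this] at hget
      exact (Prod.mk.injEq .. ▸ hget).1
    · have := List.getElem_zip (l := l) (l' := l.tail) (i := i) (h := hi)
      rw [this] at hget
      have h2 := (Prod.mk.injEq .. ▸ hget).2
      rwa [List.getElem_tail] at h2
  · rintro ⟨i, hi, h1, h2⟩
    have hiz : i < (l.zip l.tail).length := by simp [Nat.min_def]; omega
    refine ⟨i, hiz, ?_⟩
    rw [List.getElem_zip, List.getElem_tail]
    exact Prod.ext h1 h2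

lemma mem_dropLast_iff {l : List V} {u : V} :
    u ∈ l.dropLast ↔ ∃ (i : ℕ) (h : i + 1 < l.length), l[i] = u := by
  rw [List.mem_iff_getElem]
  constructor
  · rintro ⟨i, hi, hget⟩
    have hi' : i + 1 < l.length := by simp at hi; omega
    exact ⟨i, hi', by rw [← List.getElem_dropLast]; exact hget⟩
  · rintro ⟨i, hi, hget⟩
    exact ⟨i, by simp; omega, by rw [List.getElem_dropLast]; exact hget⟩

lemma mem_tail_iff {l : List V} {u : V} :
    u ∈ l.tail ↔ ∃ (i : ℕ) (h : i + 1 < l.length), l[i+1] = u := by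
  rw [List.mem_iff_getElem]
  constructor
  · rintro ⟨i, hi, hget⟩
    have hi' : i + 1 < l.length := by simp at hi; omega
    exact ⟨i, hi', by rw [← List.getElem_tail]; exact hget⟩
  · rintro ⟨i, hi, hget⟩
    exact ⟨i, by simp; omega, by rw [List.getElem_tail]; exact hget⟩

lemma zip_fst_mem {l : List V} {u a : V} (h : (u, a) ∈ l.zip l.tail) : u ∈ l.dropLast := by
  rw [mem_zip_tail] at h; obtain ⟨i, hi, h1, _⟩ := h
  exact mem_dropLast_iff.2 ⟨i, hi, h1⟩

lemma zip_snd_mem {l : List V} {u a : V} (h : (u, a) ∈ l.zip l.tail) : a ∈ l.tail := by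
  rw [mem_zip_tail] at h; obtain ⟨i, hi, _, h2⟩ := h
  exact mem_tail_iff.2 ⟨i, hi, h2⟩

lemma succ_unique {l : List V} (hl : l.Nodup) {u a b : V}
    (ha : (u, a) ∈ l.zip l.tail) (hb : (u, b) ∈ l.zip l.tail) : a = b := by
  rw [mem_zip_tail] at ha hb
  obtain ⟨i, hi, hi1, hi2⟩ := ha
  obtain ⟨j, hj, hj1, hj2⟩ := hb
  have : i = j := (hl.getElem_inj_iff).1 (hi1.trans hj1.symm)
  subst this; exact hi2.symm.trans hj2

lemma pred_unique {l : List V} (hl : l.Nodup) {u a b : V}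
    (ha : (a, u) ∈ l.zip l.tail) (hb : (b, u) ∈ l.zip l.tail) : a = b := by
  rw [mem_zip_tail] at ha hb
  obtain ⟨i, hi, hi1, hi2⟩ := ha
  obtain ⟨j, hj, hj1, hj2⟩ := hb
  have : i + 1 = j + 1 := (hl.getElem_inj_iff).1 (hi2.trans hj2.symm)
  have : i = j := by omega
  subst this; exact hi1.symm.trans hj1

lemma exists_succ {l : List V} {u : V} (h : u ∈ l.dropLast) : ∃ a, (u, a) ∈ l.zip l.tail := by
  rw [mem_dropLast_iff] at h; obtain ⟨i, hi, h1⟩ := h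
  exact ⟨l[i+1], mem_zip_tail.2 ⟨i, hi, h1, rfl⟩⟩

lemma exists_pred {l : List V} {u : V} (h : u ∈ l.tail) : ∃ a, (a, u) ∈ l.zip l.tail := by
  rw [mem_tail_iff] at h; obtain ⟨i, hi, h1⟩ := h
  exact ⟨l[i]'(by omega), mem_zip_tail.2 ⟨i, hi, rfl, h1⟩⟩

variable [Fintype V]

lemma sum_ite_succ {l : List V} (hl : l.Nodup) (u : V) (c : ℝ) :
    ∑ a : V, (if (u, a) ∈ l.zip l.tail then c else 0) =
      if u ∈ l.dropLast then c else 0 := by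
  by_cases h : u ∈ l.dropLast
  · obtain ⟨a₀, ha₀⟩ := exists_succ h
    rw [if_pos h, Finset.sum_eq_single a₀]
    · rw [if_pos ha₀]
    · intro b _ hb
      rw [if_neg (fun hb' => hb (succ_unique hl hb' ha₀))]
    · intro hu; exact absurd (Finset.mem_univ a₀) hu
  · rw [if_neg h]
    exact Finset.sum_eq_zero fun a _ => if_neg (fun ha => h (zip_fst_mem ha))

lemma sum_ite_pred {l : List V} (hl : l.Nodup) (u : V) (c : ℝ) :
    ∑ a : V, (if (a, u) ∈ l.zip l.tail then c else 0) =
      if u ∈ l.tail then c else 0 := by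
  by_cases h : u ∈ l.tail
  · obtain ⟨a₀, ha₀⟩ := exists_pred h
    rw [if_pos h, Finset.sum_eq_single a₀]
    · rw [if_pos ha₀]
    · intro b _ hb
      rw [if_neg (fun hb' => hb (pred_unique hl hb' ha₀))]
    · intro hu; exact absurd (Finset.mem_univ a₀) hu
  · rw [if_neg h]
    exact Finset.sum_eq_zero fun a _ => if_neg (fun ha => h (zip_snd_mem ha))

lemma chain'_zip {l : List V} {R : V → V → Prop} (h : ∀ p ∈ l.zip l.tail, R p.1 p.2) :
    l.Chain' R := by
  induction l with
  | nil => exact List.isChain_nil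
  | cons a l ih =>
    cases l with
    | nil => exact List.isChain_singleton _
    | cons b t =>
      apply List.isChain_cons_cons.2
      refine ⟨h (a, b) (by simp), ih ?_⟩
      intro p hp
      exact h p (by simp only [List.tail_cons] at hp ⊢; exact List.mem_cons_of_mem _ hp)

end ChainShift

namespace Flow
variable {V : Type} [Fintype V] [DecidableEq V] {L : V → ℕ} {y : V → ℝ}
  {S T : Finset V} {F : Finset (ℝ × List V)} {q : ℝ × List V} {u a b : V}

open ChainShift

/-- `L` of the head of a path. -/
def Lhead (L : V → ℕ) (q : ℝ × List V) : ℕ := (q.2.head?.map L).getD 0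

lemma path_nodup (hacyc : AcyclicFlow F) (hq : q ∈ F) : q.2.Nodup := by
  have hchain : q.2.Chain' (Relation.TransGen (ArcOf F)) := by
    apply chain'_zip
    intro p hp
    exact Relation.TransGen.single ⟨q, hq, show (p.1, p.2) ∈ _ from by simpa using hp⟩
  haveI : IsTrans V (Relation.TransGen (ArcOf F)) := ⟨fun _ _ _ h h' => h.trans h'⟩
  have hpw := (List.isChain_iff_pairwise).1 hchain
  refine List.Pairwise.imp ?_ hpw
  intro c d h hcd
  exact hacyc c (hcd ▸ h)

lemma shape (hF : IsYFlow L y ↑S ↑T F) (hq : q ∈ F) :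
    ∃ s mid t, q.2 = (s :: mid) ++ [t] ∧ s ∈ S ∧ t ∈ T ∧ L s ≤ L t ∧
      (∀ v ∈ mid, v ∉ S ∧ v ∉ T ∧ y v = 1 ∧ L s ≤ L v) := by
  obtain ⟨s, t, mid, heq, hs, ht, hLst, hmid⟩ := (hF.1 q hq).2
  refine ⟨s, mid, t, by simp [heq], by simpa using hs, by simpa using ht, hLst, ?_⟩
  intro v hv
  obtain ⟨h1, h2, h3, h4⟩ := hmid v hv
  exact ⟨by simpa using h1, by simpa using h2, h3, h4⟩

lemma alpha_pos (hF : IsYFlow L y ↑S ↑T F) (hq : q ∈ F) : 0 < q.1 := (hF.1 q hq).1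

lemma tail_facts (hF : IsYFlow L y ↑S ↑T F) (hST : Disjoint S T) (hq : q ∈ F)
    (hu : u ∈ q.2.tail) : u ∉ S ∧ Lhead L q ≤ L u ∧ (u ∈ T → q.2.getLast? = some u) := by
  obtain ⟨s, mid, t, heq, hs, ht, hLst, hmid⟩ := shape hF hq
  have htl : q.2.tail = mid ++ [t] := by rw [heq]; rfl
  have hhd : Lhead L q = L s := by rw [Lhead, heq]; rfl
  rw [htl] at hu
  rw [hhd]
  rcases List.mem_append.1 hu with h | h
  · obtain ⟨h1, h2, _, h4⟩ := hmid u h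
    exact ⟨h1, h4, fun hT => absurd hT h2⟩
  · have hut : u = t := by simpa using h
    subst hut
    exact ⟨fun hS => (Finset.disjoint_left.1 hST) hS ht, hLst,
      fun _ => by rw [heq, List.getLast?_concat]⟩

lemma dropLast_facts (hF : IsYFlow L y ↑S ↑T F) (hST : Disjoint S T) (hq : q ∈ F)
    (hu : u ∈ q.2.dropLast) : u ∉ T ∧ Lhead L q ≤ L u ∧ (u ∈ S → q.2.head? = some u) := by
  obtain ⟨s, mid, t, heq, hs, ht, hLst, hmid⟩ := shape hF hq
  have hdl : q.2.dropLast = s :: mid := by rw [heq, List.dropLast_concat]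
  have hhd : Lhead L q = L s := by rw [Lhead, heq]; rfl
  rw [hdl] at hu
  rw [hhd]
  rcases List.mem_cons.1 hu with h | h
  · subst h
    exact ⟨fun hT => (Finset.disjoint_left.1 hST) hs hT, le_refl _,
      fun _ => by rw [heq]; rfl⟩
  · obtain ⟨h1, h2, _, h4⟩ := hmid u h
    exact ⟨h2, h4, fun hS => absurd hS h1⟩

lemma head_mem_dropLast_of (hF : IsYFlow L y ↑S ↑T F) (hq : q ∈ F)
    (hu : q.2.head? = some u) : u ∈ q.2.dropLast := by
  obtain ⟨s, mid, t, heq, _⟩ := shape hF hq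
  have hus : u = s := by rw [heq] at hu; simpa using hu.symm
  subst hus
  rw [heq, List.dropLast_concat]; simp

lemma last_mem_tail_of (hF : IsYFlow L y ↑S ↑T F) (hq : q ∈ F)
    (hu : q.2.getLast? = some u) : u ∈ q.2.tail := by
  obtain ⟨s, mid, t, heq, _⟩ := shape hF hq
  have hut : u = t := by rw [heq, List.getLast?_concat] at hu; simpa using hu.symm
  subst hut
  rw [heq]; simp

lemma mem_internal (hF : IsYFlow L y ↑S ↑T F) (hq : q ∈ F) (hu : u ∈ q.2)
    (hS : u ∉ S) (hT : u ∉ T) : y u = 1 ∧ u ∈ q.2.tail ∧ u ∈ q.2.dropLast := by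
  obtain ⟨s, mid, t, heq, hs, ht, hLst, hmid⟩ := shape hF hq
  have hum : u ∈ mid := by
    rw [heq] at hu
    simp only [List.cons_append, List.mem_cons, List.mem_append, List.mem_singleton,
      List.not_mem_nil, or_false] at hu
    rcases hu with h | h | h
    · exact absurd (h ▸ hs) hS
    · exact h
    · exact absurd (h ▸ ht) hT
  refine ⟨(hmid u hum).2.2.1, ?_, ?_⟩
  · show u ∈ q.2.tail
    rw [heq]
    simp only [List.cons_append, List.tail_cons, List.mem_append]
    exact Or.inl hum
  · rw [heq, List.dropLast_concat]
    exact List.mem_cons_of_mem _ hum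

end Flow
namespace Flow
variable {V : Type} [Fintype V] [DecidableEq V] {L : V → ℕ} {y : V → ℝ}
  {S T : Finset V} {F : Finset (ℝ × List V)} {q : ℝ × List V} {u a b : V}

open ChainShift

lemma sum_ite_succ' (hl : q.2.Nodup) (u : V) (c : ℝ) :
    ∑ a : V, (if ConsecOn q u a then c else 0) = if u ∈ q.2.dropLast then c else 0 := by
  exact ChainShift.sum_ite_succ (l := q.2) hl u c

lemma sum_ite_pred' (hl : q.2.Nodup) (u : V) (c : ℝ) :
    ∑ a : V, (if ConsecOn q a u then c else 0) = if u ∈ q.2.tail then c else 0 := by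
  exact ChainShift.sum_ite_pred (l := q.2) hl u c

lemma fF_nonneg (hF : IsYFlow L y ↑S ↑T F) : 0 ≤ fF F a b :=
  Finset.sum_nonneg fun q hq => (alpha_pos hF (Finset.mem_filter.1 hq).1).le

lemma flF_eq : flF L F a b = ∑ q ∈ F.filter (fun q => ConsecOn q a b), (Lhead L q : ℝ) * q.1 := rfl

lemma flF_nonneg (hF : IsYFlow L y ↑S ↑T F) : 0 ≤ flF L F a b := by
  rw [flF_eq]
  exact Finset.sum_nonneg fun q hq =>
    mul_nonneg (Nat.cast_nonneg _) (alpha_pos hF (Finset.mem_filter.1 hq).1).le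

lemma sum_fF_out (hacyc : AcyclicFlow F) (u : V) :
    ∑ a, fF F u a = ∑ q ∈ F, (if u ∈ q.2.dropLast then q.1 else 0) := by
  unfold fF
  calc ∑ a, ∑ q ∈ F.filter (fun q => ConsecOn q u a), q.1
      = ∑ a, ∑ q ∈ F, if ConsecOn q u a then q.1 else 0 :=
        Finset.sum_congr rfl fun a _ => Finset.sum_filter _ _
    _ = ∑ q ∈ F, ∑ a, if ConsecOn q u a then q.1 else 0 := Finset.sum_comm
    _ = ∑ q ∈ F, (if u ∈ q.2.dropLast then q.1 else 0) :=
        Finset.sum_congr rfl fun q hq => sum_ite_succ' (path_nodup hacyc hq) u q.1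

lemma sum_fF_in (hacyc : AcyclicFlow F) (u : V) :
    ∑ a, fF F a u = ∑ q ∈ F, (if u ∈ q.2.tail then q.1 else 0) := by
  unfold fF
  calc ∑ a, ∑ q ∈ F.filter (fun q => ConsecOn q a u), q.1
      = ∑ a, ∑ q ∈ F, if ConsecOn q a u then q.1 else 0 :=
        Finset.sum_congr rfl fun a _ => Finset.sum_filter _ _
    _ = ∑ q ∈ F, ∑ a, if ConsecOn q a u then q.1 else 0 := Finset.sum_comm
    _ = ∑ q ∈ F, (if u ∈ q.2.tail then q.1 else 0) :=
        Finset.sum_congr rfl fun q hq => sum_ite_pred' (path_nodup hacyc hq) u q.1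

lemma sum_flF_out (hacyc : AcyclicFlow F) (u : V) :
    ∑ a, flF L F u a = ∑ q ∈ F, (if u ∈ q.2.dropLast then (Lhead L q : ℝ) * q.1 else 0) := by
  simp only [flF_eq]
  calc ∑ a, ∑ q ∈ F.filter (fun q => ConsecOn q u a), (Lhead L q : ℝ) * q.1
      = ∑ a, ∑ q ∈ F, if ConsecOn q u a then (Lhead L q : ℝ) * q.1 else 0 :=
        Finset.sum_congr rfl fun a _ => Finset.sum_filter _ _
    _ = ∑ q ∈ F, ∑ a, if ConsecOn q u a then (Lhead L q : ℝ) * q.1 else 0 := Finset.sum_comm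
    _ = _ := Finset.sum_congr rfl fun q hq => sum_ite_succ' (path_nodup hacyc hq) u _

lemma sum_flF_in (hacyc : AcyclicFlow F) (u : V) :
    ∑ a, flF L F a u = ∑ q ∈ F, (if u ∈ q.2.tail then (Lhead L q : ℝ) * q.1 else 0) := by
  simp only [flF_eq]
  calc ∑ a, ∑ q ∈ F.filter (fun q => ConsecOn q a u), (Lhead L q : ℝ) * q.1
      = ∑ a, ∑ q ∈ F, if ConsecOn q a u then (Lhead L q : ℝ) * q.1 else 0 :=
        Finset.sum_congr rfl fun a _ => Finset.sum_filter _ _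
    _ = ∑ q ∈ F, ∑ a, if ConsecOn q a u then (Lhead L q : ℝ) * q.1 else 0 := Finset.sum_comm
    _ = _ := Finset.sum_congr rfl fun q hq => sum_ite_pred' (path_nodup hacyc hq) u _

lemma flF_le_left (hF : IsYFlow L y ↑S ↑T F) (hST : Disjoint S T) :
    flF L F a b ≤ (L a : ℝ) * fF F a b := by
  rw [flF_eq, fF, Finset.mul_sum]
  refine Finset.sum_le_sum fun q hq => ?_
  obtain ⟨hqF, hc⟩ := Finset.mem_filter.1 hq
  exact mul_le_mul_of_nonneg_right
    (Nat.cast_le.2 (dropLast_facts hF hST hqF (zip_fst_mem hc)).2.1) (alpha_pos hF hqF).le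

lemma flF_le_right (hF : IsYFlow L y ↑S ↑T F) (hST : Disjoint S T) :
    flF L F a b ≤ (L b : ℝ) * fF F a b := by
  rw [flF_eq, fF, Finset.mul_sum]
  refine Finset.sum_le_sum fun q hq => ?_
  obtain ⟨hqF, hc⟩ := Finset.mem_filter.1 hq
  exact mul_le_mul_of_nonneg_right
    (Nat.cast_le.2 (tail_facts hF hST hqF (zip_snd_mem hc)).2.1) (alpha_pos hF hqF).le

lemma out_T_zero (hF : IsYFlow L y ↑S ↑T F) (hST : Disjoint S T) (hu : u ∈ T) :
    fF F u a = 0 ∧ flF L F u a = 0 := by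
  have hfe : F.filter (fun q => ConsecOn q u a) = ∅ :=
    Finset.filter_eq_empty_iff.2 fun {q} hq hc =>
      (dropLast_facts hF hST hq (zip_fst_mem hc)).1 hu
  constructor <;> [rw [fF, hfe]; rw [flF_eq, hfe]] <;> exact Finset.sum_empty

lemma in_S_zero (hF : IsYFlow L y ↑S ↑T F) (hST : Disjoint S T) (hu : u ∈ S) :
    fF F a u = 0 ∧ flF L F a u = 0 := by
  have hfe : F.filter (fun q => ConsecOn q a u) = ∅ :=
    Finset.filter_eq_empty_iff.2 fun {q} hq hc =>
      (tail_facts hF hST hq (zip_snd_mem hc)).1 hu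
  constructor <;> [rw [fF, hfe]; rw [flF_eq, hfe]] <;> exact Finset.sum_empty

lemma self_zero (hacyc : AcyclicFlow F) : fF F u u = 0 ∧ flF L F u u = 0 := by
  have hfe : F.filter (fun q => ConsecOn q u u) = ∅ :=
    Finset.filter_eq_empty_iff.2 fun {q} hq hc =>
      hacyc u (Relation.TransGen.single ⟨q, hq, hc⟩)
  constructor <;> [rw [fF, hfe]; rw [flF_eq, hfe]] <;> exact Finset.sum_empty

lemma arc_of_fF_ne (h : fF F a b ≠ 0) : ArcOf F a b := by
  by_contra harc
  exact h (by
    rw [fF, Finset.filter_eq_empty_iff.2 fun {q} hq hc => harc ⟨q, hq, hc⟩]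
    exact Finset.sum_empty)

lemma arc_of_flF_ne (h : flF L F a b ≠ 0) : ArcOf F a b := by
  by_contra harc
  exact h (by
    rw [flF_eq, Finset.filter_eq_empty_iff.2 fun {q} hq hc => harc ⟨q, hq, hc⟩]
    exact Finset.sum_empty)

lemma out_f_eq_head (hF : IsYFlow L y ↑S ↑T F) (hST : Disjoint S T) (hacyc : AcyclicFlow F)
    (hu : u ∈ S) :
    ∑ a, fF F u a = ∑ q ∈ F.filter (fun q => q.2.head? = some u), q.1 := by
  rw [sum_fF_out hacyc, Finset.sum_filter]
  refine Finset.sum_congr rfl fun q hq => ?_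
  by_cases hm : u ∈ q.2.dropLast
  · rw [if_pos hm, if_pos ((dropLast_facts hF hST hq hm).2.2 hu)]
  · rw [if_neg hm, if_neg (fun hh => hm (head_mem_dropLast_of hF hq hh))]

lemma in_f_eq_last (hF : IsYFlow L y ↑S ↑T F) (hST : Disjoint S T) (hacyc : AcyclicFlow F)
    (hu : u ∈ T) :
    ∑ a, fF F a u = ∑ q ∈ F.filter (fun q => q.2.getLast? = some u), q.1 := by
  rw [sum_fF_in hacyc, Finset.sum_filter]
  refine Finset.sum_congr rfl fun q hq => ?_
  by_cases hm : u ∈ q.2.tail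
  · rw [if_pos hm, if_pos ((tail_facts hF hST hq hm).2.2 hu)]
  · rw [if_neg hm, if_neg (fun hh => hm (last_mem_tail_of hF hq hh))]

lemma out_f_le_y (hF : IsYFlow L y ↑S ↑T F) (hST : Disjoint S T) (hacyc : AcyclicFlow F)
    (hy : ∀ v, 0 ≤ y v) (u : V) : ∑ a, fF F u a ≤ y u := by
  by_cases huS : u ∈ S
  · rw [out_f_eq_head hF hST hacyc huS]
    exact hF.2.1 u (Finset.mem_coe.2 huS)
  by_cases huT : u ∈ T
  · rw [sum_fF_out hacyc]
    rw [Finset.sum_congr rfl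
      (fun q hq => if_neg (fun hm => (dropLast_facts hF hST hq hm).1 huT))]
    simpa using hy u
  by_cases hex : ∃ q ∈ F, u ∈ q.2.dropLast
  · obtain ⟨q0, hq0, hm0⟩ := hex
    have hy1 : y u = 1 :=
      (mem_internal hF hq0 (List.dropLast_subset _ hm0) huS huT).1
    rw [sum_fF_out hacyc, hy1]
    calc ∑ q ∈ F, (if u ∈ q.2.dropLast then q.1 else 0)
        ≤ ∑ q ∈ F, (if u ∈ q.2 then q.1 else 0) := by
          refine Finset.sum_le_sum fun q hq => ?_
          by_cases hm : u ∈ q.2.dropLast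
          · rw [if_pos hm, if_pos (List.dropLast_subset _ hm)]
          · rw [if_neg hm]
            by_cases hm2 : u ∈ q.2
            · rw [if_pos hm2]; exact (alpha_pos hF hq).le
            · rw [if_neg hm2]
      _ = ∑ q ∈ F.filter (fun q => u ∈ q.2), q.1 := (Finset.sum_filter _ _).symm
      _ ≤ 1 := hF.2.2.2 u huS huT
  · push_neg at hex
    rw [sum_fF_out hacyc,
      Finset.sum_congr rfl (fun q hq => if_neg (hex q hq))]
    simpa using hy u

lemma fF_le_y (hF : IsYFlow L y ↑S ↑T F) (hST : Disjoint S T) (hacyc : AcyclicFlow F)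
    (hy : ∀ v, 0 ≤ y v) : fF F a b ≤ y a :=
  le_trans (Finset.single_le_sum (f := fun b' => fF F a b')
    (fun b' _ => fF_nonneg hF) (Finset.mem_univ b)) (out_f_le_y hF hST hacyc hy a)

lemma flF_le_Ly (hF : IsYFlow L y ↑S ↑T F) (hST : Disjoint S T) (hacyc : AcyclicFlow F)
    (hy : ∀ v, 0 ≤ y v) : flF L F a b ≤ (L a : ℝ) * y a :=
  le_trans (flF_le_left hF hST)
    (mul_le_mul_of_nonneg_left (fF_le_y hF hST hacyc hy) (Nat.cast_nonneg _))

lemma in_f_le (hF : IsYFlow L y ↑S ↑T F) (hST : Disjoint S T) (hacyc : AcyclicFlow F)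
    (hu : u ∈ T) : ∑ a, fF F a u ≤ 1 - y u := by
  rw [in_f_eq_last hF hST hacyc hu]
  exact hF.2.2.1 u (Finset.mem_coe.2 hu)

lemma tail_iff_dropLast (hF : IsYFlow L y ↑S ↑T F) (hq : q ∈ F)
    (hS : u ∉ S) (hT : u ∉ T) : u ∈ q.2.tail ↔ u ∈ q.2.dropLast := by
  constructor
  · intro h
    exact (mem_internal hF hq (List.mem_of_mem_tail h) hS hT).2.2
  · intro h
    exact (mem_internal hF hq (List.dropLast_subset _ h) hS hT).2.1

lemma conservation_f (hF : IsYFlow L y ↑S ↑T F) (hacyc : AcyclicFlow F)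
    (hS : u ∉ S) (hT : u ∉ T) : ∑ a, fF F a u = ∑ a, fF F u a := by
  rw [sum_fF_in hacyc, sum_fF_out hacyc]
  exact Finset.sum_congr rfl fun q hq =>
    if_congr (tail_iff_dropLast hF hq hS hT) rfl rfl

lemma conservation_fl (hF : IsYFlow L y ↑S ↑T F) (hacyc : AcyclicFlow F)
    (hS : u ∉ S) (hT : u ∉ T) : ∑ a, flF L F a u = ∑ a, flF L F u a := by
  rw [sum_flF_in hacyc, sum_flF_out hacyc]
  exact Finset.sum_congr rfl fun q hq =>
    if_congr (tail_iff_dropLast hF hq hS hT) rfl rfl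

lemma internal_y_one (hF : IsYFlow L y ↑S ↑T F) (hq : q ∈ F) (hc : ConsecOn q a b)
    (hS : u ∉ S) (hT : u ∉ T) (hu : u = a ∨ u = b) : y u = 1 := by
  rcases hu with rfl | rfl
  · exact (mem_internal hF hq (List.dropLast_subset _ (zip_fst_mem hc)) hS hT).1
  · exact (mem_internal hF hq (List.mem_of_mem_tail (zip_snd_mem hc)) hS hT).1

lemma sum_S_out (hF : IsYFlow L y ↑S ↑T F) (hST : Disjoint S T) (hacyc : AcyclicFlow F) :
    ∑ u ∈ S, ∑ a, fF F u a = ∑ q ∈ F, q.1 := by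
  rw [Finset.sum_congr rfl (fun u hu => out_f_eq_head hF hST hacyc hu)]
  rw [Finset.sum_congr rfl (fun u (_ : u ∈ S) => Finset.sum_filter _ _), Finset.sum_comm]
  refine Finset.sum_congr rfl fun q hq => ?_
  obtain ⟨s, mid, t, heq, hs, ht, _⟩ := shape hF hq
  have hh : q.2.head? = some s := by rw [heq]; rfl
  rw [Finset.sum_eq_single_of_mem s hs]
  · rw [if_pos hh]
  · intro u _ hus
    rw [hh, if_neg (fun h => hus (by injection h with h'; exact h'.symm))]

lemma sum_T_in (hF : IsYFlow L y ↑S ↑T F) (hST : Disjoint S T) (hacyc : AcyclicFlow F) :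
    ∑ u ∈ T, ∑ a, fF F a u = ∑ q ∈ F, q.1 := by
  rw [Finset.sum_congr rfl (fun u hu => in_f_eq_last hF hST hacyc hu)]
  rw [Finset.sum_congr rfl (fun u (_ : u ∈ T) => Finset.sum_filter _ _), Finset.sum_comm]
  refine Finset.sum_congr rfl fun q hq => ?_
  obtain ⟨s, mid, t, heq, hs, ht, _⟩ := shape hF hq
  have hh : q.2.getLast? = some t := by rw [heq, List.getLast?_concat]
  rw [Finset.sum_eq_single_of_mem t ht]
  · rw [if_pos hh]
  · intro u _ hut
    rw [hh, if_neg (fun h => hut (by injection h with h'; exact h'.symm))]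

lemma flF_S_eq (hF : IsYFlow L y ↑S ↑T F) (hST : Disjoint S T) (hu : u ∈ S) :
    flF L F u a = (L u : ℝ) * fF F u a := by
  rw [flF_eq, fF, Finset.mul_sum]
  refine Finset.sum_congr rfl fun q hq => ?_
  obtain ⟨hqF, hc⟩ := Finset.mem_filter.1 hq
  have hh : q.2.head? = some u := (dropLast_facts hF hST hqF (zip_fst_mem hc)).2.2 hu
  have hL : Lhead L q = L u := by rw [Lhead, hh]; rfl
  rw [hL]

lemma not_mem_zero (h : ∀ q ∈ F, u ∉ q.2) : flF L F a u = 0 ∧ flF L F u a = 0 := by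
  have h1 : F.filter (fun q => ConsecOn q a u) = ∅ := Finset.filter_eq_empty_iff.2
      (fun {q} hq hc => h q hq (List.mem_of_mem_tail (zip_snd_mem hc)))
  have h2 : F.filter (fun q => ConsecOn q u a) = ∅ := Finset.filter_eq_empty_iff.2
      (fun {q} hq hc => h q hq (List.dropLast_subset _ (zip_fst_mem hc)))
  constructor
  · rw [flF_eq, h1]; exact Finset.sum_empty
  · rw [flF_eq, h2]; exact Finset.sum_empty

end Flow
open Flow ChainShift in
/-- **Lemma 3, chain shifting.** Let `(x', y')` be the result of the chain
shifting operation on a `δ`-feasible assignment `(x, y)` according to an acyclic `y`-flow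
`F` from `S` to `T`, and let `d` be the greatest distance in `G` between two vertices
joined by an arc of `G_F`.  Then `(x', y')` is `(δ + d)`-feasible; every vertex of
indegree zero in `G_F` has `radius_{(x',y')}(v) ≤ radius_{(x,y)}(v)`; every vertex
satisfies `radius_{(x',y')}(v) ≤ max (radius_{(x,y)}(v))
(max_{a ∈ N^in(v)} (radius_{(x,y)}(a) + dist_G(a, v)))`; and `y' v = y v` for every
`v ∈ V ∖ (S ∪ T)`. -/
theorem chain_shifting_lemma {V : Type} [Fintype V] [DecidableEq V] (G : SimpleGraph V)
    (hG : G.Connected) (L : V → ℕ) (k δ : ℕ) (hδ : 0 < δ)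
    (x : V → V → ℝ) (y : V → ℝ) (hfeas : LPFeasible G L k δ x y)
    (S T : Finset V) (hST : Disjoint S T)
    (F : Finset (ℝ × List V)) (hF : IsYFlow L y ↑S ↑T F) (hacyc : AcyclicFlow F)
    (d : ℕ) (hd : ∀ u v, ArcOf F u v → G.dist u v ≤ d) :
    LPFeasible G L k (δ + d) (chainX L F x y) (chainY F y S T) ∧
    (∀ v : V, (∀ a, ¬ ArcOf F a v) →
      lpRadius G (chainX L F x y) v ≤ lpRadius G x v) ∧
    (∀ v : V, lpRadius G (chainX L F x y) v ≤
      max (lpRadius G x v)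
        (sSup {n : ℕ | ∃ a, ArcOf F a v ∧ n = lpRadius G x a + G.dist a v})) ∧
    (∀ v : V, v ∉ S → v ∉ T → chainY F y S T v = y v) := by
  obtain ⟨hx0, hy0, hyk, hxy, hcap, hsum1, hy1, hdist⟩ := hfeas
  -- notation
  set A : V → V → ℝ := fun u v => ∑ a, flF L F a u * x a v / ((L a : ℝ) * y a) with hA
  set B : V → ℝ := fun u => ∑ a, flF L F u a with hB
  have hxdef : ∀ u v, chainX L F x y u v = x u v + A u v - B u * x u v / ((L u : ℝ) * y u) :=
    fun u v => rfl
  -- basic positivity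
  have hA0 : ∀ u v, 0 ≤ A u v := fun u v =>
    Finset.sum_nonneg fun a _ => div_nonneg (mul_nonneg (flF_nonneg hF) (hx0 a v))
      (mul_nonneg (Nat.cast_nonneg _) (hy0 a))
  have hB0 : ∀ u, 0 ≤ B u := fun u => Finset.sum_nonneg fun a _ => flF_nonneg hF
  have hBle : ∀ u, B u ≤ (L u : ℝ) * y u := fun u =>
    le_trans (Finset.sum_le_sum fun a _ => flF_le_left hF hST)
      (by
        rw [← Finset.mul_sum]
        exact mul_le_mul_of_nonneg_left (out_f_le_y hF hST hacyc hy0 u) (Nat.cast_nonneg _))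
  have hsub0 : ∀ u v, 0 ≤ B u * x u v / ((L u : ℝ) * y u) := fun u v =>
    div_nonneg (mul_nonneg (hB0 u) (hx0 u v)) (mul_nonneg (Nat.cast_nonneg _) (hy0 u))
  have hsuble : ∀ u v, B u * x u v / ((L u : ℝ) * y u) ≤ x u v := by
    intro u v
    rcases eq_or_lt_of_le (mul_nonneg (Nat.cast_nonneg (α := ℝ) (L u)) (hy0 u)) with hc | hc
    · rw [← hc, div_zero]; exact hx0 u v
    · rw [div_le_iff₀ hc]
      calc B u * x u v ≤ ((L u : ℝ) * y u) * x u v :=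
            mul_le_mul_of_nonneg_right (hBle u) (hx0 u v)
        _ = x u v * ((L u : ℝ) * y u) := by ring
  have hx'0 : ∀ u v, 0 ≤ chainX L F x y u v := by
    intro u v
    rw [hxdef]
    have := hsuble u v
    have := hA0 u v
    linarith
  have hx'le : ∀ u v, chainX L F x y u v ≤ x u v + A u v := by
    intro u v; rw [hxdef]; have := hsub0 u v; linarith
  -- per-term bounds on A
  have hterm_fF : ∀ a u v, flF L F a u * x a v / ((L a : ℝ) * y a) ≤ fF F a u := by
    intro a u v
    rcases eq_or_lt_of_le (mul_nonneg (Nat.cast_nonneg (α := ℝ) (L a)) (hy0 a)) with hc | hc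
    · rw [← hc, div_zero]; exact fF_nonneg hF
    · rw [div_le_iff₀ hc]
      calc flF L F a u * x a v ≤ ((L a : ℝ) * fF F a u) * y a :=
            mul_le_mul (flF_le_left hF hST) (hxy a v) (hx0 a v)
              (mul_nonneg (Nat.cast_nonneg _) (fF_nonneg hF))
        _ = fF F a u * ((L a : ℝ) * y a) := by ring
  have hterm_x : ∀ a u v, flF L F a u * x a v / ((L a : ℝ) * y a) ≤ x a v := by
    intro a u v
    rcases eq_or_lt_of_le (mul_nonneg (Nat.cast_nonneg (α := ℝ) (L a)) (hy0 a)) with hc | hc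
    · rw [← hc, div_zero]; exact hx0 a v
    · rw [div_le_iff₀ hc]
      calc flF L F a u * x a v ≤ ((L a : ℝ) * y a) * x a v :=
            mul_le_mul_of_nonneg_right (flF_le_Ly hF hST hacyc hy0) (hx0 a v)
        _ = x a v * ((L a : ℝ) * y a) := by ring
  -- part 4 : y unchanged outside S ∪ T
  have part4 : ∀ v : V, v ∉ S → v ∉ T → chainY F y S T v = y v := by
    intro v hvS hvT
    simp only [chainY, if_neg hvS, if_neg hvT]
  -- y' values
  have hyS : ∀ u ∈ S, chainY F y S T u = y u - ∑ a, fF F u a := by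
    intro u hu; simp only [chainY, if_pos hu]
  have hyT : ∀ u ∈ T, chainY F y S T u = y u + ∑ a, fF F a u := by
    intro u hu
    have huS : u ∉ S := fun h => (Finset.disjoint_left.1 hST) h hu
    simp only [chainY, if_neg huS, if_pos hu]
  have hy'0 : ∀ u, 0 ≤ chainY F y S T u := by
    intro u
    by_cases huS : u ∈ S
    · rw [hyS u huS]
      have := out_f_le_y hF hST hacyc hy0 u
      linarith
    by_cases huT : u ∈ T
    · rw [hyT u huT]
      have : 0 ≤ ∑ a, fF F a u := Finset.sum_nonneg fun a _ => fF_nonneg hF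
      have := hy0 u
      linarith
    · rw [part4 u huS huT]; exact hy0 u
  have hy'1 : ∀ u, chainY F y S T u ≤ 1 := by
    intro u
    by_cases huS : u ∈ S
    · rw [hyS u huS]
      have : 0 ≤ ∑ a, fF F u a := Finset.sum_nonneg fun a _ => fF_nonneg hF
      have := hy1 u
      linarith
    by_cases huT : u ∈ T
    · rw [hyT u huT]
      have := in_f_le hF hST hacyc huT
      linarith
    · rw [part4 u huS huT]; exact hy1 u
  -- x' ≤ y'
  have hxy' : ∀ u v, chainX L F x y u v ≤ chainY F y S T u := by
    intro u v
    by_cases huS : u ∈ S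
    · -- incoming = 0
      have hAz : A u v = 0 := Finset.sum_eq_zero fun a _ => by
        rw [(in_S_zero hF hST huS).2, zero_mul, zero_div]
      have hBeq : B u = (L u : ℝ) * ∑ a, fF F u a := by
        rw [hB, Finset.mul_sum]
        exact Finset.sum_congr rfl fun a _ => flF_S_eq hF hST huS
      rw [hxdef, hAz, hyS u huS, hBeq]
      set P := ∑ a, fF F u a with hP
      have hP0 : 0 ≤ P := Finset.sum_nonneg fun a _ => fF_nonneg hF
      have hPy : P ≤ y u := out_f_le_y hF hST hacyc hy0 u
      rcases Nat.eq_zero_or_pos (L u) with hL | hL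
      · have hxz : x u v = 0 := by
          have h1 : x u v ≤ ∑ w, x u w :=
            Finset.single_le_sum (fun w _ => hx0 u w) (Finset.mem_univ v)
          have h2 := hcap u
          rw [hL] at h2
          push_cast at h2
          have := hx0 u v
          have h4 : ∑ w, x u w ≤ 0 := by linarith [h2, mul_nonneg (le_refl (0:ℝ)) (hy0 u)]
          linarith
        rw [hxz, hL]
        push_cast
        simp
        linarith
      · have hLpos : (0:ℝ) < (L u : ℝ) := by exact_mod_cast hL
        rcases eq_or_lt_of_le (hy0 u) with hyz | hyz
        · have hxz : x u v = 0 := le_antisymm (by rw [hyz]; exact hxy u v) (hx0 u v)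
          have hPz : P = 0 := le_antisymm (by rw [hyz]; exact hPy) hP0
          rw [hxz, hPz, ← hyz]
          simp
        · have hrw : (L u : ℝ) * P * x u v / ((L u : ℝ) * y u) = P * x u v / y u := by
            rw [mul_assoc, mul_div_mul_left _ _ (ne_of_gt hLpos)]
          rw [hrw]
          have key : x u v + 0 - P * x u v / y u = x u v * (y u - P) / y u := by
            field_simp
            ring
          rw [key, div_le_iff₀ hyz]
          have h5 : x u v * (y u - P) ≤ y u * (y u - P) :=
            mul_le_mul_of_nonneg_right (hxy u v) (by linarith)
          nlinarith
    by_cases huT : u ∈ T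
    · have hBz : B u = 0 := Finset.sum_eq_zero fun a _ => (out_T_zero hF hST huT).2
      rw [hxdef, hBz, hyT u huT, zero_mul, zero_div, sub_zero]
      have hAle : A u v ≤ ∑ a, fF F a u :=
        Finset.sum_le_sum fun a _ => hterm_fF a u v
      have := hxy u v
      linarith
    · -- internal
      rw [part4 u huS huT]
      by_cases hexm : ∃ q ∈ F, u ∈ q.2
      · obtain ⟨q0, hq0, hm0⟩ := hexm
        have hyu1 : y u = 1 := (mem_internal hF hq0 hm0 huS huT).1
        have hAu : A u v ≤ 1 - x u v := by
          have hzero : flF L F u u * x u v / ((L u : ℝ) * y u) = 0 := by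
            rw [(self_zero hacyc).2, zero_mul, zero_div]
          have e1 : A u v = ∑ a ∈ Finset.univ.erase u,
              flF L F a u * x a v / ((L a : ℝ) * y a) := by
            rw [hA]
            exact (Finset.sum_erase _ (by
              rw [(self_zero hacyc).2, zero_mul, zero_div])).symm
          have e2 : ∑ a ∈ Finset.univ.erase u, flF L F a u * x a v / ((L a : ℝ) * y a)
              ≤ ∑ a ∈ Finset.univ.erase u, x a v :=
            Finset.sum_le_sum fun a _ => hterm_x a u v
          have e3 : ∑ a ∈ Finset.univ.erase u, x a v = 1 - x u v := by
            rw [Finset.sum_erase_eq_sub (Finset.mem_univ u), hsum1 v]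
          linarith [e1 ▸ e2, e3 ▸ e2]
        have := hx'le u v
        rw [hyu1]
        linarith
      · push_neg at hexm
        have hAz : A u v = 0 := Finset.sum_eq_zero fun a _ => by
          rw [(not_mem_zero hexm).1, zero_mul, zero_div]
        have hBz : B u = 0 := Finset.sum_eq_zero fun a _ => (not_mem_zero hexm).2
        rw [hxdef, hAz, hBz, zero_mul, zero_div]
        have := hxy u v
        linarith
  -- sum over u equals 1
  have hsum1' : ∀ v, ∑ u, chainX L F x y u v = 1 := by
    intro v
    have e0 : ∑ u, chainX L F x y u v =
        (∑ u, x u v) + (∑ u, A u v) - ∑ u, B u * x u v / ((L u : ℝ) * y u) := by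
      rw [← Finset.sum_add_distrib, ← Finset.sum_sub_distrib]
      exact Finset.sum_congr rfl fun u _ => hxdef u v
    have e1 : ∑ u, A u v = ∑ u, B u * x u v / ((L u : ℝ) * y u) := by
      have e2 : ∀ u, B u * x u v / ((L u : ℝ) * y u)
          = ∑ a, flF L F u a * x u v / ((L u : ℝ) * y u) := by
        intro u
        rw [hB, Finset.sum_mul, Finset.sum_div]
      rw [Finset.sum_congr rfl fun u _ => e2 u, hA]
      exact Finset.sum_comm
    rw [e0, e1, hsum1 v]
    ring
  -- sum of y' equals k
  have hyk' : ∑ u, chainY F y S T u = (k : ℝ) := by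
    have hsplit : ∀ g : V → ℝ, ∑ u, g u =
        (∑ u ∈ S, g u + ∑ u ∈ T, g u) + ∑ u ∈ Finset.univ \ (S ∪ T), g u := by
      intro g
      rw [← Finset.sum_union hST, ← Finset.sum_union (Finset.sdiff_disjoint.symm)]
      congr 1
      rw [Finset.union_comm, Finset.sdiff_union_of_subset (Finset.subset_univ _)]
    have hS' : ∑ u ∈ S, chainY F y S T u = ∑ u ∈ S, y u - ∑ q ∈ F, q.1 := by
      rw [Finset.sum_congr rfl hyS, Finset.sum_sub_distrib, sum_S_out hF hST hacyc]
    have hT' : ∑ u ∈ T, chainY F y S T u = ∑ u ∈ T, y u + ∑ q ∈ F, q.1 := by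
      rw [Finset.sum_congr rfl hyT, Finset.sum_add_distrib, sum_T_in hF hST hacyc]
    have hR' : ∑ u ∈ Finset.univ \ (S ∪ T), chainY F y S T u
        = ∑ u ∈ Finset.univ \ (S ∪ T), y u := by
      refine Finset.sum_congr rfl fun u hu => ?_
      rw [Finset.mem_sdiff, Finset.mem_union] at hu
      exact part4 u (fun h => hu.2 (Or.inl h)) (fun h => hu.2 (Or.inr h))
    have h1 := hsplit (chainY F y S T)
    have h2 := hsplit y
    rw [hS', hT', hR'] at h1
    rw [hyk] at h2
    rw [h1]
    linarith
  -- capacity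
  have hcolA : ∀ u, ∑ v, A u v
      = ∑ a, flF L F a u * (∑ v, x a v) / ((L a : ℝ) * y a) := by
    intro u
    rw [hA, Finset.sum_comm]
    exact Finset.sum_congr rfl fun a _ => by rw [Finset.mul_sum, Finset.sum_div]
  have hXsum : ∀ u, ∑ v, chainX L F x y u v =
      (∑ v, x u v) + (∑ a, flF L F a u * (∑ v, x a v) / ((L a : ℝ) * y a))
        - B u * (∑ v, x u v) / ((L u : ℝ) * y u) := by
    intro u
    rw [← hcolA u]
    have : B u * (∑ v, x u v) / ((L u : ℝ) * y u)
        = ∑ v, B u * x u v / ((L u : ℝ) * y u) := by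
      rw [Finset.mul_sum, Finset.sum_div]
    rw [this, ← Finset.sum_add_distrib, ← Finset.sum_sub_distrib]
    exact Finset.sum_congr rfl fun v _ => hxdef u v
  have htermcap : ∀ a u, flF L F a u * (∑ v, x a v) / ((L a : ℝ) * y a) ≤ flF L F a u := by
    intro a u
    rcases eq_or_lt_of_le (mul_nonneg (Nat.cast_nonneg (α := ℝ) (L a)) (hy0 a)) with hc | hc
    · rw [← hc, div_zero]; exact flF_nonneg hF
    · rw [div_le_iff₀ hc]
      exact mul_le_mul_of_nonneg_left (hcap a) (flF_nonneg hF)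
  have hINcap : ∀ u, ∑ a, flF L F a u * (∑ v, x a v) / ((L a : ℝ) * y a)
      ≤ ∑ a, flF L F a u := fun u => Finset.sum_le_sum fun a _ => htermcap a u
  have hIN0 : ∀ u, 0 ≤ ∑ a, flF L F a u * (∑ v, x a v) / ((L a : ℝ) * y a) := by
    intro u
    refine Finset.sum_nonneg fun a _ => div_nonneg (mul_nonneg (flF_nonneg hF) ?_)
      (mul_nonneg (Nat.cast_nonneg _) (hy0 a))
    exact Finset.sum_nonneg fun w _ => hx0 a w
  have hcap' : ∀ u, ∑ v, chainX L F x y u v ≤ (L u : ℝ) * chainY F y S T u := by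
    intro u
    rw [hXsum u]
    set P := ∑ v, x u v with hPdef
    have hP0 : 0 ≤ P := Finset.sum_nonneg fun w _ => hx0 u w
    have hPle : P ≤ (L u : ℝ) * y u := hcap u
    by_cases huS : u ∈ S
    · have hINz : ∑ a, flF L F a u * (∑ v, x a v) / ((L a : ℝ) * y a) = 0 :=
        Finset.sum_eq_zero fun a _ => by
          rw [(in_S_zero hF hST huS).2, zero_mul, zero_div]
      have hBeq : B u = (L u : ℝ) * ∑ a, fF F u a := by
        rw [hB, Finset.mul_sum]
        exact Finset.sum_congr rfl fun a _ => flF_S_eq hF hST huS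
      rw [hINz, hyS u huS, hBeq]
      set Pf := ∑ a, fF F u a with hPf
      have hPf0 : 0 ≤ Pf := Finset.sum_nonneg fun a _ => fF_nonneg hF
      have hPfy : Pf ≤ y u := out_f_le_y hF hST hacyc hy0 u
      rcases Nat.eq_zero_or_pos (L u) with hL | hL
      · have hPz : P = 0 := le_antisymm (by rw [hL] at hPle; simpa using hPle) hP0
        rw [hPz, hL]
        push_cast
        simp
      · have hLpos : (0:ℝ) < (L u : ℝ) := by exact_mod_cast hL
        rcases eq_or_lt_of_le (hy0 u) with hyz | hyz
        · have hPz : P = 0 := le_antisymm (by rw [← hyz, mul_zero] at hPle; exact hPle) hP0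
          have hPfz : Pf = 0 := le_antisymm (by rw [hyz]; exact hPfy) hPf0
          rw [hPz, hPfz, ← hyz]
          simp
        · have hrw : (L u : ℝ) * Pf * P / ((L u : ℝ) * y u) = Pf * P / y u := by
            rw [mul_assoc, mul_div_mul_left _ _ (ne_of_gt hLpos)]
          rw [hrw]
          have key : P + 0 - Pf * P / y u = P * (y u - Pf) / y u := by
            field_simp
            ring
          rw [key, div_le_iff₀ hyz]
          have h5 : P * (y u - Pf) ≤ ((L u : ℝ) * y u) * (y u - Pf) :=
            mul_le_mul_of_nonneg_right hPle (by linarith)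
          nlinarith
    by_cases huT : u ∈ T
    · have hBz : B u = 0 := Finset.sum_eq_zero fun a _ => (out_T_zero hF hST huT).2
      rw [hBz, hyT u huT, zero_mul, zero_div, sub_zero, mul_add]
      have h6 : ∑ a, flF L F a u ≤ (L u : ℝ) * ∑ a, fF F a u := by
        rw [Finset.mul_sum]
        exact Finset.sum_le_sum fun a _ => flF_le_right hF hST
      have := hINcap u
      linarith
    · rw [part4 u huS huT]
      by_cases hexm : ∃ q ∈ F, u ∈ q.2
      · obtain ⟨q0, hq0, hm0⟩ := hexm
        have hyu1 : y u = 1 := (mem_internal hF hq0 hm0 huS huT).1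
        have hcons : ∑ a, flF L F a u = B u := by
          rw [hB]; exact conservation_fl hF hacyc huS huT
        have hBL : B u ≤ (L u : ℝ) := by
          have := hBle u
          rw [hyu1, mul_one] at this
          exact this
        have hPL : P ≤ (L u : ℝ) := by
          have := hPle
          rw [hyu1, mul_one] at this
          exact this
        rw [hyu1, mul_one]
        rcases Nat.eq_zero_or_pos (L u) with hL | hL
        · have hLz : (L u : ℝ) = 0 := by exact_mod_cast hL
          have hPz : P = 0 := le_antisymm (by rw [hLz] at hPL; exact hPL) hP0
          have hBz : B u = 0 := le_antisymm (by rw [hLz] at hBL; exact hBL) (hB0 u)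
          have hINz : ∑ a, flF L F a u * (∑ v, x a v) / ((L a : ℝ) * y a) = 0 :=
            le_antisymm (le_trans (hINcap u) (le_of_eq (hcons.trans hBz))) (hIN0 u)
          rw [hPz, hBz, hINz, hLz]
          simp
        · have hLpos : (0:ℝ) < (L u : ℝ) := by exact_mod_cast hL
          have hIN : ∑ a, flF L F a u * (∑ v, x a v) / ((L a : ℝ) * y a) ≤ B u :=
            le_trans (hINcap u) (le_of_eq hcons)
          have hPB : B u + P - (L u : ℝ) ≤ B u * P / (L u : ℝ) := by
            rw [le_div_iff₀ hLpos]
            nlinarith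
          linarith
      · push_neg at hexm
        have hINz : ∑ a, flF L F a u * (∑ v, x a v) / ((L a : ℝ) * y a) = 0 :=
          Finset.sum_eq_zero fun a _ => by
            rw [(not_mem_zero hexm).1, zero_mul, zero_div]
        have hBz : B u = 0 := Finset.sum_eq_zero fun a _ => (not_mem_zero hexm).2
        rw [hINz, hBz, zero_mul, zero_div]
        simpa using hPle
  -- distance condition
  have hdist' : ∀ u v, ¬ (G.Reachable u v ∧ G.dist u v ≤ δ + d) →
      chainX L F x y u v = 0 := by
    intro u v h
    have hdd : ¬ (G.dist u v ≤ δ + d) := fun hle => h ⟨hG.preconnected u v, hle⟩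
    have hxz : x u v = 0 := hdist u v (fun hc => hdd (le_trans hc.2 (by omega)))
    have hAz : A u v = 0 := by
      refine Finset.sum_eq_zero fun a _ => ?_
      by_cases hfl : flF L F a u = 0
      · rw [hfl, zero_mul, zero_div]
      · by_cases hxa : x a v = 0
        · rw [hxa, mul_zero, zero_div]
        · exfalso
          have harc := arc_of_flF_ne hfl
          have hau : G.dist a u ≤ d := hd a u harc
          have hav : G.dist a v ≤ δ := by
            by_contra hav
            exact hxa (hdist a v (fun hc => hav hc.2))
          have htri : G.dist u v ≤ G.dist u a + G.dist a v := hG.dist_triangle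
          have hcomm : G.dist u a = G.dist a u := SimpleGraph.dist_comm
          exact hdd (by omega)
    rw [hxdef, hxz, hAz, mul_zero, zero_div]
    ring
  -- radius facts
  have hbdd : ∀ (z : V → V → ℝ) (v : V),
      BddAbove {i : ℕ | ∃ w, G.dist v w = i ∧ 0 < z v w} := by
    intro z v
    refine Set.Finite.bddAbove (Set.Finite.subset (Set.finite_range (G.dist v)) ?_)
    rintro i ⟨w, hw, _⟩
    exact ⟨w, hw⟩
  have part2 : ∀ v : V, (∀ a, ¬ ArcOf F a v) →
      lpRadius G (chainX L F x y) v ≤ lpRadius G x v := by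
    intro v hv
    have hAz : ∀ w, A v w = 0 := by
      intro w
      refine Finset.sum_eq_zero fun a _ => ?_
      have : flF L F a v = 0 := by
        by_contra hfl
        exact hv a (arc_of_flF_ne hfl)
      rw [this, zero_mul, zero_div]
    rw [lpRadius]
    rcases Set.eq_empty_or_nonempty
      {i : ℕ | ∃ w, G.dist v w = i ∧ 0 < chainX L F x y v w} with he | hne
    · rw [he, csSup_empty]
      exact Nat.zero_le _
    · refine csSup_le hne ?_
      rintro i ⟨w, hw, hpos⟩
      have hxpos : 0 < x v w := by
        have h1 := hx'le v w
        rw [hAz w] at h1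
        linarith
      exact le_csSup (hbdd x v) ⟨w, hw, hxpos⟩
  have part3 : ∀ v : V, lpRadius G (chainX L F x y) v ≤
      max (lpRadius G x v)
        (sSup {n : ℕ | ∃ a, ArcOf F a v ∧ n = lpRadius G x a + G.dist a v}) := by
    intro v
    have hbddN : BddAbove {n : ℕ | ∃ a, ArcOf F a v ∧ n = lpRadius G x a + G.dist a v} := by
      refine Set.Finite.bddAbove (Set.Finite.subset
        (Set.finite_range (fun a => lpRadius G x a + G.dist a v)) ?_)
      rintro n ⟨a, _, hn⟩
      exact ⟨a, hn.symm⟩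
    rw [lpRadius]
    rcases Set.eq_empty_or_nonempty
      {i : ℕ | ∃ w, G.dist v w = i ∧ 0 < chainX L F x y v w} with he | hne
    · rw [he, csSup_empty]
      exact Nat.zero_le _
    · refine csSup_le hne ?_
      rintro i ⟨w, hw, hpos⟩
      by_cases hxp : 0 < x v w
      · exact le_max_of_le_left (le_csSup (hbdd x v) ⟨w, hw, hxp⟩)
      · have hxz : x v w = 0 := le_antisymm (not_lt.1 hxp) (hx0 v w)
        have hsubz : B v * x v w / ((L v : ℝ) * y v) = 0 := by
          rw [hxz, mul_zero, zero_div]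
        have hApos : 0 < A v w := by
          have h1 := hxdef v w
          rw [hsubz, hxz] at h1
          simp only [zero_add, sub_zero] at h1
          rw [← h1]
          exact hpos
        have hex : ∃ a, 0 < flF L F a v * x a w / ((L a : ℝ) * y a) := by
          by_contra hall
          push_neg at hall
          have : A v w ≤ 0 := Finset.sum_nonpos fun a _ => hall a
          linarith
        obtain ⟨a, hta⟩ := hex
        have hfl : flF L F a v ≠ 0 := by
          intro hz
          rw [hz, zero_mul, zero_div] at hta
          exact lt_irrefl _ hta
        have hxa : 0 < x a w := by
          by_contra hxa
          push_neg at hxa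
          have h2 : flF L F a v * x a w ≤ 0 :=
            mul_nonpos_of_nonneg_of_nonpos (flF_nonneg hF) hxa
          have h3 : flF L F a v * x a w / ((L a : ℝ) * y a) ≤ 0 :=
            div_nonpos_of_nonpos_of_nonneg h2
              (mul_nonneg (Nat.cast_nonneg _) (hy0 a))
          linarith
        have harc := arc_of_flF_ne hfl
        have hdw : G.dist a w ≤ lpRadius G x a := le_csSup (hbdd x a) ⟨w, rfl, hxa⟩
        have htri : G.dist v w ≤ G.dist v a + G.dist a w := hG.dist_triangle
        have hile : i ≤ lpRadius G x a + G.dist a v := by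
          have hcomm : G.dist v a = G.dist a v := SimpleGraph.dist_comm
          omega
        exact le_max_of_le_right (le_trans hile (le_csSup hbddN ⟨a, harc, rfl⟩))
  exact ⟨⟨hx'0, hy'0, hyk', hxy', hcap', hsum1', hy'1, hdist'⟩, part2, part3, part4⟩
end
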